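/- arXiv:1407.8391 — 5 statements merged into one kernel-verified Lean document; each statement's English description precedes it below -/
import Mathlib

section
/- For every real constant c > 0 there exists a constant c' > 0 such that for all sufficiently large integers n and every positive integer q ≤ c·n, in the (q:1) Waiter-Client game on E(K_n) Waiter has a strategy to ensure that at the end of the game Client's graph contains a path on at least c'·ln n vertices (in particular, a connected component with at least c'·ln n vertices). -/
open SimpleGraph

/-- In the Waiter-Client game with bias `q`, set of free elements `F` and set `C` of elements
claimed so far by Client, Client has a strategy to ensure that the final set of elements
claimed by him satisfies `P`.  In every round Waiter offers `q + 1` free elements, Client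
claims one of them and the remaining `q` go to Waiter; when fewer than `q + 1` free elements
remain, Waiter claims all of them and the game ends. -/
def ClientCanEnsure {α : Type*} [DecidableEq α] (q : ℕ) (P : Finset α → Prop)
    (F C : Finset α) : Prop :=
  if F.card < q + 1 then P C
  else ∀ O ⊆ F, O.card = q + 1 → ∃ x ∈ O, ClientCanEnsure q P (F \ O) (insert x C)
  termination_by F.card
  decreasing_by
    have h1 : O.Nonempty := by rw [← Finset.card_pos]; omega
    have h2 : (F \ O).card = F.card - O.card := by
      rw [Finset.card_sdiff, Finset.inter_eq_left.mpr ‹O ⊆ F›]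
    have h3 := Finset.card_le_card ‹O ⊆ F›
    have h4 := Finset.card_pos.mpr h1
    omega

/-- In the Waiter-Client game with bias `q`, set of free elements `F` and set `C` of elements
claimed so far by Client, Waiter has a strategy to ensure that the final set of elements
claimed by Client satisfies `P`.  In every round Waiter offers `q + 1` free elements, Client
claims one of them and the remaining `q` go to Waiter; when fewer than `q + 1` free elements
remain, Waiter claims all of them and the game ends.  (The hypothesis `O ⊆ F` guarding the
recursive call is redundant; it is only there to justify termination.) -/
def WaiterCanForce {α : Type*} [DecidableEq α] (q : ℕ) (P : Finset α → Prop)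
    (F C : Finset α) : Prop :=
  if F.card < q + 1 then P C
  else ∃ O ⊆ F, O.card = q + 1 ∧
    ∀ x ∈ O, O ⊆ F → WaiterCanForce q P (F \ O) (insert x C)
  termination_by F.card
  decreasing_by
    have h1 : O.Nonempty := ⟨x, ‹x ∈ O›⟩
    have h2 : (F \ O).card = F.card - O.card := by
      rw [Finset.card_sdiff, Finset.inter_eq_left.mpr ‹O ⊆ F›]
    have h3 := Finset.card_le_card ‹O ⊆ F›
    have h4 := Finset.card_pos.mpr h1
    omega

/-- Client's graph: the simple graph on `V` whose edges are the elements claimed by Client. -/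
def clientGraph {V : Type*} (C : Finset (Sym2 V)) : SimpleGraph V :=
  SimpleGraph.fromEdgeSet ↑C

/-- The board of the game played on `E(K_n)`: all non-loop edges of the complete graph `K_n`. -/
def knBoard (n : ℕ) : Finset (Sym2 (Fin n)) :=
  Finset.univ.filter fun e => ¬ e.IsDiag

def PChain {n : ℕ} (C : Finset (Sym2 (Fin n))) (l : List (Fin n)) : Prop :=
  l.Chain' (fun a b => s(a,b) ∈ C ∧ a ≠ b) ∧ l.Nodup

lemma PChain.mono {n : ℕ} {C C' : Finset (Sym2 (Fin n))} {l : List (Fin n)}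
    (hCC : C ⊆ C') (h : PChain C l) : PChain C' l :=
  ⟨h.1.imp (fun _ _ hab => ⟨hCC hab.1, hab.2⟩), h.2⟩

lemma mem_of_head? {α : Type*} {l : List α} {a : α} (h : l.head? = some a) : a ∈ l :=
  List.mem_of_mem_head? (by rw [h]; rfl)

lemma mem_of_getLast? {α : Type*} {l : List α} {a : α} (h : l.getLast? = some a) : a ∈ l :=
  List.mem_of_mem_getLast? (by rw [h]; rfl)

lemma ne_nil_of_head? {α : Type*} {l : List α} {a : α} (h : l.head? = some a) : l ≠ [] := by
  intro hl; subst hl; simp at h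

lemma PChain.merge {n : ℕ} {C : Finset (Sym2 (Fin n))} {l₁ l₂ : List (Fin n)} {a b : Fin n}
    (h₁ : PChain C l₁) (h₂ : PChain C l₂) (hd : ∀ x ∈ l₁, x ∉ l₂)
    (ha : l₁.head? = some a) (hb : l₂.head? = some b)
    (he : s(a,b) ∈ C) (hab : a ≠ b) :
    PChain C (l₁.reverse ++ l₂) ∧ (l₁.reverse ++ l₂).head? = l₁.getLast?
      ∧ (l₁.reverse ++ l₂).getLast? = l₂.getLast?
      ∧ (l₁.reverse ++ l₂).length = l₁.length + l₂.length := by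
  have hl₁ : l₁ ≠ [] := ne_nil_of_head? ha
  have hl₂ : l₂ ≠ [] := ne_nil_of_head? hb
  have hrev : l₁.reverse ≠ [] := by simpa using hl₁
  refine ⟨⟨?_, ?_⟩, ?_, ?_, by simp⟩
  · rw [List.Chain', List.isChain_append]
    refine ⟨?_, h₂.1, ?_⟩
    · rw [List.isChain_reverse]
      refine h₁.1.imp (fun x y hxy => ?_)
      refine ⟨?_, hxy.2.symm⟩
      rw [Sym2.eq_swap]
      exact hxy.1
    · intro x hx y hy
      rw [List.getLast?_reverse, ha] at hx
      rw [hb] at hy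
      simp only [Option.mem_def, Option.some.injEq] at hx hy
      subst hx; subst hy
      exact ⟨he, hab⟩
  · exact (List.nodup_reverse.mpr h₁.2).append h₂.2 (fun x hx => hd x (by simpa using hx))
  · rw [List.head?_append_of_ne_nil _ hrev, List.head?_reverse]
  · rw [List.getLast?_append]
    obtain ⟨z, hz⟩ := Option.isSome_iff_exists.mp (List.getLast?_isSome.mpr hl₂)
    rw [hz]; rfl

/-- The key lemma: starting from a family `S` of pairwise disjoint client paths (with
endpoint pairs recorded in `S` and vertex lists `W`), and a pool `G` of free offers
joining heads of distinct paths, Waiter can in `m` rounds force Client to produce `m`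
merged paths, of doubled length, whose endpoints lie in the clean sets `U`, `V`. -/
lemma rounds {n : ℕ} (q : ℕ) (P : Finset (Sym2 (Fin n)) → Prop) (v : ℕ) (U V : Finset (Fin n)) :
    ∀ (m : ℕ) (S T : Finset (Fin n × Fin n)) (G F C : Finset (Sym2 (Fin n)))
      (W : Fin n × Fin n → List (Fin n)),
    (∀ p ∈ S, PChain C (W p) ∧ (W p).head? = some p.1 ∧ (W p).getLast? = some p.2 ∧ v ≤ (W p).length) →
    (∀ p ∈ T, PChain C (W p) ∧ (W p).head? = some p.1 ∧ (W p).getLast? = some p.2 ∧ 2*v ≤ (W p).length) →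
    (∀ p ∈ S ∪ T, ∀ r ∈ S ∪ T, p ≠ r → ∀ x ∈ W p, x ∉ W r) →
    (∀ p ∈ S, p ∉ T) →
    (∀ p ∈ T, p.1 ∈ U ∧ p.2 ∈ V) →
    (∀ a ∈ U, ∀ b ∈ U, a ≠ b → s(a,b) ∈ F) →
    (∀ a ∈ V, ∀ b ∈ V, a ≠ b → s(a,b) ∈ F) →
    G ⊆ F →
    (∀ e ∈ G, ∃ p, p ∈ S ∧ ∃ p', p' ∈ S ∧ p ≠ p' ∧ e = s(p.1, p'.1) ∧ p.2 ∈ U ∧ p'.2 ∈ V) →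
    (∀ e ∈ G, ∀ a ∈ U, ∀ b ∈ U, e ≠ s(a,b)) →
    (∀ e ∈ G, ∀ a ∈ V, ∀ b ∈ V, e ≠ s(a,b)) →
    (∀ p ∈ S, ∀ p' ∈ S, p ≠ p' → (p.2, p'.2) ∉ S) →
    ((q+1) + m * ((q+1) + 2 * S.card) ≤ G.card) →
    (∀ (F' C' : Finset (Sym2 (Fin n))) (T' : Finset (Fin n × Fin n))
        (W' : Fin n × Fin n → List (Fin n)),
        F' ⊆ F → C ⊆ C' → T'.card = m + T.card →
        (∀ p ∈ T', PChain C' (W' p) ∧ (W' p).head? = some p.1 ∧ (W' p).getLast? = some p.2 ∧ 2*v ≤ (W' p).length) →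
        (∀ p ∈ T', ∀ r ∈ T', p ≠ r → ∀ x ∈ W' p, x ∉ W' r) →
        (∀ p ∈ T', p.1 ∈ U ∧ p.2 ∈ V) →
        (∀ a ∈ U, ∀ b ∈ U, a ≠ b → s(a,b) ∈ F') →
        (∀ a ∈ V, ∀ b ∈ V, a ≠ b → s(a,b) ∈ F') →
        WaiterCanForce q P F' C') →
    WaiterCanForce q P F C := by
  intro m
  induction m with
  | zero =>
    intro S T G F C W hSgood hTgood hdisj hST hTU hUF hVF hGF hG hGU hGV hkeyS hbudget hnext
    refine hnext F C T W subset_rfl subset_rfl (by omega) hTgood ?_ hTU hUF hVF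
    intro p hp r hr hpr
    exact hdisj p (Finset.mem_union_right _ hp) r (Finset.mem_union_right _ hr) hpr
  | succ m ih =>
    intro S T G F C W hSgood hTgood hdisj hST hTU hUF hVF hGF hG hGU hGV hkeyS hbudget hnext
    have hGcard : q + 1 ≤ G.card := by omega
    obtain ⟨O, hOG, hOcard⟩ := Finset.exists_subset_card_eq hGcard
    have hOF : O ⊆ F := hOG.trans hGF
    rw [WaiterCanForce]
    split
    · exfalso
      have := Finset.card_le_card hOF
      omega
    · refine ⟨O, hOF, hOcard, fun x hx _ => ?_⟩
      obtain ⟨p, hp, p', hp', hpp', hxeq, hpU, hp'V⟩ := hG x (hOG hx)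
      obtain ⟨hch₁, hh₁, ht₁, hv₁⟩ := hSgood p hp
      obtain ⟨hch₂, hh₂, ht₂, hv₂⟩ := hSgood p' hp'
      have hpS : p ∈ S ∪ T := Finset.mem_union_left _ hp
      have hp'S : p' ∈ S ∪ T := Finset.mem_union_left _ hp'
      -- heads distinct
      have hhead_ne : p.1 ≠ p'.1 := by
        intro hEq
        exact hdisj p hpS p' hp'S hpp' p.1 (mem_of_head? hh₁) (hEq ▸ mem_of_head? hh₂)
      -- tails distinct
      have htail_ne : p.2 ≠ p'.2 := by
        intro hEq
        exact hdisj p hpS p' hp'S hpp' p.2 (mem_of_getLast? ht₁) (hEq ▸ mem_of_getLast? ht₂)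
      set key : Fin n × Fin n := (p.2, p'.2) with hkey
      set newl : List (Fin n) := (W p).reverse ++ W p' with hnewl
      set C' : Finset (Sym2 (Fin n)) := insert x C with hC'
      set F' : Finset (Sym2 (Fin n)) := F \ O with hF'
      set S' : Finset (Fin n × Fin n) := (S.erase p).erase p' with hS'
      set T' : Finset (Fin n × Fin n) := insert key T with hT'
      set W' : Fin n × Fin n → List (Fin n) := Function.update W key newl with hW'
      set G' : Finset (Sym2 (Fin n)) :=
        (G \ O).filter (fun e => ¬ p.1 ∈ e ∧ ¬ p'.1 ∈ e) with hG'
      have hCC' : C ⊆ C' := Finset.subset_insert _ _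
      have hmerge := PChain.merge (hch₁.mono hCC') (hch₂.mono hCC')
        (fun y hy => hdisj p hpS p' hp'S hpp' y hy) hh₁ hh₂
        (by rw [hC', ← hxeq]; exact Finset.mem_insert_self _ _) hhead_ne
      obtain ⟨hchN, hhN, htN, hlenN⟩ := hmerge
      have hS'sub : S' ⊆ S := (Finset.erase_subset _ _).trans (Finset.erase_subset _ _)
      have hkeyNotS : key ∉ S := hkeyS p hp p' hp' hpp'
      have hkeyNotT : key ∉ T := by
        intro hkT
        have hkey_ne_p : key ≠ p := by
          intro hEq
          have : p.2 = p'.2 := by rw [← hEq]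
          exact htail_ne this
        have h1 : key.1 ∈ W key := mem_of_head? (hTgood key hkT).2.1
        have h2 : key.1 ∈ W p := mem_of_getLast? ht₁
        exact hdisj p hpS key (Finset.mem_union_right _ hkT) (fun h => hkey_ne_p h.symm) p.2 h2 h1
      have hWS : ∀ r ∈ S', W' r = W r := by
        intro r hr
        exact Function.update_of_ne (by rintro rfl; exact hkeyNotS (hS'sub hr)) _ _
      have hWT : ∀ r ∈ T, W' r = W r := by
        intro r hr
        exact Function.update_of_ne (by rintro rfl; exact hkeyNotT hr) _ _
      have hWkey : W' key = newl := Function.update_self _ _ _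
      -- memberships of newl
      have hmemN : ∀ y, y ∈ newl ↔ (y ∈ W p ∨ y ∈ W p') := by
        intro y; rw [hnewl, List.mem_append, List.mem_reverse]
      -- new goodness of S'
      have hSgood' : ∀ r ∈ S', PChain C' (W' r) ∧ (W' r).head? = some r.1 ∧
          (W' r).getLast? = some r.2 ∧ v ≤ (W' r).length := by
        intro r hr
        rw [hWS r hr]
        obtain ⟨h1, h2, h3, h4⟩ := hSgood r (hS'sub hr)
        exact ⟨h1.mono hCC', h2, h3, h4⟩
      -- new goodness of T'
      have hTgood' : ∀ r ∈ T', PChain C' (W' r) ∧ (W' r).head? = some r.1 ∧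
          (W' r).getLast? = some r.2 ∧ 2*v ≤ (W' r).length := by
        intro r hr
        rw [hT', Finset.mem_insert] at hr
        rcases hr with rfl | hr
        · rw [hWkey, hnewl]
          refine ⟨hchN, ?_, ?_, ?_⟩
          · rw [hhN, ht₁]
          · rw [htN, ht₂]
          · rw [hlenN]; omega
        · rw [hWT r hr]
          obtain ⟨h1, h2, h3, h4⟩ := hTgood r hr
          exact ⟨h1.mono hCC', h2, h3, h4⟩
      -- disjointness
      have hdisj' : ∀ a ∈ S' ∪ T', ∀ b ∈ S' ∪ T', a ≠ b → ∀ y ∈ W' a, y ∉ W' b := by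
        have hmem_old : ∀ a ∈ S' ∪ T', a ≠ key → a ∈ S ∪ T := by
          intro a ha hak
          rw [Finset.mem_union] at ha
          rcases ha with ha | ha
          · exact Finset.mem_union_left _ (hS'sub ha)
          · rw [hT', Finset.mem_insert] at ha
            rcases ha with rfl | ha
            · exact absurd rfl hak
            · exact Finset.mem_union_right _ ha
        have hW_old : ∀ a, a ≠ key → W' a = W a := fun a hak => Function.update_of_ne hak _ _
        have hne_pp' : ∀ a ∈ S' ∪ T', a ≠ key → a ≠ p ∧ a ≠ p' := by
          intro a ha hak
          rw [Finset.mem_union] at ha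
          constructor
          · rintro rfl
            rcases ha with ha | ha
            · exact (Finset.mem_erase.mp (Finset.mem_erase.mp ha).2).1 rfl
            · rw [hT', Finset.mem_insert] at ha
              rcases ha with h | h
              · exact hak h
              · exact hST a hp h
          · rintro rfl
            rcases ha with ha | ha
            · exact (Finset.mem_erase.mp ha).1 rfl
            · rw [hT', Finset.mem_insert] at ha
              rcases ha with h | h
              · exact hak h
              · exact hST a hp' h
        intro a ha b hb hab y hya hyb
        by_cases hak : a = key
        · subst hak
          by_cases hbk : b = key
          · exact hab (hbk ▸ rfl)
          · rw [hWkey, hmemN] at hya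
            rw [hW_old b hbk] at hyb
            obtain ⟨hbp, hbp'⟩ := hne_pp' b hb hbk
            have hbold := hmem_old b hb hbk
            rcases hya with h | h
            · exact hdisj p hpS b hbold (fun h' => hbp h'.symm) y h hyb
            · exact hdisj p' hp'S b hbold (fun h' => hbp' h'.symm) y h hyb
        · by_cases hbk : b = key
          · subst hbk
            rw [hWkey, hmemN] at hyb
            rw [hW_old a hak] at hya
            obtain ⟨hap, hap'⟩ := hne_pp' a ha hak
            have haold := hmem_old a ha hak
            rcases hyb with h | h
            · exact hdisj a haold p hpS hap y hya h
            · exact hdisj a haold p' hp'S hap' y hya h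
          · rw [hW_old a hak] at hya
            rw [hW_old b hbk] at hyb
            exact hdisj a (hmem_old a ha hak) b (hmem_old b hb hbk) hab y hya hyb
      -- S' avoids T'
      have hST' : ∀ r ∈ S', r ∉ T' := by
        intro r hr hrT
        rw [hT', Finset.mem_insert] at hrT
        rcases hrT with rfl | hrT
        · exact hkeyNotS (hS'sub hr)
        · exact hST r (hS'sub hr) hrT
      -- endpoints of T'
      have hTU' : ∀ r ∈ T', r.1 ∈ U ∧ r.2 ∈ V := by
        intro r hr
        rw [hT', Finset.mem_insert] at hr
        rcases hr with rfl | hr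
        · exact ⟨hpU, hp'V⟩
        · exact hTU r hr
      -- freeness of U,V pairs
      have hUF' : ∀ a ∈ U, ∀ b ∈ U, a ≠ b → s(a,b) ∈ F' := by
        intro a ha b hb hne
        rw [hF', Finset.mem_sdiff]
        exact ⟨hUF a ha b hb hne, fun hO => hGU _ (hOG hO) a ha b hb rfl⟩
      have hVF' : ∀ a ∈ V, ∀ b ∈ V, a ≠ b → s(a,b) ∈ F' := by
        intro a ha b hb hne
        rw [hF', Finset.mem_sdiff]
        exact ⟨hVF a ha b hb hne, fun hO => hGV _ (hOG hO) a ha b hb rfl⟩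
      -- G' facts
      have hG'sub : G' ⊆ G \ O := Finset.filter_subset _ _
      have hGF' : G' ⊆ F' := by
        intro e he
        have he' := hG'sub he
        rw [Finset.mem_sdiff] at he' ⊢
        exact ⟨hGF he'.1, he'.2⟩
      have hG'good : ∀ e ∈ G', ∃ r, r ∈ S' ∧ ∃ r', r' ∈ S' ∧ r ≠ r' ∧ e = s(r.1, r'.1) ∧ r.2 ∈ U ∧ r'.2 ∈ V := by
        intro e he
        rw [hG', Finset.mem_filter, Finset.mem_sdiff] at he
        obtain ⟨⟨heG, _⟩, hnp, hnp'⟩ := he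
        obtain ⟨r, hr, r', hr', hrr', heq, hrU, hr'V⟩ := hG e heG
        have hr_ne_p : r ≠ p := by rintro rfl; exact hnp (by rw [heq]; exact Sym2.mem_mk_left _ _)
        have hr_ne_p' : r ≠ p' := by rintro rfl; exact hnp' (by rw [heq]; exact Sym2.mem_mk_left _ _)
        have hr'_ne_p : r' ≠ p := by rintro rfl; exact hnp (by rw [heq]; exact Sym2.mem_mk_right _ _)
        have hr'_ne_p' : r' ≠ p' := by rintro rfl; exact hnp' (by rw [heq]; exact Sym2.mem_mk_right _ _)
        refine ⟨r, ?_, r', ?_, hrr', heq, hrU, hr'V⟩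
        · rw [hS', Finset.mem_erase, Finset.mem_erase]; exact ⟨hr_ne_p', hr_ne_p, hr⟩
        · rw [hS', Finset.mem_erase, Finset.mem_erase]; exact ⟨hr'_ne_p', hr'_ne_p, hr'⟩
      have hGU' : ∀ e ∈ G', ∀ a ∈ U, ∀ b ∈ U, e ≠ s(a,b) := by
        intro e he; exact hGU e (Finset.mem_sdiff.mp (hG'sub he)).1
      have hGV' : ∀ e ∈ G', ∀ a ∈ V, ∀ b ∈ V, e ≠ s(a,b) := by
        intro e he; exact hGV e (Finset.mem_sdiff.mp (hG'sub he)).1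
      have hkeyS' : ∀ r ∈ S', ∀ r' ∈ S', r ≠ r' → (r.2, r'.2) ∉ S' := by
        intro r hr r' hr' hrr' hmem
        exact hkeyS r (hS'sub hr) r' (hS'sub hr') hrr' (hS'sub hmem)
      -- budget
      have hbudget' : (q+1) + m * ((q+1) + 2 * S'.card) ≤ G'.card := by
        have hcover : G ⊆ ((G' ∪ O) ∪ S.image (fun r => s(p.1, r.1))) ∪ S.image (fun r => s(p'.1, r.1)) := by
          intro e he
          by_cases heO : e ∈ O
          · exact Finset.mem_union_left _ (Finset.mem_union_left _ (Finset.mem_union_right _ heO))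
          by_cases hep : p.1 ∈ e
          · obtain ⟨r, hr, r', hr', _, heq, _, _⟩ := hG e he
            subst heq
            rw [Sym2.mem_iff] at hep
            rcases hep with h | h
            · refine Finset.mem_union_left _ (Finset.mem_union_right _ ?_)
              exact Finset.mem_image.mpr ⟨r', hr', by rw [h]⟩
            · refine Finset.mem_union_left _ (Finset.mem_union_right _ ?_)
              refine Finset.mem_image.mpr ⟨r, hr, ?_⟩
              rw [Sym2.eq_swap]; rw [h]
          by_cases hep' : p'.1 ∈ e
          · obtain ⟨r, hr, r', hr', _, heq, _, _⟩ := hG e he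
            subst heq
            rw [Sym2.mem_iff] at hep'
            rcases hep' with h | h
            · refine Finset.mem_union_right _ ?_
              exact Finset.mem_image.mpr ⟨r', hr', by rw [h]⟩
            · refine Finset.mem_union_right _ ?_
              refine Finset.mem_image.mpr ⟨r, hr, ?_⟩
              rw [Sym2.eq_swap]; rw [h]
          · refine Finset.mem_union_left _ (Finset.mem_union_left _ (Finset.mem_union_left _ ?_))
            rw [hG', Finset.mem_filter, Finset.mem_sdiff]
            exact ⟨⟨he, heO⟩, hep, hep'⟩
        have hcard1 : G.card ≤ G'.card + (q+1) + S.card + S.card := by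
          calc G.card ≤ (((G' ∪ O) ∪ S.image (fun r => s(p.1, r.1))) ∪ S.image (fun r => s(p'.1, r.1))).card :=
                Finset.card_le_card hcover
            _ ≤ ((G' ∪ O) ∪ S.image (fun r => s(p.1, r.1))).card + (S.image (fun r => s(p'.1, r.1))).card :=
                Finset.card_union_le _ _
            _ ≤ (G' ∪ O).card + (S.image (fun r => s(p.1, r.1))).card + (S.image (fun r => s(p'.1, r.1))).card :=
                by have := Finset.card_union_le (G' ∪ O) (S.image (fun r => s(p.1, r.1))); omega
            _ ≤ G'.card + O.card + (S.image (fun r => s(p.1, r.1))).card + (S.image (fun r => s(p'.1, r.1))).card :=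
                by have := Finset.card_union_le G' O; omega
            _ ≤ G'.card + (q+1) + S.card + S.card := by
                have h1 := Finset.card_image_le (s := S) (f := fun r => s(p.1, r.1))
                have h2 := Finset.card_image_le (s := S) (f := fun r => s(p'.1, r.1))
                omega
        have hcard2 : S'.card ≤ S.card := Finset.card_le_card hS'sub
        have hmul : m * ((q+1) + 2 * S'.card) ≤ m * ((q+1) + 2 * S.card) := by
          apply Nat.mul_le_mul_left
          omega
        have hexp : (m+1) * ((q+1) + 2 * S.card) = m * ((q+1) + 2 * S.card) + ((q+1) + 2 * S.card) := by
          ring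
        omega
      -- recurse
      refine ih S' T' G' F' C' W' hSgood' hTgood' hdisj' hST' hTU' hUF' hVF' hGF' hG'good hGU' hGV' hkeyS' hbudget' ?_
      intro F'' C'' T'' W'' hF'' hC'' hcard'' hgood'' hdisj'' hTU'' hUF'' hVF''
      refine hnext F'' C'' T'' W'' (hF''.trans Finset.sdiff_subset) (hCC'.trans hC'') ?_ hgood'' hdisj'' hTU'' hUF'' hVF''
      rw [hcard'', hT', Finset.card_insert_of_notMem hkeyNotT]
      omega

lemma clientGraph_mono {V : Type*} {C C' : Finset (Sym2 V)} (h : C ⊆ C') :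
    clientGraph C ≤ clientGraph C' := SimpleGraph.fromEdgeSet_mono (by exact_mod_cast h)

lemma P_mono {n : ℕ} (c' : ℝ) {C C' : Finset (Sym2 (Fin n))} (h : C ⊆ C')
    (hp : ∃ (u v : Fin n) (p : (clientGraph C).Walk u v),
              p.IsPath ∧ c' * Real.log n ≤ (p.support.length : ℝ)) :
    ∃ (u v : Fin n) (p : (clientGraph C').Walk u v),
              p.IsPath ∧ c' * Real.log n ≤ (p.support.length : ℝ) := by
  obtain ⟨u, v, p, hp, hlen⟩ := hp
  have he : ∀ e ∈ p.edges, e ∈ (clientGraph C').edgeSet := fun e he =>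
    (SimpleGraph.edgeSet_subset_edgeSet.mpr (clientGraph_mono h)) (p.edges_subset_edgeSet he)
  exact ⟨u, v, p.transfer _ he, hp.transfer he, by rwa [Walk.support_transfer]⟩

lemma exists_walk_aux {n : ℕ} (C : Finset (Sym2 (Fin n))) :
    ∀ (l : List (Fin n)) (a : Fin n), (a :: l).Chain' (fun a b => s(a,b) ∈ C ∧ a ≠ b) →
    ∃ (v : Fin n) (w : (clientGraph C).Walk a v), w.support = a :: l := by
  intro l
  induction l with
  | nil => exact fun a _ => ⟨a, Walk.nil, by simp⟩
  | cons b t ih =>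
    intro a hch
    rw [List.Chain', List.isChain_cons_cons] at hch
    obtain ⟨v, w, hw⟩ := ih b hch.2
    have hadj : (clientGraph C).Adj a b := by
      rw [clientGraph, SimpleGraph.fromEdgeSet_adj]
      exact ⟨by exact_mod_cast hch.1.1, hch.1.2⟩
    exact ⟨v, Walk.cons hadj w, by rw [Walk.support_cons, hw]⟩

lemma exists_walk {n : ℕ} {C : Finset (Sym2 (Fin n))} {l : List (Fin n)}
    (h : PChain C l) (hne : l ≠ []) :
    ∃ (u v : Fin n) (w : (clientGraph C).Walk u v), w.IsPath ∧ w.support.length = l.length := by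
  obtain ⟨a, t, rfl⟩ := List.exists_cons_of_ne_nil hne
  obtain ⟨v, w, hw⟩ := exists_walk_aux C t a h.1
  exact ⟨a, v, w, by rw [Walk.isPath_def, hw]; exact h.2, by rw [hw]⟩

lemma head_ne_tail {α : Type*} {l : List α} {a b : α} (hnd : l.Nodup)
    (hh : l.head? = some a) (ht : l.getLast? = some b) (hlen : 2 ≤ l.length) : a ≠ b := by
  cases l with
  | nil => simp at hh
  | cons x l' =>
    cases l' with
    | nil => simp at hlen
    | cons y t =>
      simp only [List.head?_cons, Option.some.injEq] at hh
      rw [List.getLast?_cons_cons] at ht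
      have hb : b ∈ y :: t := mem_of_getLast? ht
      have hx : x ∉ y :: t := (List.nodup_cons.mp hnd).1
      intro h
      rw [← hh] at h
      exact hx (h ▸ hb)

structure BSt {n : ℕ} (S : Finset (Fin n × Fin n)) (W : Fin n × Fin n → List (Fin n))
    (F C : Finset (Sym2 (Fin n))) (v : ℕ) : Prop where
  good : ∀ p ∈ S, PChain C (W p) ∧ (W p).head? = some p.1 ∧ (W p).getLast? = some p.2
            ∧ v ≤ (W p).length
  disj : ∀ p ∈ S, ∀ r ∈ S, p ≠ r → ∀ x ∈ W p, x ∉ W r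
  headfree : ∀ p ∈ S, ∀ r ∈ S, p ≠ r → s(p.1, r.1) ∈ F
  tailfree : ∀ p ∈ S, ∀ r ∈ S, p ≠ r → s(p.2, r.2) ∈ F
  headtail : ∀ p ∈ S, ∀ r ∈ S, p.1 ≠ r.2

/-- One stage: `m` merges, doubling the guaranteed path length. -/
lemma stage {n : ℕ} (q : ℕ) (P : Finset (Sym2 (Fin n)) → Prop)
    {S : Finset (Fin n × Fin n)} {W : Fin n × Fin n → List (Fin n)}
    {F C : Finset (Sym2 (Fin n))} {v : ℕ} (hv : 2 ≤ v)
    (hB : BSt S W F C v) (m : ℕ)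
    (hbudget : 2*((q+1) + m * ((q+1) + 2 * S.card)) + S.card ≤ S.card * S.card)
    (hnext : ∀ (S' : Finset (Fin n × Fin n)) (W' : Fin n × Fin n → List (Fin n))
      (F' C' : Finset (Sym2 (Fin n))), F' ⊆ F → C ⊆ C' → S'.card = m →
      BSt S' W' F' C' (2*v) → WaiterCanForce q P F' C') :
    WaiterCanForce q P F C := by
  classical
  set R : Finset (Fin n) := S.image Prod.snd with hR
  set G₀ : Finset (Sym2 (Fin n)) := S.offDiag.image (fun pr => s(pr.1.1, pr.2.1)) with hG₀
  -- basic facts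
  have hhead_mem : ∀ p ∈ S, p.1 ∈ W p := fun p hp => mem_of_head? (hB.good p hp).2.1
  have htail_mem : ∀ p ∈ S, p.2 ∈ W p := fun p hp => mem_of_getLast? (hB.good p hp).2.2.1
  have hhead_inj : ∀ p ∈ S, ∀ r ∈ S, p.1 = r.1 → p = r := by
    intro p hp r hr h
    by_contra hne
    exact hB.disj p hp r hr hne p.1 (hhead_mem p hp) (h ▸ hhead_mem r hr)
  have htail_inj : ∀ p ∈ S, ∀ r ∈ S, p.2 = r.2 → p = r := by
    intro p hp r hr h
    by_contra hne
    exact hB.disj p hp r hr hne p.2 (htail_mem p hp) (h ▸ htail_mem r hr)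
  have hheadnotR : ∀ p ∈ S, p.1 ∉ R := by
    intro p hp hmem
    rw [hR, Finset.mem_image] at hmem
    obtain ⟨r, hr, hr2⟩ := hmem
    exact hB.headtail p hp r hr hr2.symm
  have hRF : ∀ a ∈ R, ∀ b ∈ R, a ≠ b → s(a,b) ∈ F := by
    intro a ha b hb hab
    rw [hR, Finset.mem_image] at ha hb
    obtain ⟨p, hp, rfl⟩ := ha
    obtain ⟨r, hr, rfl⟩ := hb
    exact hB.tailfree p hp r hr (fun h => hab (h ▸ rfl))
  have hG₀good : ∀ e ∈ G₀, ∃ p, p ∈ S ∧ ∃ p', p' ∈ S ∧ p ≠ p' ∧ e = s(p.1, p'.1)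
      ∧ p.2 ∈ R ∧ p'.2 ∈ R := by
    intro e he
    rw [hG₀, Finset.mem_image] at he
    obtain ⟨⟨p, r⟩, hpr, rfl⟩ := he
    rw [Finset.mem_offDiag] at hpr
    exact ⟨p, hpr.1, r, hpr.2.1, hpr.2.2, rfl,
      Finset.mem_image_of_mem _ hpr.1, Finset.mem_image_of_mem _ hpr.2.1⟩
  have hG₀F : G₀ ⊆ F := by
    intro e he
    obtain ⟨p, hp, r, hr, hne, rfl, _, _⟩ := hG₀good e he
    exact hB.headfree p hp r hr hne
  have hG₀R : ∀ e ∈ G₀, ∀ a ∈ R, ∀ b ∈ R, e ≠ s(a,b) := by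
    intro e he a ha b hb heq
    obtain ⟨p, hp, r, hr, hne, rfl, _, _⟩ := hG₀good e he
    rw [Sym2.eq_iff] at heq
    rcases heq with ⟨h1, _⟩ | ⟨h1, _⟩
    · exact hheadnotR p hp (h1 ▸ ha)
    · exact hheadnotR p hp (h1 ▸ hb)
  have hkeyS : ∀ p ∈ S, ∀ p' ∈ S, p ≠ p' → (p.2, p'.2) ∉ S := by
    intro p hp p' hp' hne hmem
    exact hB.headtail (p.2, p'.2) hmem p hp rfl
  -- budget: G₀.card is at least half of offDiag card
  have hG₀card : S.card * S.card - S.card ≤ 2 * G₀.card := by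
    have hfib : ∀ b ∈ S.offDiag.image (fun pr => s(pr.1.1, pr.2.1)),
        (S.offDiag.filter (fun a => s(a.1.1, a.2.1) = b)).card ≤ 2 := by
      intro b hb
      rw [Finset.mem_image] at hb
      obtain ⟨⟨p, r⟩, hpr, rfl⟩ := hb
      rw [Finset.mem_offDiag] at hpr
      have hsub : S.offDiag.filter (fun a => s(a.1.1, a.2.1) = s(p.1, r.1)) ⊆ {(p, r), (r, p)} := by
        intro ⟨t, u⟩ htu
        rw [Finset.mem_filter, Finset.mem_offDiag] at htu
        obtain ⟨⟨htS, huS, _⟩, heq⟩ := htu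
        rw [Sym2.eq_iff] at heq
        simp only [Finset.mem_insert, Finset.mem_singleton, Prod.mk.injEq]
        rcases heq with ⟨h1, h2⟩ | ⟨h1, h2⟩
        · exact Or.inl ⟨hhead_inj t htS p hpr.1 h1, hhead_inj u huS r hpr.2.1 h2⟩
        · exact Or.inr ⟨hhead_inj t htS r hpr.2.1 h1, hhead_inj u huS p hpr.1 h2⟩
      calc (S.offDiag.filter (fun a => s(a.1.1, a.2.1) = s(p.1, r.1))).card
          ≤ ({(p, r), (r, p)} : Finset ((Fin n × Fin n) × (Fin n × Fin n))).card :=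
            Finset.card_le_card hsub
        _ ≤ 2 := Finset.card_insert_le _ _ |>.trans (by simp)
    have := Finset.card_le_mul_card_image (f := fun pr => s(pr.1.1, pr.2.1)) S.offDiag 2 hfib
    rw [Finset.offDiag_card] at this
    rw [hG₀]
    omega
  have hbudget' : (q+1) + m * ((q+1) + 2 * S.card) ≤ G₀.card := by omega
  refine rounds q P v R R m S ∅ G₀ F C W hB.good (by simp) ?_ (by simp) (by simp)
    hRF hRF hG₀F hG₀good hG₀R hG₀R hkeyS hbudget' ?_
  · intro p hp r hr
    rw [Finset.union_empty] at hp hr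
    exact hB.disj p hp r hr
  · intro F' C' T' W' hF' hC' hcard hgood hdisj hTU hUF hVF
    refine hnext T' W' F' C' hF' hC' (by simpa using hcard) ?_
    have hhead_mem' : ∀ p ∈ T', p.1 ∈ W' p := fun p hp => mem_of_head? (hgood p hp).2.1
    have htail_mem' : ∀ p ∈ T', p.2 ∈ W' p := fun p hp => mem_of_getLast? (hgood p hp).2.2.1
    refine ⟨hgood, hdisj, ?_, ?_, ?_⟩
    · intro p hp r hr hne
      refine hUF p.1 (hTU p hp).1 r.1 (hTU r hr).1 ?_
      intro h
      exact hdisj p hp r hr hne p.1 (hhead_mem' p hp) (h ▸ hhead_mem' r hr)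
    · intro p hp r hr hne
      refine hVF p.2 (hTU p hp).2 r.2 (hTU r hr).2 ?_
      intro h
      exact hdisj p hp r hr hne p.2 (htail_mem' p hp) (h ▸ htail_mem' r hr)
    · intro p hp r hr
      by_cases hpr : p = r
      · subst hpr
        obtain ⟨hch, hh, ht, hlen⟩ := hgood p hp
        exact head_ne_tail hch.2 hh ht (by omega)
      · intro h
        exact hdisj p hp r hr hpr p.1 (hhead_mem' p hp) (h ▸ htail_mem' r hr)

theorem waiterForce_of_holds (q : ℕ) {α : Type*} [DecidableEq α] (P : Finset α → Prop)
    (hP : ∀ C₁ C₂ : Finset α, C₁ ⊆ C₂ → P C₁ → P C₂) :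
    ∀ (F C : Finset α), P C → WaiterCanForce q P F C := by
  have key : ∀ (k : ℕ) (F C : Finset α), F.card = k → P C → WaiterCanForce q P F C := by
    intro k
    induction k using Nat.strong_induction_on with
    | _ k ih =>
      intro F C hk h
      rw [WaiterCanForce]
      split
      · exact h
      · rename_i hge
        push_neg at hge
        obtain ⟨O, hO, hcard⟩ := Finset.exists_subset_card_eq hge
        refine ⟨O, hO, hcard, fun x hx hO' => ?_⟩
        have h1 : O.Nonempty := ⟨x, hx⟩
        have h2 := Finset.card_sdiff_of_subset hO
        have h3 := Finset.card_le_card hO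
        have h4 := Finset.card_pos.mpr h1
        exact ih (F \ O).card (by omega) _ _ rfl (hP _ _ (Finset.subset_insert _ _) h)
  exact fun F C => key F.card F C rfl

/-- Phase A driver: while the number of paths is large compared to `q`,
each stage halves-ish the number of paths (divide by 64) and doubles their length. -/
lemma driverA {n : ℕ} (q : ℕ) (hq : 1 ≤ q) (P : Finset (Sym2 (Fin n)) → Prop)
    (hP : ∀ C₁ C₂ : Finset (Sym2 (Fin n)), C₁ ⊆ C₂ → P C₁ → P C₂) :
    ∀ (t : ℕ) (S : Finset (Fin n × Fin n)) (W : Fin n × Fin n → List (Fin n))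
      (F C : Finset (Sym2 (Fin n))) (v : ℕ), 2 ≤ v → BSt S W F C v →
    64^(t+1) * (q+1) ≤ S.card →
    (∀ C' : Finset (Sym2 (Fin n)), (∃ l, PChain C' l ∧ l ≠ [] ∧ v * 2^t ≤ l.length) → P C') →
    WaiterCanForce q P F C := by
  intro t
  induction t with
  | zero =>
    intro S W F C v hv hB hk hwin
    have hpos : 0 < S.card := by
      have : 0 < 64^1 * (q+1) := by positivity
      omega
    obtain ⟨p, hp⟩ := Finset.card_pos.mp hpos
    obtain ⟨hch, hh, _, hlen⟩ := hB.good p hp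
    refine waiterForce_of_holds q P hP F C (hwin C ⟨W p, hch, ne_nil_of_head? hh, ?_⟩)
    simpa using hlen
  | succ t ih =>
    intro S W F C v hv hB hk hwin
    set k := S.card with hkdef
    set m := k / 64 with hmdef
    have h64 : 64 * (q+1) ≤ k := by
      have h1 : (64:ℕ)^1 ≤ 64^(t+2) := Nat.pow_le_pow_right (by norm_num) (by omega)
      have h2 : 64^1 * (q+1) ≤ 64^(t+2) * (q+1) := Nat.mul_le_mul_right _ h1
      simpa using h2.trans hk
    have hkk : 128 ≤ k := by omega
    have hm64 : 64 * m ≤ k := by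
      rw [hmdef]; rw [Nat.mul_comm]; exact Nat.div_mul_le_self _ _
    refine stage q P hv hB m ?_ ?_
    · -- budget
      rw [← hkdef]
      have hA1 : (64*m) * (64*(q+1)) ≤ k * k := Nat.mul_le_mul hm64 h64
      have hA2 : (64*m) * k ≤ k * k := Nat.mul_le_mul_right _ hm64
      have hA3 : 64 * (q+1) ≤ k := h64
      have hA4 : 64 * k ≤ k * k := Nat.mul_le_mul_right _ (by omega)
      have e1 : (64*m) * (64*(q+1)) = 4096 * (m * (q+1)) := by ring
      have e2 : (64*m) * k = 64 * (m * k) := by ring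
      have hexp : m*((q+1)+2*k) = m*(q+1) + 2*(m*k) := by ring
      rw [e1] at hA1
      rw [e2] at hA2
      omega
    · intro S' W' F' C' hF' hC' hcard hB'
      refine ih S' W' F' C' (2*v) (by omega) hB' ?_ ?_
      · rw [hcard, hmdef]
        rw [Nat.le_div_iff_mul_le (by norm_num)]
        calc 64^(t+1) * (q+1) * 64 = 64^(t+2) * (q+1) := by ring
          _ ≤ k := hk
      · intro C'' ⟨l, h1, h2, h3⟩
        refine hwin C'' ⟨l, h1, h2, ?_⟩
        calc v * 2^(t+1) = 2*v * 2^t := by ring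
          _ ≤ l.length := h3

/-- Phase B driver: squaring regime. -/
lemma driverB {n : ℕ} (q Λ : ℕ) (hΛ : 64 ≤ Λ) (hq : 1 ≤ q) (P : Finset (Sym2 (Fin n)) → Prop)
    (hP : ∀ C₁ C₂ : Finset (Sym2 (Fin n)), C₁ ⊆ C₂ → P C₁ → P C₂) :
    ∀ (t : ℕ) (S : Finset (Fin n × Fin n)) (W : Fin n × Fin n → List (Fin n))
      (F C : Finset (Sym2 (Fin n))) (v : ℕ), 2 ≤ v → BSt S W F C v →
    (Λ*(q+1))^(2^t) ≤ S.card^(2^t) * (q+1) →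
    (1 ≤ t → S.card ≤ q+1) →
    (∀ C' : Finset (Sym2 (Fin n)), (∃ l, PChain C' l ∧ l ≠ [] ∧ v * 2^t ≤ l.length) → P C') →
    WaiterCanForce q P F C := by
  intro t
  induction t with
  | zero =>
    intro S W F C v hv hB hk _ hwin
    simp only [pow_zero, pow_one] at hk
    have hΛk : Λ ≤ S.card := Nat.le_of_mul_le_mul_right hk (by omega)
    have hpos : 0 < S.card := by omega
    obtain ⟨p, hp⟩ := Finset.card_pos.mp hpos
    obtain ⟨hch, hh, _, hlen⟩ := hB.good p hp
    refine waiterForce_of_holds q P hP F C (hwin C ⟨W p, hch, ne_nil_of_head? hh, ?_⟩)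
    simpa using hlen
  | succ t ih =>
    intro S W F C v hv hB hk hk' hwin
    set k := S.card with hkdef
    have hkq : k ≤ q + 1 := hk' (by omega)
    have hE : (1:ℕ) ≤ 2^t := Nat.one_le_two_pow
    have hEne : (2:ℕ)^t ≠ 0 := by positivity
    have hQpos : 0 < q + 1 := by omega
    -- rewrite hk in "atom" form
    have hsplit : ∀ x : ℕ, x^(2^(t+1)) = x^(2^t) * x^(2^t) := by
      intro x
      rw [← pow_add]
      congr 1
      rw [pow_succ]
      omega
    have hk2 : Λ*Λ*(q+1) ≤ k*k := by
      by_contra hcon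
      push_neg at hcon
      have hdd : (k*k)^(2^t) < (Λ*Λ*(q+1))^(2^t) := Nat.pow_lt_pow_left hcon hEne
      have h1 : (Λ*(q+1))^(2^t) * ((Λ*(q+1))^(2^t)) ≤ (k*k)^(2^t) * (q+1) := by
        calc (Λ*(q+1))^(2^t) * ((Λ*(q+1))^(2^t)) = (Λ*(q+1))^(2^(t+1)) := (hsplit _).symm
          _ ≤ k^(2^(t+1)) * (q+1) := hk
          _ = (k*k)^(2^t) * (q+1) := by rw [mul_pow k k, ← hsplit]
      have h2 : (k*k)^(2^t) * (q+1) < (Λ*Λ*(q+1))^(2^t) * (q+1) :=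
        (Nat.mul_lt_mul_right hQpos).mpr hdd
      have h3 : (Λ*Λ*(q+1))^(2^t) = (Λ^(2^t) * Λ^(2^t) * (q+1)^(2^t)) := by
        rw [mul_pow, mul_pow]
      have h4 : (Λ*(q+1))^(2^t) = Λ^(2^t) * (q+1)^(2^t) := mul_pow _ _ _
      set A := Λ^(2^t)
      set B := (q+1)^(2^t)
      rw [h4] at h1
      rw [h3] at h2
      have h5 : A * B * (A * B) < A * A * B * (q+1) := lt_of_le_of_lt h1 h2
      have h6 : (A * A * B) * B < (A * A * B) * (q+1) := by
        calc (A * A * B) * B = A * B * (A * B) := by ring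
          _ < A * A * B * (q+1) := h5
      have h7 : B < q + 1 := Nat.lt_of_mul_lt_mul_left h6
      have h8 : q + 1 ≤ B := Nat.le_self_pow hEne _
      omega
    have hΛ2 : (4096:ℕ) ≤ Λ*Λ := by calc (4096:ℕ) = 64*64 := by norm_num
      _ ≤ Λ*Λ := Nat.mul_le_mul hΛ hΛ
    have hΛk : Λ ≤ k := by
      by_contra h
      push_neg at h
      have h1 : k*k < Λ*Λ := Nat.mul_lt_mul_of_lt_of_lt h h
      have h2 : Λ*Λ ≤ Λ*Λ*(q+1) := Nat.le_mul_of_pos_right _ hQpos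
      omega
    have hk64 : 64 ≤ k := by omega
    set m := k*k / (Λ*(q+1)) + 1 with hmdef
    have hdm := Nat.div_add_mod (k*k) (Λ*(q+1))
    have hmod : (k*k) % (Λ*(q+1)) < Λ*(q+1) := Nat.mod_lt _ (by positivity)
    have hm1 : k*k ≤ Λ*(q+1)*m := by
      rw [hmdef, Nat.mul_add, Nat.mul_one]
      omega
    have hup : Λ*(q+1)*m ≤ k*k + Λ*(q+1) := by
      rw [hmdef, Nat.mul_add, Nat.mul_one]
      have : Λ*(q+1) * (k*k / (Λ*(q+1))) ≤ k*k := Nat.mul_div_le _ _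
      omega
    have hm2 : m ≤ q + 1 := by
      have hd1 : k*k / (Λ*(q+1)) ≤ (q+1)*(q+1) / (64*(q+1)) := by
        apply Nat.div_le_div (Nat.mul_le_mul hkq hkq) (Nat.mul_le_mul_right _ hΛ) (by positivity)
      have hd2 : (q+1)*(q+1) / (64*(q+1)) = (q+1) / 64 := by
        rw [Nat.mul_comm 64 (q+1), Nat.mul_div_mul_left _ _ hQpos]
      rw [hmdef]
      rw [hd2] at hd1
      have : (q+1)/64 ≤ (q+1)/2 := Nat.div_le_div_left (by norm_num) (by norm_num)
      omega
    refine stage q P hv hB m ?_ ?_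
    · -- budget
      rw [← hkdef]
      have hΛq : Λ*(q+1) ≤ k*k := by
        calc Λ*(q+1) ≤ (Λ*Λ)*(q+1) := Nat.mul_le_mul_right _ (Nat.le_mul_of_pos_right _ (by omega))
          _ ≤ k*k := hk2
      have hA1 : 64*((q+1)*m) ≤ 2*(k*k) := by
        have h0 : 64*(q+1)*m ≤ Λ*(q+1)*m :=
          Nat.mul_le_mul_right _ (Nat.mul_le_mul_right _ hΛ)
        calc 64*((q+1)*m) = 64*(q+1)*m := by ring
          _ ≤ Λ*(q+1)*m := h0
          _ ≤ k*k + Λ*(q+1) := hup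
          _ ≤ 2*(k*k) := by omega
      have hA2 : 4096*(q+1) ≤ k*k := by
        calc 4096*(q+1) ≤ (Λ*Λ)*(q+1) := Nat.mul_le_mul_right _ hΛ2
          _ ≤ k*k := hk2
      have hA3 : m*k ≤ (q+1)*m := by
        calc m*k ≤ m*(q+1) := Nat.mul_le_mul_left _ hkq
          _ = (q+1)*m := Nat.mul_comm _ _
      have hA4 : 64*k ≤ k*k := Nat.mul_le_mul_right _ hk64
      have hexp : m*((q+1)+2*k) = (q+1)*m + 2*(m*k) := by ring
      omega
    · intro S' W' F' C' hF' hC' hcard hB'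
      refine ih S' W' F' C' (2*v) (by omega) hB' ?_ ?_ ?_
      · -- invariant
        rw [hcard]
        have h1 : (k*k)^(2^t) ≤ (Λ*(q+1)*m)^(2^t) := Nat.pow_le_pow_left hm1 _
        have h2 : (Λ*(q+1))^(2^t) * ((Λ*(q+1))^(2^t)) ≤ (Λ*(q+1))^(2^t) * (m^(2^t) * (q+1)) := by
          calc (Λ*(q+1))^(2^t) * ((Λ*(q+1))^(2^t)) = (Λ*(q+1))^(2^(t+1)) := (hsplit _).symm
            _ ≤ k^(2^(t+1)) * (q+1) := hk
            _ = (k*k)^(2^t) * (q+1) := by rw [hsplit, mul_pow]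
            _ ≤ (Λ*(q+1)*m)^(2^t) * (q+1) := Nat.mul_le_mul_right _ h1
            _ = (Λ*(q+1))^(2^t) * (m^(2^t) * (q+1)) := by rw [mul_pow]; ring
        exact Nat.le_of_mul_le_mul_left h2 (by positivity)
      · intro _
        rw [hcard]
        exact hm2
      · intro C'' ⟨l, h1, h2, h3⟩
        refine hwin C'' ⟨l, h1, h2, ?_⟩
        calc v * 2^(t+1) = 2*v * 2^t := by ring
          _ ≤ l.length := h3

lemma mem_knBoard {n : ℕ} {a b : Fin n} (h : a ≠ b) : s(a,b) ∈ knBoard n := by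
  rw [knBoard, Finset.mem_filter]
  exact ⟨Finset.mem_univ _, by rwa [Sym2.mk_isDiag_iff]⟩

/-- The bootstrap: from the empty position, force `m` disjoint client edges with
one endpoint in `X`, the other in `Y`, keeping all `X`-pairs and `Y`-pairs free. -/
lemma bootstrap {n : ℕ} (q : ℕ) (P : Finset (Sym2 (Fin n)) → Prop)
    (X Y : Finset (Fin n)) (hXY : Disjoint X Y) (m : ℕ)
    (hbudget : (q+1) + m * ((q+1) + 2 * (X.card + Y.card)) ≤ X.card * Y.card)
    (hnext : ∀ (S' : Finset (Fin n × Fin n)) (W' : Fin n × Fin n → List (Fin n))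
      (F' C' : Finset (Sym2 (Fin n))), F' ⊆ knBoard n → S'.card = m →
      BSt S' W' F' C' 2 → WaiterCanForce q P F' C') :
    WaiterCanForce q P (knBoard n) ∅ := by
  classical
  set S₀ : Finset (Fin n × Fin n) :=
    X.image (fun x => (x,x)) ∪ Y.image (fun y => (y,y)) with hS₀
  set W₀ : Fin n × Fin n → List (Fin n) := fun p => [p.1] with hW₀
  set G₀ : Finset (Sym2 (Fin n)) := (X ×ˢ Y).image (fun pr => s(pr.1, pr.2)) with hG₀
  have hdiag : ∀ p ∈ S₀, p.1 = p.2 := by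
    intro p hp
    rw [hS₀, Finset.mem_union, Finset.mem_image, Finset.mem_image] at hp
    rcases hp with ⟨x, _, rfl⟩ | ⟨y, _, rfl⟩ <;> rfl
  have hS₀XY : ∀ p ∈ S₀, p.1 ∈ X ∪ Y := by
    intro p hp
    rw [hS₀, Finset.mem_union, Finset.mem_image, Finset.mem_image] at hp
    rcases hp with ⟨x, hx, rfl⟩ | ⟨y, hy, rfl⟩
    · exact Finset.mem_union_left _ hx
    · exact Finset.mem_union_right _ hy
  have hS₀good : ∀ p ∈ S₀, PChain (∅ : Finset (Sym2 (Fin n))) (W₀ p)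
      ∧ (W₀ p).head? = some p.1 ∧ (W₀ p).getLast? = some p.2 ∧ 1 ≤ (W₀ p).length := by
    intro p hp
    exact ⟨⟨by simp [hW₀, List.Chain'], by simp [hW₀]⟩, by simp [hW₀], by simp [hW₀, hdiag p hp], by simp [hW₀]⟩
  have hdisj : ∀ p ∈ S₀ ∪ (∅ : Finset (Fin n × Fin n)), ∀ r ∈ S₀ ∪ ∅, p ≠ r →
      ∀ x ∈ W₀ p, x ∉ W₀ r := by
    intro p hp r hr hpr x hx hx'
    rw [Finset.union_empty] at hp hr
    rw [hW₀] at hx hx'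
    simp only [List.mem_singleton] at hx hx'
    subst hx
    apply hpr
    have h1 := hdiag p hp
    have h2 := hdiag r hr
    have h3 : p.1 = r.1 := hx'
    exact Prod.ext h3 (by rw [← h1, ← h2, h3])
  have hG₀good : ∀ e ∈ G₀, ∃ p, p ∈ S₀ ∧ ∃ p', p' ∈ S₀ ∧ p ≠ p' ∧ e = s(p.1, p'.1)
      ∧ p.2 ∈ X ∧ p'.2 ∈ Y := by
    intro e he
    rw [hG₀, Finset.mem_image] at he
    obtain ⟨⟨x, y⟩, hxy, rfl⟩ := he
    rw [Finset.mem_product] at hxy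
    have hxney : x ≠ y := fun h => Finset.disjoint_left.mp hXY hxy.1 (h ▸ hxy.2)
    refine ⟨(x,x), ?_, (y,y), ?_, ?_, rfl, hxy.1, hxy.2⟩
    · exact Finset.mem_union_left _ (Finset.mem_image_of_mem _ hxy.1)
    · exact Finset.mem_union_right _ (Finset.mem_image_of_mem _ hxy.2)
    · intro h
      exact hxney (congrArg Prod.fst h)
  have hG₀F : G₀ ⊆ knBoard n := by
    intro e he
    obtain ⟨p, hp, p', hp', hne, rfl, h2, h2'⟩ := hG₀good e he
    refine mem_knBoard ?_
    intro h
    rw [hdiag p hp, hdiag p' hp'] at h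
    exact Finset.disjoint_left.mp hXY (h ▸ h2) h2'
  have hXF : ∀ a ∈ X, ∀ b ∈ X, a ≠ b → s(a,b) ∈ knBoard n := fun a _ b _ h => mem_knBoard h
  have hYF : ∀ a ∈ Y, ∀ b ∈ Y, a ≠ b → s(a,b) ∈ knBoard n := fun a _ b _ h => mem_knBoard h
  have hGX : ∀ e ∈ G₀, ∀ a ∈ X, ∀ b ∈ X, e ≠ s(a,b) := by
    intro e he a ha b hb heq
    rw [hG₀, Finset.mem_image] at he
    obtain ⟨⟨x, y⟩, hxy, rfl⟩ := he
    rw [Finset.mem_product] at hxy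
    rw [Sym2.eq_iff] at heq
    have hyX : y ∈ X := by
      rcases heq with ⟨h1, h2⟩ | ⟨h1, h2⟩
      · have h2' : y = b := h2
        rw [h2']; exact hb
      · have h2' : y = a := h2
        rw [h2']; exact ha
    exact Finset.disjoint_left.mp hXY hyX hxy.2
  have hGY : ∀ e ∈ G₀, ∀ a ∈ Y, ∀ b ∈ Y, e ≠ s(a,b) := by
    intro e he a ha b hb heq
    rw [hG₀, Finset.mem_image] at he
    obtain ⟨⟨x, y⟩, hxy, rfl⟩ := he
    rw [Finset.mem_product] at hxy
    rw [Sym2.eq_iff] at heq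
    have hxY : x ∈ Y := by
      rcases heq with ⟨h1, h2⟩ | ⟨h1, h2⟩
      · have h1' : x = a := h1
        rw [h1']; exact ha
      · have h1' : x = b := h1
        rw [h1']; exact hb
    exact Finset.disjoint_left.mp hXY hxy.1 hxY
  have hkeyS : ∀ p ∈ S₀, ∀ p' ∈ S₀, p ≠ p' → (p.2, p'.2) ∉ S₀ := by
    intro p hp p' hp' hne hmem
    have h1 : p.2 = p'.2 := hdiag _ hmem
    apply hne
    have h2 := hdiag p hp
    have h3 := hdiag p' hp'
    exact Prod.ext (by rw [h2, h1, ← h3]) h1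
  have hG₀card : X.card * Y.card ≤ G₀.card := by
    rw [hG₀]
    rw [Finset.card_image_of_injOn]
    · rw [Finset.card_product]
    · intro ⟨x, y⟩ hxy ⟨x', y'⟩ hxy' heq
      rw [Finset.mem_coe, Finset.mem_product] at hxy hxy'
      rw [Sym2.eq_iff] at heq
      rcases heq with ⟨h1, h2⟩ | ⟨h1, h2⟩
      · exact Prod.ext h1 h2
      · exfalso
        have h1' : x = y' := h1
        have hxinY : x ∈ Y := by rw [h1']; exact hxy'.2
        exact Finset.disjoint_left.mp hXY hxy.1 hxinY
  have hS₀card : S₀.card ≤ X.card + Y.card := by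
    rw [hS₀]
    refine (Finset.card_union_le _ _).trans ?_
    have h1 := Finset.card_image_le (s := X) (f := fun x => (x,x))
    have h2 := Finset.card_image_le (s := Y) (f := fun y => (y,y))
    omega
  have hbudget' : (q+1) + m * ((q+1) + 2 * S₀.card) ≤ G₀.card := by
    have : m * ((q+1) + 2 * S₀.card) ≤ m * ((q+1) + 2 * (X.card + Y.card)) := by
      apply Nat.mul_le_mul_left
      omega
    omega
  refine rounds q P 1 X Y m S₀ ∅ G₀ (knBoard n) ∅ W₀ hS₀good (by simp) hdisj (by simp)
    (by simp) hXF hYF hG₀F hG₀good hGX hGY hkeyS hbudget' ?_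
  intro F' C' T' W' hF' hC' hcard hgood hdisjT hTU hUF hVF
  refine hnext T' W' F' C' hF' (by simpa using hcard) ?_
  have hhead_mem' : ∀ p ∈ T', p.1 ∈ W' p := fun p hp => mem_of_head? (hgood p hp).2.1
  have htail_mem' : ∀ p ∈ T', p.2 ∈ W' p := fun p hp => mem_of_getLast? (hgood p hp).2.2.1
  refine ⟨fun p hp => (by simpa using hgood p hp), hdisjT, ?_, ?_, ?_⟩
  · intro p hp r hr hne
    refine hUF p.1 (hTU p hp).1 r.1 (hTU r hr).1 ?_
    intro h
    exact hdisjT p hp r hr hne p.1 (hhead_mem' p hp) (h ▸ hhead_mem' r hr)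
  · intro p hp r hr hne
    refine hVF p.2 (hTU p hp).2 r.2 (hTU r hr).2 ?_
    intro h
    exact hdisjT p hp r hr hne p.2 (htail_mem' p hp) (h ▸ htail_mem' r hr)
  · intro p hp r hr
    intro h
    exact Finset.disjoint_left.mp hXY (h ▸ (hTU p hp).1) (hTU r hr).2

lemma log_poly_bound {x : ℝ} (hx : (10:ℝ)^48 ≤ x) : (Real.log x + 1)^12 * 2^24 ≤ x := by
  have hx0 : (0:ℝ) < x := lt_of_lt_of_le (by norm_num) hx
  set r : ℝ := x ^ ((1:ℝ)/24) with hr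
  have hr0 : 0 < r := Real.rpow_pos_of_pos hx0 _
  have hr100 : (100:ℝ) ≤ r := by
    have h1 : ((10:ℝ)^48) ^ ((1:ℝ)/24) ≤ x ^ ((1:ℝ)/24) :=
      Real.rpow_le_rpow (by positivity) hx (by norm_num)
    have h2 : ((10:ℝ)^48) ^ ((1:ℝ)/24) = 100 := by
      rw [← Real.rpow_natCast (10:ℝ) 48, ← Real.rpow_mul (by norm_num)]
      norm_num
    rw [h2] at h1
    exact h1
  have hlog : Real.log x = 24 * Real.log r := by
    rw [hr, Real.log_rpow hx0]; ring
  have hlogr : Real.log r ≤ r - 1 := Real.log_le_sub_one_of_pos hr0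
  have hrx : r ^ (24:ℕ) = x := by
    rw [hr, ← Real.rpow_natCast (x ^ ((1:ℝ)/24)) 24, ← Real.rpow_mul hx0.le]
    norm_num
  have h1 : Real.log x + 1 ≤ 24 * r := by nlinarith
  have hnn : 0 ≤ Real.log x + 1 := by
    have : 0 ≤ Real.log x := Real.log_nonneg (by linarith)
    linarith
  have h2 : (Real.log x + 1)^12 ≤ (24*r)^12 := pow_le_pow_left₀ hnn h1 12
  have h3 : (100:ℝ)^12 ≤ r^12 := pow_le_pow_left₀ (by norm_num) hr100 12
  calc (Real.log x + 1)^12 * 2^24 ≤ (24*r)^12 * 2^24 := by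
        have : (0:ℝ) < 2^24 := by positivity
        nlinarith
    _ = (24^12 * 2^24) * r^12 := by ring
    _ ≤ 100^12 * r^12 := by nlinarith [pow_nonneg hr0.le 12]
    _ ≤ (r^12) * r^12 := by nlinarith [pow_nonneg hr0.le 12]
    _ = r ^ (24:ℕ) := by ring
    _ = x := hrx

lemma nat_pow_le_of_log {a k : ℕ} {x : ℝ} (ha : 1 ≤ a) (hx : 0 < x)
    (h : (k:ℝ) * Real.log a ≤ Real.log x) : ((a:ℝ))^k ≤ x := by
  have ha0 : (0:ℝ) < a := by exact_mod_cast ha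
  calc ((a:ℝ))^k = (Real.exp (Real.log a))^k := by rw [Real.exp_log ha0]
    _ = Real.exp (k * Real.log a) := by rw [← Real.exp_nat_mul]
    _ ≤ Real.exp (Real.log x) := Real.exp_le_exp.mpr h
    _ = x := Real.exp_log hx

lemma BSt.subset {n : ℕ} {S' S : Finset (Fin n × Fin n)} {W : Fin n × Fin n → List (Fin n)}
    {F C : Finset (Sym2 (Fin n))} {v : ℕ} (h : S' ⊆ S) (hB : BSt S W F C v) : BSt S' W F C v :=
  ⟨fun p hp => hB.good p (h hp), fun p hp r hr => hB.disj p (h hp) r (h hr),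
   fun p hp r hr => hB.headfree p (h hp) r (h hr), fun p hp r hr => hB.tailfree p (h hp) r (h hr),
   fun p hp r hr => hB.headtail p (h hp) r (h hr)⟩

set_option maxRecDepth 100000 in
/-- For every constant `c > 0` there is a constant `c' > 0` such that for all
sufficiently large `n` and every positive integer `q ≤ c * n`, in the `(q : 1)` Waiter-Client
game on `E(K_n)` Waiter has a strategy ensuring that Client's final graph contains a path on
at least `c' * ln n` vertices. -/
theorem statement1 :
    ∀ c : ℝ, 0 < c → ∃ c' : ℝ, 0 < c' ∧ ∃ N : ℕ, ∀ n : ℕ, N ≤ n →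
      ∀ q : ℕ, 0 < q → (q : ℝ) ≤ c * n →
        WaiterCanForce q
          (fun C : Finset (Sym2 (Fin n)) =>
            ∃ (u v : Fin n) (p : (clientGraph C).Walk u v),
              p.IsPath ∧ c' * Real.log n ≤ (p.support.length : ℝ))
          (knBoard n) ∅ := by
  intro c hc
  set cN : ℕ := ⌈c⌉₊ + 1 with hcN
  set Λ : ℕ := 1000000 * (cN*cN) + 256 with hΛdef
  have hΛ2 : 2 ≤ Λ := by rw [hΛdef]; omega
  have hΛ64 : 256 ≤ Λ := by rw [hΛdef]; omega
  have hΛR : (1:ℝ) < Λ := by exact_mod_cast (by omega : 1 < Λ)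
  have hlogΛ : 0 < Real.log Λ := Real.log_pos hΛR
  set c'' : ℝ := 1 / (4 * Real.log Λ) with hc''
  set c' : ℝ := min 1 c'' with hc'
  have hc'pos : 0 < c' := lt_min one_pos (by positivity)
  refine ⟨c', hc'pos, 10^48 + Λ*Λ*Λ*Λ + 65536 * cN + 2^30, ?_⟩
  intro n hn q hq hqc
  clear_value Λ cN
  -- basic size facts
  have hn48 : 10^48 ≤ n := by omega
  have hnΛ : Λ*Λ*Λ*Λ ≤ n := by omega
  have hncN : 65536 * cN ≤ n := by omega
  have hn30 : 2^30 ≤ n := by omega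
  have hn1 : 1 ≤ n := by omega
  have hnR : (1:ℝ) ≤ n := by exact_mod_cast hn1
  have hlogn0 : 0 ≤ Real.log n := Real.log_nonneg hnR
  -- q+1 ≤ cN * n
  have hq1 : q + 1 ≤ cN * n := by
    have h1 : (q:ℝ) ≤ (⌈c⌉₊ : ℝ) * n :=
      hqc.trans (mul_le_mul_of_nonneg_right (Nat.le_ceil c) (by positivity))
    have h2 : q ≤ ⌈c⌉₊ * n := by exact_mod_cast h1
    calc q + 1 ≤ ⌈c⌉₊ * n + n := by omega
      _ = cN * n := by rw [hcN]; ring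
  set h : ℕ := n / 4 with hhdef
  have hh4 : 4 * h ≤ n := by omega
  have hh4' : n ≤ 4 * h + 3 := by omega
  have hhbig : 16384 * cN ≤ h := by
    have : 4 * (16384 * cN) ≤ n := by omega
    omega
  have hh1 : 2^28 ≤ h := by omega
  have hq7h : q + 1 ≤ 7 * cN * h := by
    have h1 : cN * n ≤ cN * (4*h+3) := Nat.mul_le_mul_left _ hh4'
    have h2 : cN * (4*h+3) ≤ 7 * cN * h := by
      have h3 : cN ≤ cN * h := Nat.le_mul_of_pos_right _ (by omega)
      have e1 : cN * (4*h+3) = 4*(cN*h) + 3*cN := by ring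
      have e2 : 7 * cN * h = 7*(cN*h) := by ring
      omega
    omega
  -- X and Y
  have hXpf : ∀ m ∈ Finset.range h, m < n := fun m hm => by
    have := Finset.mem_range.mp hm; omega
  have hYpf : ∀ m ∈ Finset.Ico h (2*h), m < n := fun m hm => by
    have := Finset.mem_Ico.mp hm; omega
  set X : Finset (Fin n) := (Finset.range h).attachFin hXpf with hXdef
  set Y : Finset (Fin n) := (Finset.Ico h (2*h)).attachFin hYpf with hYdef
  have hXcard : X.card = h := by rw [hXdef, Finset.card_attachFin, Finset.card_range]
  have hYcard : Y.card = h := by rw [hYdef, Finset.card_attachFin, Nat.card_Ico]; omega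
  have hXY : Disjoint X Y := by
    rw [Finset.disjoint_left]
    intro a haX haY
    rw [hXdef, Finset.mem_attachFin, Finset.mem_range] at haX
    rw [hYdef, Finset.mem_attachFin, Finset.mem_Ico] at haY
    omega
  set k₁ : ℕ := min (h/8) (h*h/(64*(q+1))) with hk₁
  have hqpos : 0 < 64*(q+1) := by positivity
  -- bootstrap budget
  have hb1 : 8 * k₁ ≤ h := by
    have h1 : k₁ ≤ h/8 := min_le_left _ _
    have := Nat.div_mul_le_self h 8
    omega
  have hb2 : 64*(q+1)*k₁ ≤ h*h := by
    have h1 : k₁ ≤ h*h/(64*(q+1)) := min_le_right _ _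
    calc 64*(q+1)*k₁ ≤ 64*(q+1)*(h*h/(64*(q+1))) := Nat.mul_le_mul_left _ h1
      _ ≤ h*h := Nat.mul_div_le _ _
  have hqh : 256*(q+1) ≤ h*h := by
    calc 256*(q+1) ≤ 256*(7*cN*h) := Nat.mul_le_mul_left _ hq7h
      _ = (1792*cN)*h := by ring
      _ ≤ h*h := Nat.mul_le_mul_right _ (by omega)
  have hbudget : (q+1) + k₁ * ((q+1) + 2*(X.card + Y.card)) ≤ X.card * Y.card := by
    rw [hXcard, hYcard]
    have hexp : k₁ * ((q+1) + 2*(h+h)) = k₁*(q+1) + 4*(k₁*h) := by ring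
    have hB2 : 64*(k₁*(q+1)) ≤ h*h := by
      calc 64*(k₁*(q+1)) = 64*(q+1)*k₁ := by ring
        _ ≤ h*h := hb2
    have hB1 : 8*(k₁*h) ≤ h*h := by
      calc 8*(k₁*h) = (8*k₁)*h := by ring
        _ ≤ h*h := Nat.mul_le_mul_right _ hb1
    omega
  -- the monotone path property
  set P : Finset (Sym2 (Fin n)) → Prop := fun C =>
    ∃ (u v : Fin n) (p : (clientGraph C).Walk u v),
      p.IsPath ∧ c' * Real.log n ≤ (p.support.length : ℝ) with hPdef
  have hP : ∀ C₁ C₂ : Finset (Sym2 (Fin n)), C₁ ⊆ C₂ → P C₁ → P C₂ := by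
    intro C₁ C₂ hsub hp
    exact P_mono c' hsub hp
  refine bootstrap q P X Y hXY k₁ hbudget ?_
  intro S W F C hF hcard hB
  -- a common tool: from a long list, conclude P
  have hfinish : ∀ (C' : Finset (Sym2 (Fin n))) (l : List (Fin n)), PChain C' l → l ≠ [] →
      c' * Real.log n ≤ (l.length : ℝ) → P C' := by
    intro C' l hch hne hlen
    obtain ⟨u, v, w, hw, hsup⟩ := exists_walk hch hne
    exact ⟨u, v, w, hw, by rw [hsup]; exact hlen⟩
  by_cases hcase : (q+1)*(q+1) ≤ n
  · -- Phase A only  (q is small)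
    set m' : ℕ := ⌈Real.log n⌉₊ with hm'def
    have hm'1 : 1 ≤ m' := by
      have hlog1 : (1:ℝ) ≤ Real.log n := by
        rw [Real.le_log_iff_exp_le (by positivity)]
        calc Real.exp 1 ≤ 2.7182818286 := Real.exp_one_lt_d9.le
          _ ≤ (n:ℝ) := by
            have : (3:ℝ) ≤ n := by exact_mod_cast (by omega : 3 ≤ n)
            linarith
      calc 1 = ⌈(1:ℝ)⌉₊ := by simp
        _ ≤ m' := Nat.ceil_le_ceil hlog1
    have hmaster : m'^12 * 2^24 ≤ n := by
      have h1 : (Real.log n + 1)^12 * 2^24 ≤ (n:ℝ) := log_poly_bound (by exact_mod_cast hn48)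
      have h2 : (m':ℝ) ≤ Real.log n + 1 := (Nat.ceil_lt_add_one hlogn0).le
      have h3 : ((m':ℝ))^12 * 2^24 ≤ (n:ℝ) := by
        have h4 := pow_le_pow_left₀ (by positivity : (0:ℝ) ≤ (m':ℝ)) h2 12
        have h5 := mul_le_mul_of_nonneg_right h4 (by positivity : (0:ℝ) ≤ 2^24)
        linarith
      exact_mod_cast h3
    -- m'^6 * (64*(q+1)) ≤ k₁
    have hm612 : m'^6 ≤ m'^12 := Nat.pow_le_pow_right hm'1 (by norm_num)
    have hm6k : m'^6 * (64*(q+1)) ≤ k₁ := by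
      apply le_min
      · -- ≤ h/8 : suffices 2*X ≤ n with X = m'^6*2048*(q+1)
        have hX2 : (2*(m'^6 * 2048 * (q+1)))^2 ≤ n^2 := by
          have e1 : (2*(m'^6 * 2048 * (q+1)))^2 = (m'^12 * 2^24) * ((q+1)*(q+1)) := by ring
          rw [e1]
          calc (m'^12 * 2^24) * ((q+1)*(q+1)) ≤ n * ((q+1)*(q+1)) :=
                Nat.mul_le_mul_right _ hmaster
            _ ≤ n * n := Nat.mul_le_mul_left _ hcase
            _ = n^2 := (sq n).symm
        have hX : 2*(m'^6 * 2048 * (q+1)) ≤ n := by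
          by_contra hcon
          push_neg at hcon
          exact absurd hX2 (not_le.mpr (Nat.pow_lt_pow_left hcon (by norm_num)))
        rw [Nat.le_div_iff_mul_le (by norm_num)]
        rw [hhdef, Nat.le_div_iff_mul_le (by norm_num)]
        calc m'^6 * (64*(q+1)) * 8 * 4 = m'^6 * 2048 * (q+1) := by ring
          _ ≤ n := by omega
      · -- ≤ h*h/(64*(q+1))
        rw [Nat.le_div_iff_mul_le hqpos]
        have e1 : m'^6 * (64*(q+1)) * (64*(q+1)) = m'^6 * 2^12 * ((q+1)*(q+1)) := by ring
        rw [e1]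
        have h1 : 2^12 * (m'^6 * 2^12 * ((q+1)*(q+1))) ≤ 2^12 * (h*h) := by
          calc 2^12 * (m'^6 * 2^12 * ((q+1)*(q+1))) = (m'^6 * 2^24) * ((q+1)*(q+1)) := by ring
            _ ≤ (m'^12 * 2^24) * ((q+1)*(q+1)) :=
                Nat.mul_le_mul_right _ (Nat.mul_le_mul_right _ hm612)
            _ ≤ n * ((q+1)*(q+1)) := Nat.mul_le_mul_right _ hmaster
            _ ≤ n * n := Nat.mul_le_mul_left _ hcase
            _ ≤ (4*h+3) * (4*h+3) := Nat.mul_le_mul hh4' hh4'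
            _ ≤ (7*h)*(7*h) := Nat.mul_le_mul (by omega) (by omega)
            _ = 49*(h*h) := by ring
            _ ≤ 2^12 * (h*h) := Nat.mul_le_mul_right _ (by norm_num)
        exact Nat.le_of_mul_le_mul_left h1 (by norm_num)
    set D : ℕ := k₁ / (64*(q+1)) with hDdef
    have hm6D : m'^6 ≤ D := (Nat.le_div_iff_mul_le hqpos).mpr hm6k
    have hD0 : D ≠ 0 := by
      have : 1 ≤ m'^6 := Nat.one_le_pow _ _ (by omega)
      omega
    set T : ℕ := Nat.log 64 D with hTdef
    refine driverA q hq P hP T S W F C 2 le_rfl hB ?_ ?_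
    · -- entry bound
      rw [hcard]
      have h1 : 64^T ≤ D := Nat.pow_log_le_self 64 hD0
      calc 64^(T+1) * (q+1) = (64*(q+1)) * 64^T := by ring
        _ ≤ (64*(q+1)) * D := Nat.mul_le_mul_left _ h1
        _ ≤ k₁ := by
            rw [hDdef]
            exact Nat.mul_div_le _ _
    · -- win
      rintro C' ⟨l, hch, hne, hlen⟩
      refine hfinish C' l hch hne ?_
      have hu6 : (2*2^T)^6 = 64^(T+1) := by
        have e1 : (64:ℕ) = 2^6 := by norm_num
        rw [e1, ← pow_mul, mul_pow, ← pow_mul]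
        rw [← pow_add]
        congr 1
        ring
      have hD : D < 64^(T+1) := Nat.lt_pow_succ_log_self (by norm_num) D
      have hlt : m'^6 < (2*2^T)^6 := by
        rw [hu6]; omega
      have hmu : m' < 2*2^T := by
        by_contra hcc
        push_neg at hcc
        exact absurd (Nat.pow_le_pow_left hcc 6) (not_le.mpr hlt)
      have h2 : (m':ℝ) ≤ (l.length:ℝ) := by
        have : m' ≤ l.length := by
          have := hlen
          omega
        exact_mod_cast this
      have h1 : Real.log n ≤ (m':ℝ) := Nat.le_ceil _
      have h3 : c' * Real.log n ≤ 1 * Real.log n :=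
        mul_le_mul_of_nonneg_right (min_le_left _ _) hlogn0
      linarith
  · -- Phase B only  (q is large : n < (q+1)^2)
    push_neg at hcase
    have hΛq : Λ*Λ < q+1 := by
      by_contra hcc
      push_neg at hcc
      have h1 : (q+1)*(q+1) ≤ (Λ*Λ)*(Λ*Λ) := Nat.mul_le_mul hcc hcc
      have h2 : (Λ*Λ)*(Λ*Λ) = Λ*Λ*Λ*Λ := by ring
      omega
    have hΛq1 : Λ ≤ q+1 := by
      have h3 : Λ ≤ Λ*Λ := Nat.le_mul_of_pos_right _ (by omega)
      omega
    set y : ℕ := Nat.log Λ (q+1) with hydef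
    have hy1 : 1 ≤ y := by
      rw [hydef, Nat.le_log_iff_pow_le (by omega) (by omega)]
      simpa using hΛq1
    set T : ℕ := Nat.log 2 y with hTdef
    have h2T : 2^T ≤ y := Nat.pow_log_le_self 2 (by omega)
    have hT2 : y < 2^(T+1) := Nat.lt_pow_succ_log_self (by norm_num) y
    have hΛT : Λ^(2^T) ≤ q+1 := by
      calc Λ^(2^T) ≤ Λ^y := Nat.pow_le_pow_right (by omega) h2T
        _ ≤ q+1 := Nat.pow_log_le_self Λ (by omega)
    set kB : ℕ := min k₁ (q+1) with hkBdef
    have hkBle : kB ≤ S.card := by rw [hcard]; exact min_le_left _ _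
    obtain ⟨S', hsub, hS'card⟩ := Finset.exists_subset_card_eq hkBle
    have hB' : BSt S' W F C 2 := hB.subset hsub
    -- ratio : 64*(q+1) ≤ Λ * kB
    have hratio : 64*(q+1) ≤ Λ * kB := by
      by_cases hmin : q+1 ≤ k₁
      · have : kB = q+1 := by rw [hkBdef]; exact min_eq_right hmin
        rw [this]
        calc 64*(q+1) ≤ Λ*(q+1) := Nat.mul_le_mul_right _ (by omega)
          _ = Λ*(q+1) := rfl
      · push_neg at hmin
        have hkBk : kB = k₁ := by rw [hkBdef]; exact min_eq_left (by omega)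
        rw [hkBk]
        by_cases hm2 : h/8 ≤ h*h/(64*(q+1))
        · -- k₁ = h/8
          have hk₁eq : k₁ = h/8 := by rw [hk₁]; exact min_eq_left hm2
          set d : ℕ := h/8 with hddef
          have hd1 : 2^24 ≤ d := by
            have : 8 * 2^24 ≤ h := by omega
            rw [hddef, Nat.le_div_iff_mul_le (by norm_num)]
            omega
          have hdh : h ≤ 8*d+7 := by omega
          have hd64 : (h/8)*(64*(q+1)) ≤ h*h := by
            have := (Nat.le_div_iff_mul_le hqpos).mp hm2
            exact this
          have hh15 : h*h ≤ 225*(d*d) := by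
            calc h*h ≤ (8*d+7)*(8*d+7) := Nat.mul_le_mul hdh hdh
              _ ≤ (15*d)*(15*d) := Nat.mul_le_mul (by omega) (by omega)
              _ = 225*(d*d) := by ring
          have hco : d*(64*(q+1)) ≤ d*(225*d) := by
            calc d*(64*(q+1)) = (h/8)*(64*(q+1)) := by rw [hddef]
              _ ≤ h*h := hd64
              _ ≤ 225*(d*d) := hh15
              _ = d*(225*d) := by ring
          have hfin : 64*(q+1) ≤ 225*d := Nat.le_of_mul_le_mul_left hco (by omega)
          calc 64*(q+1) ≤ 225*d := hfin
            _ ≤ Λ*d := Nat.mul_le_mul_right _ (by omega)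
            _ = Λ*k₁ := by rw [hk₁eq]
        · -- k₁ = h*h/(64*(q+1))
          push_neg at hm2
          have hk₁eq : k₁ = h*h/(64*(q+1)) := by rw [hk₁]; exact min_eq_right (by omega)
          have hk₁1 : 1 ≤ k₁ := by
            rw [hk₁eq, Nat.le_div_iff_mul_le hqpos]
            omega
          have hfl2 : h*h ≤ 128*(q+1)*k₁ := by
            have hdm := Nat.div_add_mod (h*h) (64*(q+1))
            have hmod : (h*h) % (64*(q+1)) < 64*(q+1) := Nat.mod_lt _ hqpos
            have e0 : 64*(q+1)*(h*h/(64*(q+1))) = 64*(q+1)*k₁ := by rw [hk₁eq]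
            have e1 : 128*(q+1)*k₁ = 64*(q+1)*k₁ + 64*(q+1)*k₁ := by ring
            have e2 : 64*(q+1) ≤ 64*(q+1)*k₁ := Nat.le_mul_of_pos_right _ (by omega)
            omega
          -- 8192*(q+1)^2 ≤ Λ*h*h
          have hqsq : (q+1)*(q+1) ≤ 49*(cN*cN)*(h*h) := by
            calc (q+1)*(q+1) ≤ (7*cN*h)*(7*cN*h) := Nat.mul_le_mul hq7h hq7h
              _ = 49*(cN*cN)*(h*h) := by ring
          have hbig : 8192*((q+1)*(q+1)) ≤ Λ*(h*h) := by
            calc 8192*((q+1)*(q+1)) ≤ 8192*(49*(cN*cN)*(h*h)) := Nat.mul_le_mul_left _ hqsq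
              _ = (401408*(cN*cN))*(h*h) := by ring
              _ ≤ Λ*(h*h) := Nat.mul_le_mul_right _ (by rw [hΛdef]; omega)
          have hco : (128*(q+1))*(64*(q+1)) ≤ (128*(q+1))*(Λ*k₁) := by
            calc (128*(q+1))*(64*(q+1)) = 8192*((q+1)*(q+1)) := by ring
              _ ≤ Λ*(h*h) := hbig
              _ ≤ Λ*(128*(q+1)*k₁) := Nat.mul_le_mul_left _ hfl2
              _ = (128*(q+1))*(Λ*k₁) := by ring
          exact Nat.le_of_mul_le_mul_left hco (by positivity)
    refine driverB q 64 le_rfl hq P hP T S' W F C 2 le_rfl hB' ?_ ?_ ?_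
    · -- invariant
      rw [hS'card]
      calc (64*(q+1))^(2^T) ≤ (Λ*kB)^(2^T) := Nat.pow_le_pow_left hratio _
        _ = Λ^(2^T) * kB^(2^T) := mul_pow _ _ _
        _ ≤ (q+1) * kB^(2^T) := Nat.mul_le_mul_right _ hΛT
        _ = kB^(2^T) * (q+1) := Nat.mul_comm _ _
    · intro _
      rw [hS'card]
      exact min_le_right _ _
    · -- win
      rintro C' ⟨l, hch, hne, hlen⟩
      refine hfinish C' l hch hne ?_
      set mq : ℕ := ⌈c'' * Real.log n⌉₊ with hmqdef
      have hc''pos : 0 ≤ c'' * Real.log n := by positivity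
      -- Λ^(2*mq) ≤ n
      have hexp : ((Λ:ℝ))^(2*mq) ≤ (n:ℝ) := by
        apply nat_pow_le_of_log (by omega) (by positivity)
        have hmqle : (mq:ℝ) ≤ c'' * Real.log n + 1 := (Nat.ceil_lt_add_one hc''pos).le
        have hΛ4 : 4 * Real.log Λ ≤ Real.log n := by
          have h1 : Real.log ((Λ*Λ*Λ*Λ : ℕ)) ≤ Real.log n := by
            apply Real.log_le_log (by positivity)
            exact_mod_cast hnΛ
          rw [show ((Λ*Λ*Λ*Λ : ℕ):ℝ) = ((Λ:ℝ))^4 by push_cast; ring] at h1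
          have h2 : Real.log ((Λ:ℝ)^4) = 4 * Real.log Λ := by
            rw [Real.log_pow]; push_cast; ring
          linarith [h2 ▸ h1]
        have e1 : c'' * Real.log Λ = 1/4 := by
          have hne : Real.log Λ ≠ 0 := ne_of_gt hlogΛ
          rw [hc'']
          field_simp
        calc ((2*mq : ℕ):ℝ) * Real.log Λ = 2 * (mq:ℝ) * Real.log Λ := by push_cast; ring
          _ ≤ 2 * (c'' * Real.log n + 1) * Real.log Λ := by
              have hmm := mul_le_mul_of_nonneg_right hmqle hlogΛ.le
              linarith
          _ = 2 * Real.log n * (c'' * Real.log Λ) + 2 * Real.log Λ := by ring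
          _ = Real.log n / 2 + 2 * Real.log Λ := by rw [e1]; ring
          _ ≤ Real.log n := by linarith
      have hexpN : Λ^(2*mq) ≤ n := by exact_mod_cast hexp
      have hΛmq : Λ^mq ≤ q+1 := by
        have h1 : (Λ^mq)*(Λ^mq) ≤ n := by
          calc (Λ^mq)*(Λ^mq) = Λ^(2*mq) := by rw [← pow_add]; congr 1; ring
            _ ≤ n := hexpN
        have h2 : (Λ^mq)*(Λ^mq) < (q+1)*(q+1) := lt_of_le_of_lt h1 hcase
        by_contra hcc
        push_neg at hcc
        have : (q+1)*(q+1) ≤ (Λ^mq)*(Λ^mq) := Nat.mul_le_mul hcc.le hcc.le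
        omega
      have hmqy : mq ≤ y := by
        rw [hydef, Nat.le_log_iff_pow_le (by omega) (by omega)]
        exact hΛmq
      -- conclude
      have hyl : y + 1 ≤ l.length := by
        have h1 : y + 1 ≤ 2 * 2^T := by
          have := hT2
          rw [pow_succ] at this
          omega
        omega
      have h2 : (mq:ℝ) ≤ (l.length:ℝ) := by
        have : mq ≤ l.length := by omega
        exact_mod_cast this
      have h1 : c'' * Real.log n ≤ (mq:ℝ) := Nat.le_ceil _
      have h3 : c' * Real.log n ≤ c'' * Real.log n :=
        mul_le_mul_of_nonneg_right (min_le_right _ _) hlogn0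
      linarith
end

section
/- For all positive integers ℓ and k with k > 2ℓ, the number of spanning trees of the complete graph K_k (on a fixed labeled vertex set of size k) that have at most ℓ leaves is strictly less than (e·k)^{2ℓ} · k! / (2ℓ)!. -/
namespace Statement7Aux

open SimpleGraph Finset

set_option linter.unusedSectionVars false

variable {V : Type*} [DecidableEq V] {G : SimpleGraph V}

noncomputable def pth (hT : G.IsTree) (v r : V) : G.Walk v r :=
  (hT.existsUnique_path v r).choose

lemma pth_isPath (hT : G.IsTree) (v r : V) : (pth hT v r).IsPath :=
  (hT.existsUnique_path v r).choose_spec.1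

lemma pth_eq (hT : G.IsTree) {v r : V} (p : G.Walk v r) (hp : p.IsPath) : pth hT v r = p :=
  ((hT.existsUnique_path v r).choose_spec.2 p hp).symm

noncomputable def par (hT : G.IsTree) (r v : V) : V := (pth hT v r).getVert 1

lemma par_self (hT : G.IsTree) (r : V) : par hT r r = r := by
  have h := pth_eq hT (Walk.nil : G.Walk r r) (by simp)
  unfold par
  rw [h]
  exact Walk.getVert_of_length_le _ (by simp)

lemma adj_par (hT : G.IsTree) {r v : V} (hv : v ≠ r) : G.Adj v (par hT r v) :=
  Walk.adj_snd (Walk.not_nil_of_ne hv)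

lemma par_adj_root (hT : G.IsTree) {r v : V} (h : G.Adj v r) : par hT r v = r := by
  have hp : (Walk.cons h Walk.nil).IsPath := by
    simp [Walk.cons_isPath_iff, h.ne]
  unfold par
  rw [pth_eq hT _ hp]
  simp [Walk.getVert_cons_succ]

lemma adj_cases (hT : G.IsTree) {r a b : V} (h : G.Adj a b) (ha : a ≠ r) (hb : b ≠ r) :
    par hT r a = b ∨ par hT r b = a := by
  by_cases hmem : a ∈ (pth hT b r).support
  · right
    have hq : ((pth hT b r).takeUntil a hmem).IsPath := (pth_isPath hT b r).takeUntil hmem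
    have hsingle : (Walk.cons h.symm Walk.nil : G.Walk b a).IsPath := by
      simp [Walk.cons_isPath_iff, h.ne']
    have huniq : ((pth hT b r).takeUntil a hmem) = Walk.cons h.symm Walk.nil := by
      have h2 := hT.2.path_unique ⟨_, hq⟩ ⟨_, hsingle⟩
      exact congrArg Subtype.val h2
    have hspec := (pth hT b r).take_spec hmem
    unfold par
    rw [← hspec, huniq]
    simp [Walk.cons_append, Walk.nil_append, Walk.getVert_cons_succ, Walk.getVert_zero]
  · left
    have hp : (Walk.cons h (pth hT b r)).IsPath := by
      rw [Walk.cons_isPath_iff]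
      exact ⟨pth_isPath hT b r, hmem⟩
    unfold par
    rw [pth_eq hT _ hp]
    simp [Walk.getVert_cons_succ]

lemma exists_par_eq_root (hT : G.IsTree) {r v : V} (hv : v ≠ r) :
    ∃ w, w ≠ r ∧ par hT r w = r := by
  have hnil : ¬ ((pth hT v r).reverse).Nil := Walk.not_nil_of_ne (Ne.symm hv)
  have hadj : G.Adj r (((pth hT v r).reverse).getVert 1) := Walk.adj_snd hnil
  refine ⟨((pth hT v r).reverse).getVert 1, ?_, par_adj_root hT hadj.symm⟩
  intro h
  rw [h] at hadj
  exact G.loopless.irrefl r hadj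

lemma exists_par_eq (hT : G.IsTree) {r v : V} (hv : v ≠ r)
    (hleaf : (G.neighborSet v).ncard ≠ 1) (hfin : (G.neighborSet v).Finite) :
    ∃ w, w ≠ r ∧ par hT r w = v := by
  have h1 : G.Adj v (par hT r v) := adj_par hT hv
  have hpos : 0 < (G.neighborSet v).ncard := (Set.ncard_pos hfin).mpr ⟨_, h1⟩
  have hlt : 1 < (G.neighborSet v).ncard := lt_of_le_of_ne hpos (Ne.symm hleaf)
  obtain ⟨a, ha, b, hb, hab⟩ := (Set.one_lt_ncard hfin).mp hlt
  have key : ∀ w, G.Adj v w → w ≠ par hT r v → (w ≠ r ∧ par hT r w = v) := by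
    intro w hw hne
    have hwr : w ≠ r := by
      intro h
      subst h
      exact hne (par_adj_root hT hw).symm
    rcases adj_cases hT hw hv hwr with h' | h'
    · exact absurd h'.symm hne
    · exact ⟨hwr, h'⟩
  by_cases hap : a = par hT r v
  · exact ⟨b, key b hb (by rw [← hap]; exact Ne.symm hab)⟩
  · exact ⟨a, key a ha hap⟩

lemma adj_iff (hT : G.IsTree) (r : V) (a b : V) :
    G.Adj a b ↔ a ≠ b ∧ ((a ≠ r ∧ par hT r a = b) ∨ (b ≠ r ∧ par hT r b = a)) := by
  constructor
  · intro h
    refine ⟨h.ne, ?_⟩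
    by_cases ha : a = r
    · subst ha
      exact Or.inr ⟨h.ne', par_adj_root hT h.symm⟩
    · by_cases hb : b = r
      · subst hb
        exact Or.inl ⟨ha, par_adj_root hT h⟩
      · rcases adj_cases hT h ha hb with h' | h'
        · exact Or.inl ⟨ha, h'⟩
        · exact Or.inr ⟨hb, h'⟩
  · rintro ⟨hne, (⟨ha, h⟩ | ⟨hb, h⟩)⟩
    · exact h ▸ adj_par hT ha
    · exact (h ▸ adj_par hT hb).symm


section Encoding

variable (k L : ℕ) (r : Fin k)

/-- The index type for the encoding. -/
def DType : Type :=
  {D : Finset (Fin k) // D ∈ (Finset.univ \ {r}).powersetCard L} ×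
    ((Fin L → Fin k) × (Fin (k - 1 - L) ↪ Fin k))

noncomputable instance : Fintype (DType k L r) := by
  unfold DType; infer_instance

variable {k L r}

lemma Dcard {D : Finset (Fin k)} (hD : D ∈ (Finset.univ \ {r}).powersetCard L) :
    D.card = L := (Finset.mem_powersetCard.1 hD).2

lemma rnotD {D : Finset (Fin k)} (hD : D ∈ (Finset.univ \ {r}).powersetCard L) :
    r ∉ D := by
  intro h
  have := (Finset.mem_powersetCard.1 hD).1 h
  simp at this

lemma Ecard {D : Finset (Fin k)} (hD : D ∈ (Finset.univ \ {r}).powersetCard L) :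
    (Finset.univ \ insert r D).card = k - 1 - L := by
  have h1 : (Finset.univ \ insert r D).card = k - (insert r D).card := by
    rw [Finset.card_sdiff_of_subset (Finset.subset_univ _), Finset.card_univ, Fintype.card_fin]
  rw [h1, Finset.card_insert_of_notMem (rnotD hD), Dcard hD]
  omega

lemma memE {D : Finset (Fin k)} {v : Fin k} (hv : v ∉ D) (hr : ¬ v = r) :
    v ∈ Finset.univ \ insert r D := by
  simp [Finset.mem_sdiff, Finset.mem_insert, hv, hr]

variable (k L r)

/-- The function encoded by a triple. -/
noncomputable def dfun (t : DType k L r) (v : Fin k) : Fin k :=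
  if hv : v ∈ t.1.1 then t.2.1 ((t.1.1.orderIsoOfFin (Dcard t.1.2)).symm ⟨v, hv⟩)
  else if hr : v = r then r
  else t.2.2 (((Finset.univ \ insert r t.1.1).orderIsoOfFin (Ecard t.1.2)).symm
    ⟨v, memE hv hr⟩)

/-- Decoding a triple into a graph. -/
noncomputable def decode (t : DType k L r) : SimpleGraph (Fin k) :=
  SimpleGraph.fromRel (fun a b => a ≠ r ∧ dfun k L r t a = b)

variable {k L r}

/-- Every function which fixes `r` and misses at most `L + 1` values on `univ \ {r}`
is encoded by some triple. -/
lemma exists_dfun_eq (f : Fin k → Fin k) (hfr : f r = r) (hLk : L ≤ k - 1)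
    (hmiss : (Finset.univ.filter
        (fun v : Fin k => ∀ w, w ≠ r → f w ≠ v)).card ≤ L + 1) :
    ∃ t : DType k L r, dfun k L r t = f := by
  classical
  have hk0 : 0 < k := r.pos
  set P : Fin k → Prop := fun v => v ≠ r ∧ ∃ w, w ≠ r ∧ w < v ∧ f w = f v with hP
  set D₀ : Finset (Fin k) := Finset.univ.filter P with hD₀def
  have hD₀mem : ∀ v, v ∈ D₀ ↔ P v := by intro v; simp [hD₀def]
  have hD₀sub : D₀ ⊆ Finset.univ \ {r} := fun v hv => by
    simp [((hD₀mem v).1 hv).1]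
  set I : Finset (Fin k) := (Finset.univ \ {r}).image f with hIdef
  have hbij : ((Finset.univ \ {r}) \ D₀).card = I.card := by
    apply Finset.card_bij (fun v _ => f v)
    · intro a ha
      exact Finset.mem_image.2 ⟨a, (Finset.mem_sdiff.1 ha).1, rfl⟩
    · intro v₁ h₁ v₂ h₂ hf
      have h₁' := Finset.mem_sdiff.1 h₁
      have h₂' := Finset.mem_sdiff.1 h₂
      have hr₁ : v₁ ≠ r := by
        have := (Finset.mem_sdiff.1 h₁'.1).2; simpa using this
      have hr₂ : v₂ ≠ r := by
        have := (Finset.mem_sdiff.1 h₂'.1).2; simpa using this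
      rcases lt_trichotomy v₁ v₂ with h | h | h
      · exact absurd ((hD₀mem v₂).2 ⟨hr₂, v₁, hr₁, h, hf⟩) h₂'.2
      · exact h
      · exact absurd ((hD₀mem v₁).2 ⟨hr₁, v₂, hr₂, h, hf.symm⟩) h₁'.2
    · intro y hy
      obtain ⟨v₀, hv₀, rfl⟩ := Finset.mem_image.1 hy
      set T : Finset (Fin k) := (Finset.univ \ {r}).filter (fun w => f w = f v₀) with hT
      have hTne : T.Nonempty := ⟨v₀, by simp [hT]; simpa using (Finset.mem_sdiff.1 hv₀).2⟩
      have hvT : T.min' hTne ∈ T := T.min'_mem hTne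
      set v := T.min' hTne with hv
      have hvr : v ≠ r := by
        have := (Finset.mem_sdiff.1 (Finset.mem_filter.1 hvT).1).2; simpa using this
      have hfv : f v = f v₀ := (Finset.mem_filter.1 hvT).2
      refine ⟨v, ?_, hfv⟩
      rw [Finset.mem_sdiff]
      refine ⟨by simp [hvr], ?_⟩
      intro hvD
      obtain ⟨_, w, hwr, hwv, hfw⟩ := (hD₀mem v).1 hvD
      have hwT : w ∈ T := by
        rw [hT, Finset.mem_filter]
        exact ⟨by simp [hwr], by rw [hfw, hfv]⟩
      exact absurd (T.min'_le w hwT) (not_le.2 hwv)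
  have hmissI : Finset.univ.filter (fun v : Fin k => ∀ w, w ≠ r → f w ≠ v)
      = Finset.univ \ I := by
    ext v
    simp only [Finset.mem_filter, Finset.mem_univ, true_and, Finset.mem_sdiff, hIdef,
      Finset.mem_image, Finset.mem_singleton, not_exists, not_and]
  have hIcard : k - (L + 1) ≤ I.card := by
    have h1 : (Finset.univ \ I).card = k - I.card := by
      rw [Finset.card_sdiff_of_subset (Finset.subset_univ _), Finset.card_univ, Fintype.card_fin]
    have h2 : (Finset.univ \ I).card ≤ L + 1 := by rw [← hmissI]; exact hmiss
    have h3 : I.card ≤ k := by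
      calc I.card ≤ Finset.univ.card := Finset.card_le_univ I
      _ = k := by rw [Finset.card_univ, Fintype.card_fin]
    omega
  have hruniv : (Finset.univ \ ({r} : Finset (Fin k))).card = k - 1 := by
    rw [Finset.card_sdiff_of_subset (Finset.subset_univ _), Finset.card_univ, Fintype.card_fin,
      Finset.card_singleton]
  have hD₀card : D₀.card ≤ L := by
    have h1 := Finset.card_sdiff_add_card_eq_card hD₀sub
    omega
  obtain ⟨D', hD₀D', hD'sub, hD'card⟩ :=
    Finset.exists_subsuperset_card_eq hD₀sub hD₀card (by rw [hruniv]; exact hLk)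
  have hmem : D' ∈ (Finset.univ \ {r}).powersetCard L :=
    Finset.mem_powersetCard.2 ⟨hD'sub, hD'card⟩
  have hEinj : ∀ v₁ ∈ Finset.univ \ insert r D', ∀ v₂ ∈ Finset.univ \ insert r D',
      f v₁ = f v₂ → v₁ = v₂ := by
    intro v₁ h₁ v₂ h₂ hf
    simp only [Finset.mem_sdiff, Finset.mem_insert, Finset.mem_univ, true_and, not_or] at h₁ h₂
    rcases lt_trichotomy v₁ v₂ with h | h | h
    · exact absurd (hD₀D' ((hD₀mem v₂).2 ⟨h₂.1, v₁, h₁.1, h, hf⟩)) h₂.2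
    · exact h
    · exact absurd (hD₀D' ((hD₀mem v₁).2 ⟨h₁.1, v₂, h₂.1, h, hf.symm⟩)) h₁.2
  refine ⟨⟨⟨D', hmem⟩, fun i => f ((D'.orderIsoOfFin (Dcard hmem)) i : Fin k),
    ⟨fun i => f (((Finset.univ \ insert r D').orderIsoOfFin (Ecard hmem)) i : Fin k), ?_⟩⟩, ?_⟩
  · intro i₁ i₂ hi
    have e := hEinj _ (((Finset.univ \ insert r D').orderIsoOfFin (Ecard hmem)) i₁).2 _
      (((Finset.univ \ insert r D').orderIsoOfFin (Ecard hmem)) i₂).2 hi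
    have e2 : ((Finset.univ \ insert r D').orderIsoOfFin (Ecard hmem)) i₁
        = ((Finset.univ \ insert r D').orderIsoOfFin (Ecard hmem)) i₂ := Subtype.ext e
    exact ((Finset.univ \ insert r D').orderIsoOfFin (Ecard hmem)).injective e2
  · funext v
    show dfun k L r _ v = f v
    unfold dfun
    by_cases hv : v ∈ D'
    · rw [dif_pos hv]
      show f _ = f v
      rw [OrderIso.apply_symm_apply]
    · rw [dif_neg hv]
      by_cases hr : v = r
      · rw [dif_pos hr, hr, hfr]
      · rw [dif_neg hr]
        show f _ = f v
        rw [OrderIso.apply_symm_apply]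

end Encoding

end Statement7Aux

open Statement7Aux Finset Nat in
/-- For positive integers `ℓ` and `k` with `k > 2ℓ`, the number of labeled
spanning trees of `K_k` (i.e. tree graphs on the vertex set `Fin k`) with at most `ℓ` leaves
is strictly less than `(e k)^{2ℓ} k! / (2ℓ)!`. -/
theorem statement7 (ℓ k : ℕ) (hℓ : 0 < ℓ) (hk : 2 * ℓ < k) :
    (({G : SimpleGraph (Fin k) | G.Connected ∧ G.IsAcyclic ∧
        {v : Fin k | (G.neighborSet v).ncard = 1}.ncard ≤ ℓ}.ncard : ℝ) <
      (Real.exp 1 * k) ^ (2 * ℓ) * (Nat.factorial k) / (Nat.factorial (2 * ℓ))) := by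
  classical
  have hk3 : 3 ≤ k := by omega
  set r : Fin k := ⟨0, by omega⟩ with hrdef
  set L : ℕ := ℓ - 1 with hLdef
  set S : Set (SimpleGraph (Fin k)) := {G : SimpleGraph (Fin k) | G.Connected ∧ G.IsAcyclic ∧
        {v : Fin k | (G.neighborSet v).ncard = 1}.ncard ≤ ℓ} with hSdef
  -- Step 1: S is contained in the range of `decode`
  have hsub : S ⊆ Set.range (decode k L r) := by
    intro G hG
    obtain ⟨hconn, hacyc, hleaf⟩ := hG
    have hT : G.IsTree := ⟨hconn, hacyc⟩
    set f : Fin k → Fin k := fun v => if v = r then r else par hT r v with hfdef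
    have hfr : f r = r := if_pos rfl
    have hfpar : ∀ a, a ≠ r → f a = par hT r a := fun a ha => if_neg ha
    have hmiss : (filter (fun v : Fin k => ∀ w, w ≠ r → f w ≠ v) univ).card ≤ L + 1 := by
      have hsubf : filter (fun v : Fin k => ∀ w, w ≠ r → f w ≠ v) univ ⊆
          filter (fun v : Fin k => (G.neighborSet v).ncard = 1) univ := by
        intro v hv
        rw [Finset.mem_filter] at hv ⊢
        refine ⟨Finset.mem_univ v, ?_⟩
        by_contra hnl
        by_cases hvr : v = r
        · have hone : (⟨1, by omega⟩ : Fin k) ≠ r := by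
            simp [hrdef, Fin.ext_iff]
          obtain ⟨w, hwr, hpw⟩ := exists_par_eq_root hT hone
          exact hv.2 w hwr (by rw [hfpar w hwr, hpw, hvr])
        · obtain ⟨w, hwr, hpw⟩ := exists_par_eq hT hvr hnl (Set.toFinite _)
          exact hv.2 w hwr (by rw [hfpar w hwr, hpw])
      have hcard := Finset.card_le_card hsubf
      have hset : {v : Fin k | (G.neighborSet v).ncard = 1} =
          ↑(filter (fun v : Fin k => (G.neighborSet v).ncard = 1) univ) := by
        ext v; simp
      rw [hset, Set.ncard_coe_finset] at hleaf
      omega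
    obtain ⟨t, ht⟩ := exists_dfun_eq f hfr (by omega) hmiss
    refine ⟨t, ?_⟩
    ext a b
    unfold Statement7Aux.decode
    rw [SimpleGraph.fromRel_adj, ht]
    rw [adj_iff hT r a b]
    constructor
    · rintro ⟨hne, (⟨h1, h2⟩ | ⟨h1, h2⟩)⟩
      · exact ⟨hne, Or.inl ⟨h1, by rw [← hfpar a h1]; exact h2⟩⟩
      · exact ⟨hne, Or.inr ⟨h1, by rw [← hfpar b h1]; exact h2⟩⟩
    · rintro ⟨hne, (⟨h1, h2⟩ | ⟨h1, h2⟩)⟩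
      · exact ⟨hne, Or.inl ⟨h1, by rw [hfpar a h1]; exact h2⟩⟩
      · exact ⟨hne, Or.inr ⟨h1, by rw [hfpar b h1]; exact h2⟩⟩
  -- Step 2: cardinality bound
  have h1 : S.ncard ≤ (Set.range (decode k L r)).ncard :=
    Set.ncard_le_ncard hsub (Set.finite_range _)
  have h2 : (Set.range (decode k L r)).ncard ≤ Nat.card (DType k L r) := by
    rw [← Nat.card_coe_set_eq]
    exact Nat.card_le_card_of_surjective _ Set.rangeFactorization_surjective
  have hruniv : (Finset.univ \ ({r} : Finset (Fin k))).card = k - 1 := by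
    rw [Finset.card_sdiff_of_subset (Finset.subset_univ _), Finset.card_univ, Fintype.card_fin,
      Finset.card_singleton]
  have h3 : Nat.card (DType k L r) =
      (k - 1).choose L * (k ^ L * Nat.descFactorial k (k - 1 - L)) := by
    unfold Statement7Aux.DType
    rw [Nat.card_prod, Nat.card_prod]
    rw [Nat.card_eq_fintype_card, Nat.card_eq_fintype_card, Nat.card_eq_fintype_card]
    rw [Fintype.card_coe, Finset.card_powersetCard, hruniv]
    rw [Fintype.card_fun, Fintype.card_fin, Fintype.card_fin]
    rw [Fintype.card_embedding_eq, Fintype.card_fin, Fintype.card_fin]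
  set N : ℕ := (k - 1).choose L * (k ^ L * Nat.descFactorial k (k - 1 - L)) with hNdef
  have hSN : S.ncard ≤ N := by omega
  -- Step 3: the numeric bound
  have hL1 : L = ℓ - 1 := rfl
  have hkL : k - 1 - L = k - ℓ := by omega
  -- ℕ inequality
  have ha : (k - 1).choose L * L ! ≤ k ^ L := by
    calc (k - 1).choose L * L ! = L ! * (k - 1).choose L := by ring
    _ = (k - 1).descFactorial L := (Nat.descFactorial_eq_factorial_mul_choose _ _).symm
    _ ≤ (k - 1) ^ L := Nat.descFactorial_le_pow _ _
    _ ≤ k ^ L := Nat.pow_le_pow_left (by omega) _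
  have hb : Nat.descFactorial k (k - ℓ) * ℓ ! = k ! := by
    have h := Nat.factorial_mul_descFactorial (show k - ℓ ≤ k by omega)
    rw [show k - (k - ℓ) = ℓ by omega] at h
    rw [Nat.mul_comm] at h
    exact h
  have hc : (2 * ℓ).choose ℓ * ℓ ! * ℓ ! = (2 * ℓ)! := by
    have h := Nat.choose_mul_factorial_mul_factorial (show ℓ ≤ 2 * ℓ by omega)
    rwa [show 2 * ℓ - ℓ = ℓ by omega] at h
  have hd : (2 * ℓ).choose ℓ ≤ 2 ^ (2 * ℓ) := by
    calc (2 * ℓ).choose ℓ ≤ ∑ m ∈ Finset.range (2 * ℓ + 1), (2 * ℓ).choose m :=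
      Finset.single_le_sum (fun _ _ => Nat.zero_le _) (Finset.mem_range.2 (by omega))
    _ = 2 ^ (2 * ℓ) := Nat.sum_range_choose (2 * ℓ)
  have he : ℓ ! = ℓ * (ℓ - 1)! := (Nat.mul_factorial_pred hℓ.ne').symm
  have key : N * (2 * ℓ)! ≤ k ^ (ℓ - 1) * k ^ (ℓ - 1) * k ! * (2 ^ (2 * ℓ) * ℓ) := by
    have e1 : N * (2 * ℓ)! =
        ((k - 1).choose L * L !) * (k ^ L) * (Nat.descFactorial k (k - ℓ) * ℓ !) *
          ((2 * ℓ).choose ℓ * ℓ) := by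
      have he' : ℓ ! = ℓ * L ! := (Nat.mul_factorial_pred hℓ.ne').symm
      rw [hNdef, hkL, ← hc, he']
      ring
    rw [e1]
    have e2 : ((k - 1).choose L * L !) * (k ^ L) * (Nat.descFactorial k (k - ℓ) * ℓ !) *
        ((2 * ℓ).choose ℓ * ℓ) ≤ (k ^ L) * (k ^ L) * (k !) * (2 ^ (2 * ℓ) * ℓ) := by
      apply Nat.mul_le_mul
      apply Nat.mul_le_mul
      apply Nat.mul_le_mul ha (le_refl _)
      · rw [hb]
      · exact Nat.mul_le_mul hd (le_refl _)
    exact e2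
  -- pass to ℝ
  have hfact_pos : (0 : ℝ) < (Nat.factorial (2 * ℓ) : ℝ) := by positivity
  have hk0' : (0 : ℝ) < (k : ℝ) := by exact_mod_cast (show 0 < k by omega)
  have keyR : (N : ℝ) * (Nat.factorial (2 * ℓ) : ℝ) ≤
      (k : ℝ) ^ (ℓ - 1) * (k : ℝ) ^ (ℓ - 1) * (Nat.factorial k : ℝ) *
        ((2 : ℝ) ^ (2 * ℓ) * (ℓ : ℝ)) := by
    have := (Nat.cast_le (α := ℝ)).2 key
    push_cast at this
    convert this using 2 <;> push_cast <;> ring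
  have he2 : (2 : ℝ) < Real.exp 1 := by
    have := Real.exp_one_gt_d9
    linarith
  have hstep : (2 : ℝ) ^ (2 * ℓ) * (ℓ : ℝ) <
      (Real.exp 1) ^ (2 * ℓ) * ((k : ℝ) * (k : ℝ)) := by
    have h2 : (2 : ℝ) ^ (2 * ℓ) < (Real.exp 1) ^ (2 * ℓ) :=
      pow_lt_pow_left₀ he2 (by norm_num) (by omega)
    have hlk : (ℓ : ℝ) ≤ (k : ℝ) * (k : ℝ) := by
      have h : ℓ ≤ k * k := le_trans (by omega) (Nat.le_mul_of_pos_left k (by omega))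
      exact_mod_cast h
    calc (2 : ℝ) ^ (2 * ℓ) * (ℓ : ℝ) ≤ (2 : ℝ) ^ (2 * ℓ) * ((k : ℝ) * (k : ℝ)) :=
      mul_le_mul_of_nonneg_left hlk (by positivity)
    _ < (Real.exp 1) ^ (2 * ℓ) * ((k : ℝ) * (k : ℝ)) :=
      mul_lt_mul_of_pos_right h2 (by positivity)
  have hkk : (k : ℝ) ^ (ℓ - 1) * (k : ℝ) ^ (ℓ - 1) * ((k : ℝ) * (k : ℝ))
      = (k : ℝ) ^ (2 * ℓ) := by
    have hexp : (ℓ - 1) + ((ℓ - 1) + 2) = 2 * ℓ := by omega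
    calc (k : ℝ) ^ (ℓ - 1) * (k : ℝ) ^ (ℓ - 1) * ((k : ℝ) * (k : ℝ))
        = (k : ℝ) ^ ((ℓ - 1) + ((ℓ - 1) + 2)) := by rw [pow_add, pow_add]; ring
    _ = (k : ℝ) ^ (2 * ℓ) := by rw [hexp]
  have hMpos : (0 : ℝ) < (k : ℝ) ^ (ℓ - 1) * (k : ℝ) ^ (ℓ - 1) * (Nat.factorial k : ℝ) := by
    have : (0 : ℝ) < (Nat.factorial k : ℝ) := by positivity
    exact mul_pos (mul_pos (pow_pos hk0' _) (pow_pos hk0' _)) this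
  rw [lt_div_iff₀ hfact_pos]
  calc (S.ncard : ℝ) * (Nat.factorial (2 * ℓ) : ℝ)
      ≤ (N : ℝ) * (Nat.factorial (2 * ℓ) : ℝ) :=
        mul_le_mul_of_nonneg_right (Nat.cast_le.2 hSN) (le_of_lt hfact_pos)
    _ ≤ (k : ℝ) ^ (ℓ - 1) * (k : ℝ) ^ (ℓ - 1) * (Nat.factorial k : ℝ) *
        ((2 : ℝ) ^ (2 * ℓ) * (ℓ : ℝ)) := keyR
    _ < (k : ℝ) ^ (ℓ - 1) * (k : ℝ) ^ (ℓ - 1) * (Nat.factorial k : ℝ) *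
        ((Real.exp 1) ^ (2 * ℓ) * ((k : ℝ) * (k : ℝ))) :=
      (mul_lt_mul_iff_right₀ hMpos).2 hstep
    _ = (Real.exp 1) ^ (2 * ℓ) * ((k : ℝ) ^ (ℓ - 1) * (k : ℝ) ^ (ℓ - 1) *
        ((k : ℝ) * (k : ℝ))) * (Nat.factorial k : ℝ) := by ring
    _ = (Real.exp 1) ^ (2 * ℓ) * (k : ℝ) ^ (2 * ℓ) * (Nat.factorial k : ℝ) := by rw [hkk]
    _ = (Real.exp 1 * (k : ℝ)) ^ (2 * ℓ) * (Nat.factorial k : ℝ) := by rw [mul_pow]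
end

section
/- Let T be a tree on m ≥ 3 vertices and let r be a positive integer. Then the number of ordered r-tuples (P_1, …, P_r) of (not necessarily distinct) non-trivial paths of T such that the union P_1 ∪ ⋯ ∪ P_r is a subtree of T (i.e., the subgraph whose vertex set is the union of the vertex sets and whose edge set is the union of the edge sets is connected) is at least (m/4)^{2r}. -/
open SimpleGraph Finset

namespace Statement8Aux

variable {V : Type*} {T : SimpleGraph V}

lemma path_len (hconn : T.Connected) (hacyc : T.IsAcyclic) {x y : V} {p : T.Walk x y}
    (hp : p.IsPath) : p.length = T.dist x y := by
  obtain ⟨q, hq, hql⟩ := hconn.exists_path_of_dist x y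
  have h := hacyc.path_unique ⟨p, hp⟩ ⟨q, hq⟩
  rw [show p = q from congrArg Subtype.val h]
  exact hql

lemma dist_add (hconn : T.Connected) (hacyc : T.IsAcyclic) {x y a : V} {p : T.Walk x y}
    (hp : p.IsPath) (ha : a ∈ p.support) :
    T.dist x a + T.dist a y = T.dist x y := by
  classical
  have h1 := path_len hconn hacyc (hp.takeUntil ha)
  have h2 := path_len hconn hacyc (hp.dropUntil ha)
  have h3 := congrArg Walk.length (p.take_spec ha)
  rw [Walk.length_append] at h3
  rw [← path_len hconn hacyc hp, ← h1, ← h2, h3]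

lemma seg (hconn : T.Connected) (hacyc : T.IsAcyclic) {x y a b : V} {p : T.Walk x y}
    (hp : p.IsPath) (ha : a ∈ p.support) (hb : b ∈ p.support)
    (hd : T.dist a b = T.dist x y) :
    (a = x ∧ b = y) ∨ (a = y ∧ b = x) := by
  classical
  have hxa := dist_add hconn hacyc hp ha
  rw [← p.take_spec ha, Walk.mem_support_append_iff] at hb
  rcases hb with hb | hb
  · have h4 := dist_add hconn hacyc (hp.takeUntil ha) hb
    have hba : T.dist b a = T.dist x y := by rw [SimpleGraph.dist_comm]; exact hd
    have hxb : T.dist x b = 0 := by omega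
    have hay : T.dist a y = 0 := by omega
    exact Or.inr ⟨hconn.dist_eq_zero_iff.mp hay, (hconn.dist_eq_zero_iff.mp hxb).symm⟩
  · have h4 := dist_add hconn hacyc (hp.dropUntil ha) hb
    have hxaz : T.dist x a = 0 := by omega
    have hby : T.dist b y = 0 := by omega
    exact Or.inl ⟨(hconn.dist_eq_zero_iff.mp hxaz).symm, hconn.dist_eq_zero_iff.mp hby⟩

lemma endpoints (hconn : T.Connected) (hacyc : T.IsAcyclic) {x y x' y' : V}
    {p : T.Walk x y} {q : T.Walk x' y'} (hp : p.IsPath) (hq : q.IsPath)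
    (h : p.toSubgraph = q.toSubgraph) :
    (x' = x ∧ y' = y) ∨ (x' = y ∧ y' = x) := by
  classical
  have hsupp : ∀ z : V, z ∈ q.support → z ∈ p.support := by
    intro z hz
    rw [← Walk.mem_verts_toSubgraph, h, Walk.mem_verts_toSubgraph]
    exact hz
  have hE : p.edges.toFinset = q.edges.toFinset := by
    classical
    have h2 := congrArg Subgraph.edgeSet h
    rw [Walk.edgeSet_toSubgraph, Walk.edgeSet_toSubgraph] at h2
    ext e
    simpa using Set.ext_iff.mp h2 e
  have hlen : p.length = q.length := by
    classical
    have hc := congrArg Finset.card hE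
    rwa [List.toFinset_card_of_nodup hp.isTrail.edges_nodup,
      List.toFinset_card_of_nodup hq.isTrail.edges_nodup,
      Walk.length_edges, Walk.length_edges] at hc
  have hd : T.dist x' y' = T.dist x y := by
    rw [← path_len hconn hacyc hq, ← path_len hconn hacyc hp, hlen]
  exact seg hconn hacyc hp (hsupp x' q.start_mem_support) (hsupp y' q.end_mem_support) hd

noncomputable def nxt (hconn : T.Connected) (v x : V) : V :=
  (hconn.exists_path_of_dist v x).choose.getVert 1

lemma nxt_eq (hconn : T.Connected) (hacyc : T.IsAcyclic) (v x : V)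
    {P : T.Walk v x} (hP : P.IsPath) : P.getVert 1 = nxt hconn v x := by
  have h := hacyc.path_unique ⟨P, hP⟩ ⟨_, (hconn.exists_path_of_dist v x).choose_spec.1⟩
  rw [show P = (hconn.exists_path_of_dist v x).choose from congrArg Subtype.val h]
  rfl

lemma nxt_spec (hconn : T.Connected) (hacyc : T.IsAcyclic) {v x : V} (hxv : x ≠ v) :
    T.Adj v (nxt hconn v x) ∧ T.dist (nxt hconn v x) x + 1 = T.dist v x := by
  obtain ⟨hP, hl⟩ := (hconn.exists_path_of_dist v x).choose_spec
  have hg : (hconn.exists_path_of_dist v x).choose.getVert 1 = nxt hconn v x := rfl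
  set P := (hconn.exists_path_of_dist v x).choose
  have hpos : 0 < P.length := by
    rw [hl]; exact hconn.pos_dist_of_ne (Ne.symm hxv)
  have hadj : T.Adj v (nxt hconn v x) := by
    have h2 := P.adj_getVert_succ hpos
    rw [P.getVert_zero, hg] at h2
    exact h2
  refine ⟨hadj, ?_⟩
  have hmem : nxt hconn v x ∈ P.support := by
    rw [Walk.mem_support_iff_exists_getVert]
    exact ⟨1, hg, by omega⟩
  have h2 := dist_add hconn hacyc hP hmem
  have h1 : T.dist v (nxt hconn v x) = 1 := SimpleGraph.dist_eq_one_iff_adj.mpr hadj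
  omega

lemma step_up (hconn : T.Connected) (hacyc : T.IsAcyclic) {v a b : V} (ha : a ≠ v)
    (hab : T.Adj a b) (hd : T.dist v b = T.dist v a + 1) :
    nxt hconn v b = nxt hconn v a := by
  obtain ⟨hP, hl⟩ := (hconn.exists_path_of_dist v a).choose_spec
  have hg : (hconn.exists_path_of_dist v a).choose.getVert 1 = nxt hconn v a := rfl
  set P := (hconn.exists_path_of_dist v a).choose
  have hpos : 1 ≤ P.length := by
    rw [hl]
    exact hconn.pos_dist_of_ne (Ne.symm ha)
  have hWl : (P.concat hab).length = T.dist v b := by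
    rw [Walk.length_concat, hl, hd]
  have hW : (P.concat hab).IsPath := Walk.isPath_of_length_eq_dist _ hWl
  have h1 : (P.concat hab).getVert 1 = P.getVert 1 := by
    rw [Walk.concat_eq_append, Walk.getVert_append]
    split_ifs with h
    · rfl
    · have h2 : P.length = 1 := by omega
      have h3 : P.getVert 1 = a := by rw [← h2]; exact P.getVert_length
      have h4 : (1 : ℕ) - P.length = 0 := by omega
      rw [h4, Walk.getVert_zero, h3]
  calc nxt hconn v b = (P.concat hab).getVert 1 := (nxt_eq hconn hacyc v b hW).symm
    _ = P.getVert 1 := h1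
    _ = nxt hconn v a := hg

lemma nxt_adj_eq (hconn : T.Connected) (hacyc : T.IsAcyclic) {v a b : V}
    (ha : a ≠ v) (hb : b ≠ v) (hab : T.Adj a b) :
    nxt hconn v a = nxt hconn v b := by
  have htri1 : T.dist v b ≤ T.dist v a + 1 := by
    have h := hconn.dist_triangle (u := v) (v := a) (w := b)
    rwa [SimpleGraph.dist_eq_one_iff_adj.mpr hab] at h
  have htri2 : T.dist v a ≤ T.dist v b + 1 := by
    have h := hconn.dist_triangle (u := v) (v := b) (w := a)
    rwa [SimpleGraph.dist_eq_one_iff_adj.mpr hab.symm] at h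
  rcases Nat.lt_trichotomy (T.dist v a) (T.dist v b) with h | h | h
  · exact (step_up hconn hacyc ha hab (by omega)).symm
  · exfalso
    obtain ⟨hP, hl⟩ := (hconn.exists_path_of_dist v a).choose_spec
    set P := (hconn.exists_path_of_dist v a).choose
    by_cases hbs : b ∈ P.support
    · have h2 := dist_add hconn hacyc hP hbs
      have h3 : T.dist b a = 0 := by omega
      exact hab.ne (hconn.dist_eq_zero_iff.mp h3).symm
    · have hW : (P.concat hab).IsPath := by
        rw [← Walk.isPath_reverse_iff, Walk.reverse_concat]
        exact Walk.IsPath.cons hP.reverse (by simpa [Walk.support_reverse] using hbs)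
      have h4 := path_len hconn hacyc hW
      rw [Walk.length_concat, hl] at h4
      omega
  · exact step_up hconn hacyc hb hab.symm (by omega)

lemma nxt_const (hconn : T.Connected) (hacyc : T.IsAcyclic) {v x y : V}
    (P : T.Walk x y) (hv : v ∉ P.support) :
    nxt hconn v y = nxt hconn v x := by
  induction P with
  | nil => rfl
  | @cons u w z h P ih =>
    rw [Walk.support_cons] at hv
    have hu : u ≠ v := fun huv => hv (by rw [huv]; exact List.mem_cons_self)
    have hvP : v ∉ P.support := fun hm => hv (List.mem_cons_of_mem _ hm)
    have hw : w ≠ v := fun hwv => hvP (by rw [← hwv]; exact P.start_mem_support)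
    rw [ih hvP]
    exact (nxt_adj_eq hconn hacyc hu hw h).symm

lemma branch_bound [Fintype V] (hconn : T.Connected) {v w : V} (hadj : T.Adj v w)
    (hmin : ∑ y : V, T.dist v y ≤ ∑ y : V, T.dist w y) :
    2 * (univ.filter (fun y => T.dist w y < T.dist v y)).card ≤ Fintype.card V := by
  classical
  have hcc := Finset.card_filter_add_card_filter_not
    (s := (univ : Finset V)) (p := fun y => T.dist w y < T.dist v y)
  rw [Finset.card_univ] at hcc
  have h1 : ∀ y ∈ univ.filter (fun y => T.dist w y < T.dist v y),
      (T.dist w y : ℤ) - T.dist v y ≤ -1 := by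
    intro y hy
    have := (Finset.mem_filter.mp hy).2
    omega
  have h2 : ∀ y ∈ univ.filter (fun y => ¬ T.dist w y < T.dist v y),
      (T.dist w y : ℤ) - T.dist v y ≤ 1 := by
    intro y hy
    have h3 := hconn.dist_triangle (u := w) (v := v) (w := y)
    rw [SimpleGraph.dist_eq_one_iff_adj.mpr hadj.symm] at h3
    omega
  have hsum : (0 : ℤ) ≤ ∑ y : V, ((T.dist w y : ℤ) - T.dist v y) := by
    rw [Finset.sum_sub_distrib]
    have h4 : (∑ y : V, (T.dist v y : ℤ)) ≤ ∑ y : V, (T.dist w y : ℤ) := by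
      exact_mod_cast hmin
    omega
  have hsplit := Finset.sum_filter_add_sum_filter_not (univ : Finset V)
    (fun y => T.dist w y < T.dist v y) (fun y => (T.dist w y : ℤ) - T.dist v y)
  have hb1 := Finset.sum_le_card_nsmul _ _ _ h1
  have hb2 := Finset.sum_le_card_nsmul _ _ _ h2
  simp only [nsmul_eq_mul, mul_one, mul_neg_one] at hb1 hb2
  omega

lemma sup_conn {W : Type*} {G : SimpleGraph W} {v : W} {ι : Type*} (f : ι → G.Subgraph)
    (hc : ∀ i, (f i).Connected) (hv : ∀ i, v ∈ (f i).verts) (s : Finset ι) (hs : s.Nonempty) :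
    (s.sup f).Connected ∧ v ∈ (s.sup f).verts := by
  classical
  induction hs using Finset.Nonempty.cons_induction with
  | singleton i => simpa using ⟨hc i, hv i⟩
  | cons i s hi hs ih =>
    rw [Finset.sup_cons]
    refine ⟨Subgraph.connected_sup (hc i).preconnected ih.1.preconnected ⟨v, ?_⟩, ?_⟩
    · rw [Subgraph.verts_inf]; exact ⟨hv i, ih.2⟩
    · rw [Subgraph.verts_sup]; exact Or.inl (hv i)

end Statement8Aux

open Statement8Aux in
/-- If `T` is a tree on `m ≥ 3` vertices and `r` is a positive integer, then
the number of ordered `r`-tuples `(P₁, …, P_r)` of (not necessarily distinct) non-trivial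
paths of `T` whose union (as a subgraph of `T`) is connected, and hence a subtree of `T`,
is at least `(m/4)^{2r}`. -/
theorem statement8 {V : Type*} [Fintype V] (T : SimpleGraph V)
    (hconn : T.Connected) (hacyc : T.IsAcyclic)
    (m : ℕ) (hm : Fintype.card V = m) (hm3 : 3 ≤ m) (r : ℕ) (hr : 0 < r) :
    ((m : ℝ) / 4) ^ (2 * r) ≤
      (({f : Fin r → T.Subgraph |
          (∀ i, ∃ (u v : V) (p : T.Walk u v), p.IsPath ∧ 0 < p.length ∧
            f i = p.toSubgraph) ∧
          (⨆ i, f i).Connected}.ncard : ℝ)) := by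
  classical
  have hne : Nonempty V := by
    rw [← Fintype.card_pos_iff, hm]; omega
  obtain ⟨v, -, hv⟩ := Finset.exists_min_image univ (fun x => ∑ y : V, T.dist x y)
    Finset.univ_nonempty
  set O := ((univ ×ˢ univ : Finset (V × V)).filter (fun z => ¬ z.1 = z.2)) with hO
  set A := O.filter (fun z => T.dist z.1 v + T.dist v z.2 = T.dist z.1 z.2) with hA
  set B := O.filter (fun z => ¬ T.dist z.1 v + T.dist v z.2 = T.dist z.1 z.2) with hB
  have hABO : A.card + B.card = O.card :=
    Finset.card_filter_add_card_filter_not _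
  -- card of O
  have hOcard : O.card + m = m * m := by
    have hdiag : ((univ ×ˢ univ : Finset (V × V)).filter (fun z => z.1 = z.2))
        = univ.image (fun x => (x, x)) := by
      ext z
      simp only [Finset.mem_filter, Finset.mem_product, Finset.mem_univ, true_and,
        Finset.mem_image]
      constructor
      · intro h; exact ⟨z.1, Prod.ext rfl h⟩
      · rintro ⟨x, rfl⟩; rfl
    have hdc : ((univ ×ˢ univ : Finset (V × V)).filter (fun z => z.1 = z.2)).card = m := by
      rw [hdiag, Finset.card_image_of_injective _ (fun a b h => (Prod.ext_iff.mp h).1),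
        Finset.card_univ, hm]
    have h3 := Finset.card_filter_add_card_filter_not
      (s := (univ ×ˢ univ : Finset (V × V))) (p := fun z => z.1 = z.2)
    rw [Finset.card_product, Finset.card_univ, hm] at h3
    have h5 : ((univ ×ˢ univ : Finset (V × V)).filter (fun z => ¬ z.1 = z.2)) = O := by
      ext z; simp [hO]
    rw [h5] at h3
    omega
  -- bad pairs analysis
  have hBprop : ∀ z ∈ B, z.1 ≠ v ∧ z.2 ≠ v ∧
      T.dist (nxt hconn v z.1) z.2 < T.dist v z.2 := by
    rintro ⟨x, y⟩ hz
    rw [hB, Finset.mem_filter] at hz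
    obtain ⟨hzO, hnadd⟩ := hz
    rw [hO, Finset.mem_filter] at hzO
    have hxv : x ≠ v := by
      rintro rfl
      exact hnadd (by simp [SimpleGraph.dist_self])
    have hyv : y ≠ v := by
      rintro rfl
      exact hnadd (by simp [SimpleGraph.dist_self])
    obtain ⟨p, hp, hpl⟩ := hconn.exists_path_of_dist x y
    have hvs : v ∉ p.support := fun hmem => hnadd (dist_add hconn hacyc hp hmem)
    have hcst : nxt hconn v y = nxt hconn v x := nxt_const hconn hacyc p hvs
    have h2 := (nxt_spec hconn hacyc hyv).2
    refine ⟨hxv, hyv, ?_⟩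
    show T.dist (nxt hconn v x) y < T.dist v y
    rw [← hcst]; omega
  have hBsub : B ⊆ (univ.erase v).biUnion (fun x => ({x} : Finset V) ×ˢ
      (univ.filter (fun y => T.dist (nxt hconn v x) y < T.dist v y))) := by
    rintro ⟨x, y⟩ hz
    obtain ⟨hxv, hyv, hlt⟩ := hBprop _ hz
    rw [Finset.mem_biUnion]
    refine ⟨x, Finset.mem_erase.mpr ⟨hxv, Finset.mem_univ x⟩, ?_⟩
    rw [Finset.mem_product]
    exact ⟨Finset.mem_singleton_self x, Finset.mem_filter.mpr ⟨Finset.mem_univ y, hlt⟩⟩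
  have hBcard : 2 * B.card ≤ (univ.erase v).card * m := by
    calc 2 * B.card ≤ 2 * ∑ x ∈ univ.erase v, (({x} : Finset V) ×ˢ
        (univ.filter (fun y => T.dist (nxt hconn v x) y < T.dist v y))).card :=
          Nat.mul_le_mul_left 2 ((Finset.card_le_card hBsub).trans Finset.card_biUnion_le)
      _ = ∑ x ∈ univ.erase v,
          2 * (univ.filter (fun y => T.dist (nxt hconn v x) y < T.dist v y)).card := by
          rw [Finset.mul_sum]
          refine Finset.sum_congr rfl fun x _ => ?_
          rw [Finset.card_product, Finset.card_singleton, one_mul]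
      _ ≤ ∑ _x ∈ univ.erase v, m := by
          refine Finset.sum_le_sum fun x hx => ?_
          have hxv := (Finset.mem_erase.mp hx).1
          have hadj := (nxt_spec hconn hacyc hxv).1
          have hb := branch_bound hconn hadj (hv _ (Finset.mem_univ _))
          rwa [hm] at hb
      _ = (univ.erase v).card * m := by rw [Finset.sum_const, smul_eq_mul]
  have hE : (univ.erase v).card + 1 = m := by
    rw [Finset.card_erase_add_one (Finset.mem_univ v), Finset.card_univ, hm]
  -- the path family
  let P : ∀ a b : V, T.Walk a b := fun a b => (hconn.exists_path_of_dist a b).choose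
  have hP : ∀ a b, (P a b).IsPath ∧ (P a b).length = T.dist a b :=
    fun a b => (hconn.exists_path_of_dist a b).choose_spec
  let F : V × V → T.Subgraph := fun z => ((P z.1 v).append (P v z.2)).toSubgraph
  have hAwalk : ∀ z ∈ A, ((P z.1 v).append (P v z.2)).IsPath ∧
      0 < ((P z.1 v).append (P v z.2)).length ∧ v ∈ ((P z.1 v).append (P v z.2)).support := by
    rintro ⟨x, y⟩ hz
    rw [hA, Finset.mem_filter] at hz
    obtain ⟨hzO, hadd⟩ := hz
    rw [hO, Finset.mem_filter] at hzO
    have hlen : ((P x v).append (P v y)).length = T.dist x y := by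
      rw [Walk.length_append, (hP x v).2, (hP v y).2]
      exact hadd
    refine ⟨Walk.isPath_of_length_eq_dist _ hlen, ?_, ?_⟩
    · rw [hlen]; exact hconn.pos_dist_of_ne hzO.2
    · exact (Walk.mem_support_append_iff _ _).mpr (Or.inl (Walk.end_mem_support _))
  set S := A.image F with hS
  have hfiber : ∀ s ∈ S, (A.filter (fun z => F z = s)).card ≤ 2 := by
    intro s hs
    obtain ⟨z₀, hz₀A, hz₀⟩ := Finset.mem_image.mp hs
    have hsub : A.filter (fun z => F z = s) ⊆ {z₀, (z₀.2, z₀.1)} := by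
      intro z hzf
      obtain ⟨hzA, hzF⟩ := Finset.mem_filter.mp hzf
      have h1 := (hAwalk _ hzA).1
      have h2 := (hAwalk _ hz₀A).1
      have heq : F z = F z₀ := by rw [hzF, hz₀]
      have hep := endpoints hconn hacyc h1 h2 heq
      rw [Finset.mem_insert, Finset.mem_singleton]
      rcases hep with ⟨h3, h4⟩ | ⟨h3, h4⟩
      · left; exact Prod.ext h3.symm h4.symm
      · right; exact Prod.ext h4.symm h3.symm
    exact (Finset.card_le_card hsub).trans ((Finset.card_insert_le _ _).trans (by simp))
  have hAS : A.card ≤ 2 * S.card := Finset.card_le_mul_card_image A 2 hfiber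
  have hSmem : ∀ s ∈ S, (∃ (u w : V) (p : T.Walk u w), p.IsPath ∧ 0 < p.length ∧
      s = p.toSubgraph) ∧ s.Connected ∧ v ∈ s.verts := by
    intro s hs
    obtain ⟨z, hzA, rfl⟩ := Finset.mem_image.mp hs
    obtain ⟨h1, h2, h3⟩ := hAwalk z hzA
    exact ⟨⟨z.1, z.2, _, h1, h2, rfl⟩, Walk.toSubgraph_connected _,
      (Walk.mem_verts_toSubgraph _).mpr h3⟩
  -- key counting bound
  have hkey : m * m ≤ 16 * S.card := by
    have h3m : 3 * m ≤ m * m := Nat.mul_le_mul_right m hm3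
    have hKM : (univ.erase v).card * m + m = m * m := by
      rw [← hE]; ring
    generalize m * m = M at hOcard h3m hKM ⊢
    generalize (univ.erase v).card * m = K at hBcard hKM
    omega
  -- finiteness of subgraphs
  have hfin : Finite T.Subgraph := by
    refine Finite.of_injective (fun H => (H.verts, H.Adj)) ?_
    intro H₁ H₂ h
    rw [Prod.ext_iff] at h
    exact SimpleGraph.Subgraph.ext h.1 h.2
  -- the tuple set
  let Pfam := Fintype.piFinset (fun _ : Fin r => S)
  have hsub : (↑Pfam : Set (Fin r → T.Subgraph)) ⊆ {f : Fin r → T.Subgraph |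
      (∀ i, ∃ (u v : V) (p : T.Walk u v), p.IsPath ∧ 0 < p.length ∧
        f i = p.toSubgraph) ∧ (⨆ i, f i).Connected} := by
    intro f hf
    rw [Finset.mem_coe, Fintype.mem_piFinset] at hf
    refine ⟨fun i => (hSmem _ (hf i)).1, ?_⟩
    haveI : Nonempty (Fin r) := ⟨⟨0, hr⟩⟩
    rw [← Finset.sup_univ_eq_iSup]
    exact (sup_conn (v := v) f (fun i => (hSmem _ (hf i)).2.1)
      (fun i => (hSmem _ (hf i)).2.2) univ Finset.univ_nonempty).1
  have hcard : S.card ^ r ≤ ({f : Fin r → T.Subgraph |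
      (∀ i, ∃ (u v : V) (p : T.Walk u v), p.IsPath ∧ 0 < p.length ∧
        f i = p.toSubgraph) ∧ (⨆ i, f i).Connected}).ncard := by
    have h1 : (↑Pfam : Set (Fin r → T.Subgraph)).ncard = S.card ^ r := by
      rw [Set.ncard_coe_finset]
      exact Fintype.card_piFinset_const S r
    rw [← h1]
    exact Set.ncard_le_ncard hsub (Set.toFinite _)
  calc ((m : ℝ) / 4) ^ (2 * r) = (((m : ℝ) / 4) ^ 2) ^ r := by rw [← pow_mul]
    _ ≤ ((S.card : ℝ)) ^ r := by
        refine pow_le_pow_left₀ (by positivity) ?_ r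
        rw [div_pow, div_le_iff₀ (by norm_num : (0:ℝ) < 4 ^ 2)]
        have : ((m * m : ℕ) : ℝ) ≤ ((16 * S.card : ℕ) : ℝ) := Nat.cast_le.mpr hkey
        push_cast at this ⊢
        nlinarith [this]
    _ ≤ _ := by
        have := hcard
        exact_mod_cast Nat.cast_le.mpr hcard
end

section
/- For all positive integers n and q with q ≥ 1.1·n, in the (q:1) Waiter-Client game on E(K_n) Client has a strategy to ensure that his graph contains no cycle at any point during the game (in particular, Client's final graph is a forest). -/
open SimpleGraph

/-- In the Waiter-Client game with bias `q`, set of free elements `F` and set `C` of elements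
claimed so far by Client, Client has a strategy guaranteeing that the set of his claimed
elements satisfies `P` at every point for the rest of the game (in particular at the end). -/
def ClientCanKeep {α : Type*} [DecidableEq α] (q : ℕ) (P : Finset α → Prop)
    (F C : Finset α) : Prop :=
  if F.card < q + 1 then P C
  else P C ∧ ∀ O ⊆ F, O.card = q + 1 → ∃ x ∈ O, ClientCanKeep q P (F \ O) (insert x C)
  termination_by F.card
  decreasing_by
    have h1 : O.Nonempty := by rw [← Finset.card_pos]; omega
    have h2 := Finset.card_sdiff_add_card_eq_card ‹O ⊆ F›
    have h4 := Finset.card_pos.mpr h1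
    omega

/-! ### Auxiliary development

We prove the theorem via a weight-function (potential) argument.  For a position `(F, C)`
(`F` free elements, `C` Client's elements), define
`Φ(F,C) = ∑ Z λ^{|Z \ C|}`, where `λ = 1/(q+1)` and `Z` ranges over all edge sets of cycles
of the complete graph all of whose edges are free or belong to Client.

* Initially `Φ < 1`, because the number of cycle edge-sets of size `k` is at most `n^k/(2k)`
  and `n/(q+1) ≤ 10/11`.
* If `Φ < 1` then Client's graph is acyclic (a completed cycle contributes `λ^0 = 1`).
* Whatever `q+1` free elements `O` Waiter offers, the *sum* over `x ∈ O` of the new potentials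
  is at most `(q+1)·Φ`: a cycle set meeting `O` in at least two elements dies (Waiter claims
  one of its edges); one meeting `O` in exactly one element survives only for one choice of
  `x`, with weight multiplied by `1/λ = q+1`; one disjoint from `O` is counted `q+1` times
  unchanged.  Hence Client can pick `x ∈ O` keeping `Φ < 1` forever.
-/

namespace Statement10Aux

/-- Edge set of the cyclic tuple `f` (a cycle of length `m+3`). -/
def cycEdges {m n : ℕ} (f : Fin (m+3) → Fin n) : Finset (Sym2 (Fin n)) :=
  Finset.univ.image (fun i : Fin (m+3) => s(f i, f (i + 1)))

/-- `Z` is the edge set of a cycle (of length at least 3) in the complete graph on `Fin n`. -/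
def IsCycleSet (n : ℕ) (Z : Finset (Sym2 (Fin n))) : Prop :=
  ∃ m : ℕ, ∃ f : Fin (m+3) → Fin n, Function.Injective f ∧ Z = cycEdges f

lemma two_ne_zero_fin (m : ℕ) : ((2 : Fin (m+3)) ≠ 0) := by
  intro h
  have h2 := congrArg Fin.val h
  simp at h2
  rw [Nat.mod_eq_of_lt (by omega)] at h2
  omega

lemma card_cycEdges {m n : ℕ} {f : Fin (m+3) → Fin n}
    (hf : Function.Injective f) : (cycEdges f).card = m + 3 := by
  rw [cycEdges, Finset.card_image_of_injective _ ?_, Finset.card_univ, Fintype.card_fin]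
  intro i j hij
  rw [Sym2.eq_iff] at hij
  rcases hij with ⟨h1, h2⟩ | ⟨h1, h2⟩
  · exact hf h1
  · exfalso
    have hi : i = j + 1 := hf h1
    have hj : j = i + 1 := hf h2.symm
    rw [hj, add_assoc] at hi
    have h' : i + 0 = i + (1+1) := by rw [add_zero]; exact hi
    have := add_left_cancel h'
    exact two_ne_zero_fin m ((rfl : (2 : Fin (m+3)) = 1 + 1).trans this.symm)

lemma cycEdges_rot {m n : ℕ} (f : Fin (m+3) → Fin n) (j : Fin (m+3)) :
    cycEdges (fun i => f (i + j)) = cycEdges f := by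
  unfold cycEdges
  ext z
  simp only [Finset.mem_image, Finset.mem_univ, true_and]
  constructor
  · rintro ⟨i, rfl⟩; exact ⟨i + j, by rw [add_right_comm]⟩
  · rintro ⟨i, rfl⟩
    refine ⟨i - j, ?_⟩
    have e1 : i - j + j = i := by abel
    have e2 : i - j + 1 + j = i + 1 := by abel
    rw [e1, e2]

lemma cycEdges_refl {m n : ℕ} (f : Fin (m+3) → Fin n) (j : Fin (m+3)) :
    cycEdges (fun i => f (j - i)) = cycEdges f := by
  unfold cycEdges
  ext z
  simp only [Finset.mem_image, Finset.mem_univ, true_and]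
  constructor
  · rintro ⟨i, rfl⟩
    refine ⟨j - (i + 1), ?_⟩
    have e1 : j - (i + 1) + 1 = j - i := by abel
    rw [e1]
    exact Sym2.eq_swap
  · rintro ⟨i, rfl⟩
    refine ⟨j - (i + 1), ?_⟩
    have e1 : j - (j - (i + 1)) = i + 1 := by abel
    have e2 : j - (j - (i + 1) + 1) = i := by abel
    rw [e1, e2]
    exact Sym2.eq_swap

open Finset in
lemma fiber_ge {m n : ℕ} (f : Fin (m+3) → Fin n) (hf : Function.Injective f) :
    2*(m+3) ≤ ((Finset.univ.filter (Function.Injective (α := Fin (m+3)) (β := Fin n))).filter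
      (fun g => cycEdges g = cycEdges f)).card := by
  classical
  set T : Finset (Fin (m+3) → Fin n) :=
    (Finset.univ.image (fun j : Fin (m+3) => (fun i => f (i + j)))) ∪
    (Finset.univ.image (fun j : Fin (m+3) => (fun i => f (j - i)))) with hT
  have hTsub : T ⊆ (Finset.univ.filter (Function.Injective (α := Fin (m+3)) (β := Fin n))).filter
      (fun g => cycEdges g = cycEdges f) := by
    intro g hg
    rw [hT, Finset.mem_union] at hg
    rw [Finset.mem_filter, Finset.mem_filter]
    rcases hg with hg | hg <;> (rw [Finset.mem_image] at hg; obtain ⟨j, -, rfl⟩ := hg)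
    · refine ⟨⟨Finset.mem_univ _, ?_⟩, cycEdges_rot f j⟩
      intro a b hab
      exact add_right_cancel (hf hab)
    · refine ⟨⟨Finset.mem_univ _, ?_⟩, cycEdges_refl f j⟩
      intro a b hab
      have h2 := hf hab
      have h3 := sub_right_injective (G := Fin (m+3)) (b := j) h2
      simpa using h3
  have hTcard : T.card = 2*(m+3) := by
    rw [hT, Finset.card_union_of_disjoint, Finset.card_image_of_injective,
      Finset.card_image_of_injective, Finset.card_univ, Fintype.card_fin]
    · ring
    · intro a b hab
      have h0 := congrFun hab 0
      simp only [zero_sub] at h0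
      have h1 := hf h0
      simpa using h1
    · intro a b hab
      have h0 := congrFun hab 0
      have h1 := hf h0
      simpa using h1
    · rw [Finset.disjoint_left]
      rintro g hg1 hg2
      rw [Finset.mem_image] at hg1 hg2
      obtain ⟨j, -, rfl⟩ := hg1
      obtain ⟨j', -, hj'⟩ := hg2
      have h0 := congrFun hj' 0
      simp only [zero_add, sub_zero] at h0
      have hjj : j' = j := hf h0
      subst hjj
      have h1 := congrFun hj' 1
      have h1' : j' - 1 = 1 + j' := hf h1
      have h2 : (2 : Fin (m+3)) = 0 := by
        have h3 : (1 + j') - (j' - 1) = (2 : Fin (m+3)) :=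
          (by abel : (1 + j') - (j' - 1) = (1 + 1 : Fin (m+3))).trans (rfl : (1 + 1 : Fin (m+3)) = 2)
        rw [← h1', sub_self] at h3
        exact h3.symm
      exact two_ne_zero_fin _ h2
  calc 2*(m+3) = T.card := hTcard.symm
    _ ≤ _ := Finset.card_le_card hTsub

open Classical in
lemma count_cyc (n m : ℕ) :
    2 * (m+3) * ((Finset.univ : Finset (Finset (Sym2 (Fin n)))).filter
      (fun Z => IsCycleSet n Z ∧ Z.card = m+3)).card ≤ n ^ (m+3) := by
  classical
  set CF : Finset (Finset (Sym2 (Fin n))) :=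
    (Finset.univ : Finset (Finset (Sym2 (Fin n)))).filter
      (fun Z => IsCycleSet n Z ∧ Z.card = m+3) with hCF
  set Inj : Finset (Fin (m+3) → Fin n) :=
    Finset.univ.filter (Function.Injective (α := Fin (m+3)) (β := Fin n)) with hInj
  have hfiber : ∀ Z ∈ CF, 2*(m+3) ≤ (Inj.filter (fun f => cycEdges f = Z)).card := by
    intro Z hZ
    rw [hCF, Finset.mem_filter] at hZ
    obtain ⟨-, ⟨m', f, hf, hZeq⟩, hcard⟩ := hZ
    have hm : m' = m := by
      rw [hZeq, card_cycEdges hf] at hcard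
      omega
    subst hm
    subst hZeq
    exact fiber_ge f hf
  have hsub : CF ⊆ Inj.image cycEdges := by
    intro Z hZ
    rw [hCF, Finset.mem_filter] at hZ
    obtain ⟨-, ⟨m', f, hf, hZeq⟩, hcard⟩ := hZ
    have hm : m' = m := by
      rw [hZeq, card_cycEdges hf] at hcard
      omega
    subst hm
    subst hZeq
    exact Finset.mem_image_of_mem _ (by rw [hInj, Finset.mem_filter]; exact ⟨Finset.mem_univ _, hf⟩)
  have hsum : Inj.card = ∑ Z ∈ Inj.image cycEdges, (Inj.filter (fun f => cycEdges f = Z)).card :=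
    Finset.card_eq_sum_card_fiberwise (fun f hf => Finset.mem_image_of_mem _ hf)
  calc 2*(m+3) * CF.card = ∑ _Z ∈ CF, 2*(m+3) := by rw [Finset.sum_const, smul_eq_mul, mul_comm]
    _ ≤ ∑ Z ∈ CF, (Inj.filter (fun f => cycEdges f = Z)).card := Finset.sum_le_sum hfiber
    _ ≤ ∑ Z ∈ Inj.image cycEdges, (Inj.filter (fun f => cycEdges f = Z)).card :=
        Finset.sum_le_sum_of_subset hsub
    _ = Inj.card := hsum.symm
    _ ≤ (Finset.univ : Finset (Fin (m+3) → Fin n)).card :=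
        Finset.card_le_card (Finset.filter_subset _ _)
    _ = n ^ (m+3) := by
        rw [Finset.card_univ, Fintype.card_fun, Fintype.card_fin, Fintype.card_fin]

open Classical in
lemma count_cyc' (n k : ℕ) (hk : 3 ≤ k) :
    2 * k * ((Finset.univ : Finset (Finset (Sym2 (Fin n)))).filter
      (fun Z => IsCycleSet n Z ∧ Z.card = k)).card ≤ n ^ k := by
  have hk' : k - 3 + 3 = k := by omega
  have := count_cyc n (k - 3)
  rw [hk'] at this
  exact this

lemma cycleSet_card_bounds {n : ℕ} {Z : Finset (Sym2 (Fin n))} (h : IsCycleSet n Z) :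
    3 ≤ Z.card ∧ Z.card ≤ n := by
  obtain ⟨m, f, hf, rfl⟩ := h
  rw [card_cycEdges hf]
  have := Fintype.card_le_of_injective f hf
  simp only [Fintype.card_fin] at this
  omega

/- The family of cycle sets all of whose edges lie in `A`. -/
open Classical in
noncomputable def cycFam (n : ℕ) (A : Finset (Sym2 (Fin n))) : Finset (Finset (Sym2 (Fin n))) :=
  Finset.univ.filter (fun Z => IsCycleSet n Z ∧ Z ⊆ A)

lemma mem_cycFam {n : ℕ} {A Z : Finset (Sym2 (Fin n))} :
    Z ∈ cycFam n A ↔ IsCycleSet n Z ∧ Z ⊆ A := by simp [cycFam]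

/-- The potential of the position `(F, C)`. -/
noncomputable def phi (q n : ℕ) (F C : Finset (Sym2 (Fin n))) : ℝ :=
  ∑ Z ∈ cycFam n (F ∪ C), ((q:ℝ)+1)⁻¹ ^ (Z \ C).card

/-! #### From a cycle in Client's graph to a cycle set -/

lemma getVert_eq_support_getElem {V : Type*} {G : SimpleGraph V} {u v : V}
    (p : G.Walk u v) (i : ℕ) (h : i < p.support.length) :
    p.support[i] = p.getVert i := by
  induction p generalizing i with
  | nil =>
    simp only [SimpleGraph.Walk.support_nil, List.length_singleton] at h
    interval_cases i
    · simp [SimpleGraph.Walk.getVert_zero]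
  | cons hadj p ih =>
    match i with
    | 0 => simp [SimpleGraph.Walk.support_cons, SimpleGraph.Walk.getVert_zero]
    | (j+1) =>
      have h' : j < p.support.length := by
        simp only [SimpleGraph.Walk.support_cons, List.length_cons] at h
        omega
      simp only [SimpleGraph.Walk.support_cons, List.getElem_cons_succ,
        SimpleGraph.Walk.getVert_cons_succ]
      exact ih j h'

lemma cycle_getVert_inj {V : Type*} {G : SimpleGraph V} {v : V}
    {c : G.Walk v v} (hc : c.IsCycle) {i j : ℕ}
    (hi1 : 1 ≤ i) (hik : i ≤ c.length) (hj1 : 1 ≤ j) (hjk : j ≤ c.length)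
    (h : c.getVert i = c.getVert j) : i = j := by
  have hnd : c.support.tail.Nodup := hc.2
  have hlen : c.support.length = c.length + 1 := c.length_support
  have hlen' : c.support.tail.length = c.length := by
    rw [List.length_tail, hlen]; omega
  have hi' : i - 1 < c.support.tail.length := by omega
  have hj' : j - 1 < c.support.tail.length := by omega
  have e1 : c.support.tail[i-1]'hi' = c.getVert i := by
    rw [List.getElem_tail, getVert_eq_support_getElem c (i-1+1) (by omega)]
    congr 1
    omega
  have e2 : c.support.tail[j-1]'hj' = c.getVert j := by
    rw [List.getElem_tail, getVert_eq_support_getElem c (j-1+1) (by omega)]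
    congr 1
    omega
  have := (hnd.getElem_inj_iff).mp (e1.trans (h.trans e2.symm))
  omega

lemma exists_cycleSet_of_not_acyclic {n : ℕ} {C : Finset (Sym2 (Fin n))}
    (h : ¬ (clientGraph C).IsAcyclic) :
    ∃ Z, IsCycleSet n Z ∧ Z ⊆ C := by
  unfold clientGraph at h
  unfold SimpleGraph.IsAcyclic at h
  push_neg at h
  obtain ⟨v, c, hc⟩ := h
  have hk3 : 3 ≤ c.length := hc.three_le_length
  set m := c.length - 3 with hm
  have hkm : c.length = m + 3 := by omega
  refine ⟨cycEdges (fun i : Fin (m+3) => c.getVert (i.val + 1)), ⟨m, _, ?_, rfl⟩, ?_⟩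
  · intro i j hij
    have hi := i.isLt
    have hj := j.isLt
    have := cycle_getVert_inj hc (i := i.val+1) (j := j.val+1)
      (by omega) (by omega) (by omega) (by omega) hij
    exact Fin.ext (by omega)
  · intro z hz
    rw [cycEdges, Finset.mem_image] at hz
    obtain ⟨i, -, rfl⟩ := hz
    have hi := i.isLt
    have hmem : ∀ a b : Fin n, (SimpleGraph.fromEdgeSet (↑C : Set (Sym2 (Fin n)))).Adj a b →
        s(a, b) ∈ C := by
      intro a b hab
      rw [SimpleGraph.fromEdgeSet_adj] at hab
      exact hab.1
    by_cases hlt : i.val + 1 < m + 3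
    · have hval : ((i + 1 : Fin (m+3))).val = i.val + 1 :=
        Fin.val_add_one_of_lt (by rw [Fin.lt_iff_val_lt_val]; simp only [Fin.val_last]; omega)
      have hadj := c.adj_getVert_succ (i := i.val + 1) (by omega)
      simp only [hval]
      exact hmem _ _ hadj
    · have hival : i.val = m + 2 := by omega
      have hval : ((i + 1 : Fin (m+3))).val = 0 := by
        have : i = Fin.last (m+2) := Fin.ext (by simpa using hival)
        rw [this]
        simp [Fin.last_add_one]
      have h1 : c.getVert (i.val + 1) = c.getVert 0 := by
        rw [hival]
        rw [← hkm, SimpleGraph.Walk.getVert_length, SimpleGraph.Walk.getVert_zero]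
      have hadj := c.adj_getVert_succ (i := 0) (by omega)
      rw [hval, h1]
      simpa using hmem _ _ hadj

lemma phi_acyclic {q n : ℕ} {F C : Finset (Sym2 (Fin n))} (h : phi q n F C < 1) :
    (clientGraph C).IsAcyclic := by
  by_contra hcyc
  obtain ⟨Z, hZcyc, hZC⟩ := exists_cycleSet_of_not_acyclic hcyc
  have hmem : Z ∈ cycFam n (F ∪ C) :=
    mem_cycFam.mpr ⟨hZcyc, hZC.trans Finset.subset_union_right⟩
  have hempty : Z \ C = ∅ := Finset.sdiff_eq_empty_iff_subset.mpr hZC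
  have hterm : ((q:ℝ)+1)⁻¹ ^ (Z \ C).card = 1 := by
    rw [hempty, Finset.card_empty, pow_zero]
  have hle := Finset.single_le_sum (f := fun Z : Finset (Sym2 (Fin n)) =>
    ((q:ℝ)+1)⁻¹ ^ (Z \ C).card) (fun Z _ => by positivity) hmem
  rw [hterm] at hle
  rw [phi] at h
  linarith

/-! #### The key averaging step -/

lemma step_lemma {q n : ℕ} {F C O : Finset (Sym2 (Fin n))} (hFC : Disjoint F C) (hO : O ⊆ F)
    (hcard : O.card = q+1) (h1 : phi q n F C < 1) :
    ∃ x ∈ O, phi q n (F \ O) (insert x C) < 1 := by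
  classical
  set lam : ℝ := ((q:ℝ)+1)⁻¹ with hlam
  have hlampos : 0 < lam := by rw [hlam]; positivity
  have hlamq : ((q:ℝ)+1) * lam = 1 := by
    rw [hlam]; field_simp
  have hrw : ∀ x ∈ O, phi q n (F \ O) (insert x C)
      = ∑ Z ∈ cycFam n (F ∪ C),
          (if Z ⊆ (F \ O) ∪ insert x C then lam ^ ((Z \ insert x C).card) else 0) := by
    intro x hx
    have hAsub : (F \ O) ∪ insert x C ⊆ F ∪ C := by
      intro e he
      rcases Finset.mem_union.mp he with h | h
      · exact Finset.mem_union_left _ (Finset.mem_sdiff.mp h).1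
      · rcases Finset.mem_insert.mp h with rfl | h
        · exact Finset.mem_union_left _ (hO hx)
        · exact Finset.mem_union_right _ h
    have hidx : cycFam n ((F \ O) ∪ insert x C)
        = (cycFam n (F ∪ C)).filter (fun Z => Z ⊆ (F \ O) ∪ insert x C) := by
      ext Z
      simp only [mem_cycFam, Finset.mem_filter]
      constructor
      · rintro ⟨h1, h2⟩; exact ⟨⟨h1, h2.trans hAsub⟩, h2⟩
      · rintro ⟨⟨h1, -⟩, h2⟩; exact ⟨h1, h2⟩
    rw [phi, hidx, Finset.sum_filter]
  have hkey : ∑ x ∈ O, phi q n (F \ O) (insert x C) ≤ ((q:ℝ)+1) * phi q n F C := by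
    calc ∑ x ∈ O, phi q n (F \ O) (insert x C)
        = ∑ x ∈ O, ∑ Z ∈ cycFam n (F ∪ C),
            (if Z ⊆ (F \ O) ∪ insert x C then lam ^ ((Z \ insert x C).card) else 0) :=
          Finset.sum_congr rfl hrw
      _ = ∑ Z ∈ cycFam n (F ∪ C), ∑ x ∈ O,
            (if Z ⊆ (F \ O) ∪ insert x C then lam ^ ((Z \ insert x C).card) else 0) :=
          Finset.sum_comm
      _ ≤ ∑ Z ∈ cycFam n (F ∪ C), ((q:ℝ)+1) * lam ^ ((Z \ C).card) := by
          apply Finset.sum_le_sum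
          intro Z hZ
          obtain ⟨hZcyc, hZFC⟩ := mem_cycFam.mp hZ
          have hiff : ∀ x ∈ O, (Z ⊆ (F \ O) ∪ insert x C ↔ Z ∩ O ⊆ {x}) := by
            intro x hx
            constructor
            · intro hsub e he
              obtain ⟨heZ, heO⟩ := Finset.mem_inter.mp he
              have := hsub heZ
              rcases Finset.mem_union.mp this with h | h
              · exact absurd (Finset.mem_sdiff.mp h).2 (not_not_intro heO)
              · rcases Finset.mem_insert.mp h with rfl | h
                · exact Finset.mem_singleton_self _
                · exact absurd h (Finset.disjoint_left.mp hFC (hO heO))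
            · intro hsub e heZ
              by_cases heO : e ∈ O
              · have : e = x := Finset.mem_singleton.mp (hsub (Finset.mem_inter.mpr ⟨heZ, heO⟩))
                subst this
                exact Finset.mem_union_right _ (Finset.mem_insert_self _ _)
              · rcases Finset.mem_union.mp (hZFC heZ) with h | h
                · exact Finset.mem_union_left _ (Finset.mem_sdiff.mpr ⟨h, heO⟩)
                · exact Finset.mem_union_right _ (Finset.mem_insert_of_mem h)
          by_cases hc0 : Z ∩ O = ∅
          · have : ∀ x ∈ O, (if Z ⊆ (F \ O) ∪ insert x C then lam ^ ((Z \ insert x C).card) else 0)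
                = lam ^ ((Z \ C).card) := by
              intro x hx
              have hxZ : x ∉ Z := by
                intro hxZ
                have : x ∈ Z ∩ O := Finset.mem_inter.mpr ⟨hxZ, hx⟩
                rw [hc0] at this
                exact absurd this (Finset.notMem_empty x)
              rw [if_pos ((hiff x hx).mpr (by rw [hc0]; exact Finset.empty_subset _))]
              congr 2
              rw [Finset.sdiff_insert, Finset.erase_eq_of_notMem]
              intro hmem
              exact hxZ (Finset.mem_sdiff.mp hmem).1
            rw [Finset.sum_congr rfl this, Finset.sum_const, hcard, nsmul_eq_mul]
            push_cast
            ring_nf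
            exact le_refl _
          · by_cases hc1 : (Z ∩ O).card = 1
            · obtain ⟨e, he⟩ := Finset.card_eq_one.mp hc1
              have heZ : e ∈ Z := by
                have : e ∈ Z ∩ O := by rw [he]; exact Finset.mem_singleton_self _
                exact (Finset.mem_inter.mp this).1
              have heO : e ∈ O := by
                have : e ∈ Z ∩ O := by rw [he]; exact Finset.mem_singleton_self _
                exact (Finset.mem_inter.mp this).2
              have heC : e ∉ C := Finset.disjoint_left.mp hFC (hO heO)
              have heZC : e ∈ Z \ C := Finset.mem_sdiff.mpr ⟨heZ, heC⟩
              have hsum : ∑ x ∈ O,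
                  (if Z ⊆ (F \ O) ∪ insert x C then lam ^ ((Z \ insert x C).card) else 0)
                  = lam ^ ((Z \ insert e C).card) := by
                apply Finset.sum_eq_single_of_mem e heO ?_ |>.trans
                · rw [if_pos ((hiff e heO).mpr (by rw [he]))]
                · intro b hb hbe
                  rw [if_neg]
                  intro hsub
                  have : e ∈ ({b} : Finset _) :=
                    ((hiff b hb).mp hsub) (by rw [he]; exact Finset.mem_singleton_self _)
                  exact hbe (Finset.mem_singleton.mp this).symm
              rw [hsum]
              have hcards : (Z \ insert e C).card + 1 = (Z \ C).card := by
                rw [Finset.sdiff_insert]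
                rw [Finset.card_erase_of_mem heZC]
                have : 1 ≤ (Z \ C).card := Finset.card_pos.mpr ⟨e, heZC⟩
                omega
              refine le_of_eq ?_
              calc lam ^ ((Z \ insert e C).card)
                  = ((q:ℝ)+1) * lam * lam ^ ((Z \ insert e C).card) := by rw [hlamq, one_mul]
                _ = ((q:ℝ)+1) * lam ^ ((Z \ insert e C).card + 1) := by ring
                _ = ((q:ℝ)+1) * lam ^ ((Z \ C).card) := by rw [hcards]
            · have : ∀ x ∈ O,
                  (if Z ⊆ (F \ O) ∪ insert x C then lam ^ ((Z \ insert x C).card) else 0) = 0 := by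
                intro x hx
                rw [if_neg]
                intro hsub
                have := Finset.card_le_card ((hiff x hx).mp hsub)
                rw [Finset.card_singleton] at this
                have h2 : Z ∩ O ≠ ∅ := hc0
                have := Finset.card_pos.mpr (Finset.nonempty_of_ne_empty h2)
                omega
              rw [Finset.sum_congr rfl this, Finset.sum_const, smul_zero]
              positivity
      _ = ((q:ℝ)+1) * phi q n F C := by rw [phi, Finset.mul_sum]
  by_contra hcon
  push_neg at hcon
  have hsum : ∑ x ∈ O, (1:ℝ) ≤ ∑ x ∈ O, phi q n (F \ O) (insert x C) :=
    Finset.sum_le_sum (fun x hx => hcon x hx)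
  rw [Finset.sum_const, hcard, nsmul_eq_mul, mul_one] at hsum
  have : ((q:ℝ)+1) ≤ ((q:ℝ)+1) * phi q n F C := by
    calc ((q:ℝ)+1) = ((q+1 : ℕ) : ℝ) := by push_cast; ring
      _ ≤ _ := hsum.trans hkey
  have hq1 : (0:ℝ) < (q:ℝ)+1 := by positivity
  nlinarith

/-! #### The initial bound -/

lemma geom_aux (r : ℝ) (h0 : 0 ≤ r) (h1 : r < 1) (M : ℕ) :
    ∑ j ∈ Finset.range M, r ^ j ≤ 1/(1-r) := by
  have hg := geom_sum_mul r M
  rw [le_div_iff₀ (by linarith)]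
  nlinarith [pow_nonneg h0 M]

set_option maxHeartbeats 1000000 in
lemma phi_init_lt_one (n q : ℕ) (h : 11 * n ≤ 10 * q) (F : Finset (Sym2 (Fin n))) :
    phi q n F ∅ < 1 := by
  classical
  set lam : ℝ := ((q:ℝ)+1)⁻¹ with hlam
  have hlampos : 0 ≤ lam := by rw [hlam]; positivity
  set r : ℝ := (n:ℝ) * lam with hr
  have hr0 : 0 ≤ r := by positivity
  have hC : (11:ℝ) * n ≤ 10 * q := by exact_mod_cast h
  have hr1 : r ≤ 10/11 := by
    rw [hr, hlam, mul_inv_le_iff₀ (by positivity)]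
    nlinarith
  have hrlt : r < 1 := lt_of_le_of_lt hr1 (by norm_num)
  have hmaps : ∀ Z ∈ cycFam n (F ∪ ∅), Z.card ∈ Finset.Icc 3 n := by
    intro Z hZ
    obtain ⟨hc, -⟩ := mem_cycFam.mp hZ
    obtain ⟨h3, hn⟩ := cycleSet_card_bounds hc
    exact Finset.mem_Icc.mpr ⟨h3, hn⟩
  have hgroup := Finset.sum_fiberwise_of_maps_to hmaps (fun Z => lam ^ Z.card)
  have hphi : phi q n F ∅ = ∑ k ∈ Finset.Icc 3 n,
      ∑ Z ∈ (cycFam n (F ∪ ∅)).filter (fun Z => Z.card = k), lam ^ Z.card := by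
    rw [phi, hgroup]
    exact Finset.sum_congr rfl (fun Z _ => by rw [Finset.sdiff_empty])
  rw [hphi]
  have hinner : ∀ k ∈ Finset.Icc 3 n,
      ∑ Z ∈ (cycFam n (F ∪ ∅)).filter (fun Z => Z.card = k), lam ^ Z.card
        ≤ r ^ k / (2*k) := by
    intro k hk
    obtain ⟨hk3, hkn⟩ := Finset.mem_Icc.mp hk
    have hsum : ∑ Z ∈ (cycFam n (F ∪ ∅)).filter (fun Z => Z.card = k), lam ^ Z.card
        = ((cycFam n (F ∪ ∅)).filter (fun Z => Z.card = k)).card * lam ^ k := by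
      rw [Finset.sum_congr rfl (fun Z hZ => by
        rw [(Finset.mem_filter.mp hZ).2]), Finset.sum_const, nsmul_eq_mul]
    rw [hsum]
    have hcard : ((cycFam n (F ∪ ∅)).filter (fun Z => Z.card = k)).card
        ≤ ((Finset.univ : Finset (Finset (Sym2 (Fin n)))).filter
            (fun Z => IsCycleSet n Z ∧ Z.card = k)).card := by
      apply Finset.card_le_card
      intro Z hZ
      rw [Finset.mem_filter] at hZ ⊢
      obtain ⟨hmem, hc⟩ := hZ
      exact ⟨Finset.mem_univ _, (mem_cycFam.mp hmem).1, hc⟩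
    have h1R : (((cycFam n (F ∪ ∅)).filter (fun Z => Z.card = k)).card : ℝ)
        ≤ (((Finset.univ : Finset (Finset (Sym2 (Fin n)))).filter
            (fun Z => IsCycleSet n Z ∧ Z.card = k)).card : ℝ) := by exact_mod_cast hcard
    have h2R : 2 * (k:ℝ) * (((Finset.univ : Finset (Finset (Sym2 (Fin n)))).filter
            (fun Z => IsCycleSet n Z ∧ Z.card = k)).card : ℝ) ≤ (n:ℝ) ^ k := by
      exact_mod_cast count_cyc' n k hk3
    have hcardR : (((cycFam n (F ∪ ∅)).filter (fun Z => Z.card = k)).card : ℝ)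
        ≤ (n:ℝ) ^ k / (2*k) := by
      rw [le_div_iff₀ (by positivity)]
      nlinarith [mul_le_mul_of_nonneg_right h1R (show (0:ℝ) ≤ 2*k by positivity)]
    calc (((cycFam n (F ∪ ∅)).filter (fun Z => Z.card = k)).card : ℝ) * lam ^ k
        ≤ ((n:ℝ)^k / (2*k)) * lam ^ k :=
          mul_le_mul_of_nonneg_right hcardR (by positivity)
      _ = r ^ k / (2*k) := by rw [hr, mul_pow]; ring
  have htail : ∑ k ∈ Finset.Icc 5 n, r ^ k / (2*(k:ℝ)) ≤ (r^5 * (1/(1-r)))/10 := by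
    have hstep1 : ∑ k ∈ Finset.Icc 5 n, r ^ k / (2*(k:ℝ))
        ≤ ∑ k ∈ Finset.Icc 5 n, r ^ k / 10 := by
      apply Finset.sum_le_sum
      intro k hk
      obtain ⟨h5, -⟩ := Finset.mem_Icc.mp hk
      have h10 : (10:ℝ) ≤ 2*(k:ℝ) := by exact_mod_cast (by omega : 10 ≤ 2*k)
      rw [div_le_div_iff₀ (by positivity) (by norm_num)]
      nlinarith [pow_nonneg hr0 k]
    have hstep2 : ∑ k ∈ Finset.Icc 5 n, r ^ k ≤ r^5 * (1/(1-r)) := by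
      rw [← Finset.Ico_add_one_right_eq_Icc, Finset.sum_Ico_eq_sum_range]
      have : ∀ j ∈ Finset.range (n + 1 - 5), r ^ (5 + j) = r^5 * r^j := fun j _ => pow_add r 5 j
      rw [Finset.sum_congr rfl this, ← Finset.mul_sum]
      exact mul_le_mul_of_nonneg_left (geom_aux r hr0 hrlt _) (by positivity)
    calc ∑ k ∈ Finset.Icc 5 n, r ^ k / (2*(k:ℝ)) ≤ ∑ k ∈ Finset.Icc 5 n, r ^ k / 10 := hstep1
      _ = (∑ k ∈ Finset.Icc 5 n, r ^ k) / 10 := by rw [Finset.sum_div]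
      _ ≤ (r^5 * (1/(1-r)))/10 := by gcongr
  have hsplit : ∑ k ∈ Finset.Icc 3 n, r ^ k / (2*(k:ℝ))
      ≤ r^3/6 + r^4/8 + (r^5 * (1/(1-r)))/10 := by
    have hsub : Finset.Icc 3 n ⊆ insert 3 (insert 4 (Finset.Icc 5 n)) := by
      intro k hk
      obtain ⟨h3, hn⟩ := Finset.mem_Icc.mp hk
      rcases Nat.lt_or_ge k 5 with h5 | h5
      · interval_cases k <;> simp
      · simp [Finset.mem_insert, Finset.mem_Icc, h5, hn]
    have h1 : ∑ k ∈ Finset.Icc 3 n, r ^ k / (2*(k:ℝ))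
        ≤ ∑ k ∈ insert 3 (insert 4 (Finset.Icc 5 n)), r ^ k / (2*(k:ℝ)) := by
      apply Finset.sum_le_sum_of_subset_of_nonneg hsub
      intro k _ _
      positivity
    have h2 : ∑ k ∈ insert 3 (insert 4 (Finset.Icc 5 n)), r ^ k / (2*(k:ℝ))
        = r^3/(2*((3:ℕ):ℝ)) + (r^4/(2*((4:ℕ):ℝ)) + ∑ k ∈ Finset.Icc 5 n, r ^ k / (2*(k:ℝ))) := by
      rw [Finset.sum_insert (by simp [Finset.mem_Icc]),
        Finset.sum_insert (by simp [Finset.mem_Icc])]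
    have h3 : r^3/(2*((3:ℕ):ℝ)) = r^3/6 := by norm_num
    have h4 : r^4/(2*((4:ℕ):ℝ)) = r^4/8 := by norm_num
    linarith [h1, h2.le, h2.ge, htail]
  calc ∑ k ∈ Finset.Icc 3 n,
      ∑ Z ∈ (cycFam n (F ∪ ∅)).filter (fun Z => Z.card = k), lam ^ Z.card
      ≤ ∑ k ∈ Finset.Icc 3 n, r ^ k / (2*(k:ℝ)) := Finset.sum_le_sum hinner
    _ ≤ r^3/6 + r^4/8 + (r^5 * (1/(1-r)))/10 := hsplit
    _ < 1 := by
        have h3 : r^3 ≤ (10/11:ℝ)^3 := pow_le_pow_left₀ hr0 hr1 3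
        have h4 : r^4 ≤ (10/11:ℝ)^4 := pow_le_pow_left₀ hr0 hr1 4
        have h5 : r^5 ≤ (10/11:ℝ)^5 := pow_le_pow_left₀ hr0 hr1 5
        have hinv : 1/(1-r) ≤ 11 := by
          rw [div_le_iff₀ (by linarith)]
          linarith
        have h5' : r^5 * (1/(1-r)) ≤ (10/11:ℝ)^5 * 11 := by
          have hpos : (0:ℝ) < 1 - r := by linarith
          exact mul_le_mul h5 hinv (by positivity) (by positivity)
        have hnum : (10/11:ℝ)^3/6 + (10/11:ℝ)^4/8 + ((10/11:ℝ)^5 * 11)/10 < 1 := by norm_num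
        linarith [h3, h4, h5', hnum]

/-! #### The induction over the game -/

lemma client_of_phi (q n : ℕ) : ∀ (N : ℕ) (F C : Finset (Sym2 (Fin n))), F.card = N →
    Disjoint F C → phi q n F C < 1 →
    ClientCanKeep q (fun C : Finset (Sym2 (Fin n)) => (clientGraph C).IsAcyclic) F C := by
  intro N
  induction N using Nat.strong_induction_on with
  | _ N IH =>
    intro F C hcardF hFC hphi
    rw [ClientCanKeep]
    split_ifs with hlt
    · exact phi_acyclic hphi
    · refine ⟨phi_acyclic hphi, ?_⟩
      intro O hO hOcard
      obtain ⟨x, hxO, hphix⟩ := step_lemma hFC hO hOcard hphi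
      refine ⟨x, hxO, IH (F \ O).card ?_ _ _ rfl ?_ hphix⟩
      · have h2 := Finset.card_sdiff_of_subset hO
        have h3 : O.Nonempty := by rw [← Finset.card_pos]; omega
        have h4 := Finset.card_pos.mpr h3
        omega
      · rw [Finset.disjoint_insert_right]
        constructor
        · intro hmem
          exact (Finset.mem_sdiff.mp hmem).2 hxO
        · exact Finset.disjoint_of_subset_left Finset.sdiff_subset hFC

end Statement10Aux

/-- For all positive integers `n` and `q` with `q ≥ 1.1 n`, in the
`(q : 1)` Waiter-Client game on `E(K_n)` Client has a strategy ensuring that his graph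
contains no cycle at any point during the game. -/
theorem statement10 (n q : ℕ) (hn : 0 < n) (hq : 0 < q) (h : (1.1 : ℝ) * n ≤ (q : ℝ)) :
    ClientCanKeep q
      (fun C : Finset (Sym2 (Fin n)) => (clientGraph C).IsAcyclic)
      (knBoard n) ∅ := by
  have h11 : 11 * n ≤ 10 * q := by
    have : (11:ℝ) * n ≤ 10 * q := by nlinarith
    exact_mod_cast this
  exact Statement10Aux.client_of_phi q n (knBoard n).card (knBoard n) ∅ rfl
    (Finset.disjoint_empty_right _)
    (Statement10Aux.phi_init_lt_one n q h11 _)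
end

section
/- Let 0 < α < 1 be a real number and let G be a (2,α)-expander on n vertices that contains a Hamilton path u_1 u_2 … u_n. Let U = {z ∈ V(G) : there exists a Hamilton path in G between u_1 and z}. Then |U| ≥ α·n. -/
/-- The external neighbourhood `N_G(S)` of a set `S` of vertices. -/
def nbrSet {V : Type*} (G : SimpleGraph V) (S : Set V) : Set V :=
  {v | v ∉ S ∧ ∃ u ∈ S, G.Adj u v}

/-- A `(d, ε)`-expander: every set `S` of at most `ε * |V|` vertices satisfies
`|N_G(S)| ≥ d * |S|`. -/
def IsExpander {V : Type*} [Fintype V] (G : SimpleGraph V) (d ε : ℝ) : Prop :=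
  ∀ S : Set V, (S.ncard : ℝ) ≤ ε * Fintype.card V → d * S.ncard ≤ ((nbrSet G S).ncard : ℝ)

namespace PosaAux

open List

variable {V : Type*}

/-- `a, b` appear consecutively (in this order) in `l`. -/
def Consec (l : List V) (a b : V) : Prop := [a, b] <:+: l

lemma consec_iff {l : List V} {a b : V} :
    Consec l a b ↔ ∃ i : ℕ, l[i]? = some a ∧ l[i+1]? = some b := by
  constructor
  · rintro ⟨s, t, rfl⟩
    rw [List.append_assoc]
    refine ⟨s.length, ?_, ?_⟩
    · rw [List.getElem?_append_right le_rfl]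
      simp
    · rw [List.getElem?_append_right (by omega)]
      simp
  · rintro ⟨i, ha, hb⟩
    have hi : i < l.length := by
      by_contra h
      rw [List.getElem?_eq_none (by omega)] at ha; cases ha
    have hi1 : i + 1 < l.length := by
      by_contra h
      rw [List.getElem?_eq_none (by omega)] at hb; cases hb
    have h1 : l.drop i = a :: b :: l.drop (i+2) := by
      rw [List.drop_eq_getElem_cons hi, List.drop_eq_getElem_cons hi1]
      have : l[i] = a := by simpa [List.getElem?_eq_getElem hi] using ha
      have h2 : l[i+1] = b := by simpa [List.getElem?_eq_getElem hi1] using hb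
      rw [this, h2]
    have : [a, b] <+: l.drop i := by rw [h1]; exact ⟨l.drop (i+2), rfl⟩
    exact this.isInfix.trans (List.drop_suffix i l).isInfix

lemma consec_next_unique {l : List V} (hnd : l.Nodup) {a b b' : V}
    (h : Consec l a b) (h' : Consec l a b') : b = b' := by
  rw [consec_iff] at h h'
  obtain ⟨i, ha, hb⟩ := h
  obtain ⟨j, ha', hb'⟩ := h'
  have hi : i < l.length := by
    by_contra h; rw [List.getElem?_eq_none (by omega)] at ha; cases ha
  have : i = j := (List.getElem?_inj hi hnd).mp (ha.trans ha'.symm)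
  subst this
  exact Option.some_injective _ (hb.symm.trans hb')

lemma consec_prev_unique {l : List V} (hnd : l.Nodup) {a a' b : V}
    (h : Consec l a b) (h' : Consec l a' b) : a = a' := by
  rw [consec_iff] at h h'
  obtain ⟨i, ha, hb⟩ := h
  obtain ⟨j, ha', hb'⟩ := h'
  have hi : i + 1 < l.length := by
    by_contra h; rw [List.getElem?_eq_none (by omega)] at hb; cases hb
  have : i + 1 = j + 1 := (List.getElem?_inj hi hnd).mp (hb.trans hb'.symm)
  have : i = j := by omega
  subst this
  exact Option.some_injective _ (ha.symm.trans ha')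

lemma consec_not_head {l : List V} (hnd : l.Nodup) {u w : V}
    (hh : l.head? = some u) (h : Consec l w u) : False := by
  rw [consec_iff] at h
  obtain ⟨i, hw, hu⟩ := h
  have h0 : l[0]? = some u := by
    cases l with
    | nil => simp at hh
    | cons a t => simpa using hh
  have hi : i + 1 < l.length := by
    by_contra h; rw [List.getElem?_eq_none (by omega)] at hu; cases hu
  have : (0:ℕ) = i + 1 := (List.getElem?_inj (by omega) hnd).mp (h0.trans hu.symm)
  omega

lemma consec_not_last {l : List V} (hnd : l.Nodup) {w y : V}
    (hh : l.getLast? = some w) (h : Consec l w y) : False := by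
  rw [consec_iff] at h
  obtain ⟨i, hw, hy⟩ := h
  have hi1 : i + 1 < l.length := by
    by_contra h; rw [List.getElem?_eq_none (by omega)] at hy; cases hy
  rw [List.getLast?_eq_getElem?] at hh
  have : i = l.length - 1 := (List.getElem?_inj (by omega) hnd).mp (hw.trans hh.symm)
  omega

lemma exists_index_of_ne_last {l : List V} {z x : V} (hmem : x ∈ l)
    (hz : l.getLast? = some z) (hne : x ≠ z) :
    ∃ i, l[i]? = some x ∧ i + 1 < l.length := by
  obtain ⟨i, hi⟩ := List.mem_iff_getElem?.mp hmem
  have hil : i < l.length := by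
    by_contra h; rw [List.getElem?_eq_none (by omega)] at hi; cases hi
  refine ⟨i, hi, ?_⟩
  by_contra h
  have : i = l.length - 1 := by omega
  rw [List.getLast?_eq_getElem?, ← this] at hz
  exact hne (Option.some_injective _ (hi.symm.trans hz))

lemma consec_append_cases {l₁ l₂ : List V} {a b : V} (h : Consec (l₁ ++ l₂) a b) :
    Consec l₁ a b ∨ Consec l₂ a b ∨ (l₁.getLast? = some a ∧ l₂.head? = some b) := by
  rw [consec_iff] at h
  obtain ⟨i, ha, hb⟩ := h
  rcases lt_or_ge (i+1) l₁.length with h1 | h1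
  · left
    rw [consec_iff]
    refine ⟨i, ?_, ?_⟩
    · rw [List.getElem?_append_left (by omega)] at ha; exact ha
    · rw [List.getElem?_append_left h1] at hb; exact hb
  · rcases lt_or_ge i l₁.length with h2 | h2
    · right; right
      have hi : i = l₁.length - 1 := by omega
      constructor
      · rw [List.getLast?_eq_getElem?, ← hi]
        rw [List.getElem?_append_left h2] at ha; exact ha
      · rw [List.getElem?_append_right h1] at hb
        have : i + 1 - l₁.length = 0 := by omega
        rw [this] at hb
        cases l₂ with
        | nil => simp at hb
        | cons c t => simpa using hb
    · right; left
      rw [consec_iff]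
      refine ⟨i - l₁.length, ?_, ?_⟩
      · rw [List.getElem?_append_right h2] at ha; exact ha
      · rw [List.getElem?_append_right (by omega)] at hb
        have : i + 1 - l₁.length = i - l₁.length + 1 := by omega
        rw [this] at hb; exact hb

lemma consec_reverse {l : List V} {a b : V} : Consec l.reverse a b ↔ Consec l b a := by
  constructor
  · intro h
    have := (List.reverse_infix (l₁ := [b,a]) (l₂ := l)).mp ?_
    · exact this
    · simpa [Consec] using h
  · intro h
    have := (List.reverse_infix (l₁ := [b,a]) (l₂ := l)).mpr h
    simpa [Consec] using this

lemma consec_junction {l₁ l₂ : List V} {a b : V}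
    (h1 : l₁.getLast? = some a) (h2 : l₂.head? = some b) : Consec (l₁ ++ l₂) a b := by
  obtain ⟨l₁', rfl⟩ : ∃ s, l₁ = s ++ [a] := by
    cases hl : l₁ with
    | nil => rw [hl] at h1; simp at h1
    | cons c t =>
      rw [← hl]
      refine ⟨l₁.dropLast, ?_⟩
      have := List.dropLast_append_getLast (l := l₁) (by rw [hl]; simp)
      rw [List.getLast?_eq_getLast (by rw [hl]; simp)] at h1
      have h3 : l₁.getLast (by rw [hl]; simp) = a := Option.some_injective _ h1
      rw [← h3]; exact this.symm
  obtain ⟨l₂', rfl⟩ : ∃ t, l₂ = b :: t := by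
    cases l₂ with
    | nil => simp at h2
    | cons c t => exact ⟨t, by simpa using (Option.some_injective _ h2 : c = b) ▸ rfl⟩
  exact ⟨l₁', l₂', by simp⟩

/-! ### Rotations -/

/-- The Pósa rotation of a list at position `i`. -/
def rot (l : List V) (i : ℕ) : List V := l.take (i+1) ++ (l.drop (i+1)).reverse

lemma getLast?_take_succ {l : List V} {i : ℕ} {x : V} (hx : l[i]? = some x) :
    (l.take (i+1)).getLast? = some x := by
  rw [List.take_succ, hx, List.getLast?_append]
  simp

lemma rot_perm (l : List V) (i : ℕ) : rot l i ~ l := by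
  unfold rot
  calc l.take (i+1) ++ (l.drop (i+1)).reverse
      ~ l.take (i+1) ++ l.drop (i+1) := List.Perm.append_left _ (List.reverse_perm _)
    _ = l := List.take_append_drop _ _

lemma head?_rot {l : List V} (hne : l ≠ []) (i : ℕ) : (rot l i).head? = l.head? := by
  cases l with
  | nil => exact absurd rfl hne
  | cons a t => rw [rot, List.take_succ_cons, List.cons_append]; simp

lemma getLast?_rot {l : List V} {i : ℕ} {y : V} (hy : l[i+1]? = some y) :
    (rot l i).getLast? = some y := by
  rw [rot, List.getLast?_append, List.getLast?_reverse, List.head?_drop, hy]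
  simp

lemma getLast?_drop_of_getElem? {l : List V} {k : ℕ} {y : V} (hy : l[k]? = some y) :
    (l.drop k).getLast? = l.getLast? := by
  conv_rhs => rw [← List.take_append_drop k l]
  rw [List.getLast?_append]
  cases hld : (l.drop k).getLast? with
  | none =>
    rw [List.getLast?_eq_none_iff] at hld
    rw [← List.head?_drop, hld] at hy
    simp at hy
  | some w => simp

lemma chain'_rot {G : SimpleGraph V} {l : List V} {i : ℕ} {z x y : V}
    (hch : l.Chain' G.Adj) (hz : l.getLast? = some z) (hx : l[i]? = some x)
    (hy : l[i+1]? = some y) (hadj : G.Adj z x) : (rot l i).Chain' G.Adj := by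
  rw [rot]; show List.IsChain _ _; rw [List.isChain_append]
  refine ⟨hch.take _, ?_, ?_⟩
  · rw [List.isChain_reverse]
    exact (hch.drop _).imp fun a b h => h.symm
  · intro p hp q hq
    rw [getLast?_take_succ hx] at hp
    rw [List.head?_reverse, getLast?_drop_of_getElem? hy, hz] at hq
    simp only [Option.mem_def, Option.some.injEq] at hp hq
    subst hp; subst hq
    exact hadj.symm

lemma consec_rot {l : List V} {i : ℕ} {x y a b : V}
    (hx : l[i]? = some x) (hy : l[i+1]? = some y)
    (h : Consec l a b) (hab : ¬(a = x ∧ b = y)) :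
    Consec (rot l i) a b ∨ Consec (rot l i) b a := by
  rw [← List.take_append_drop (i+1) l] at h
  rcases consec_append_cases h with h' | h' | ⟨h1, h2⟩
  · exact Or.inl (h'.trans (List.prefix_append _ _).isInfix)
  · exact Or.inr ((consec_reverse.mpr h').trans (List.suffix_append _ _).isInfix)
  · exfalso
    apply hab
    rw [getLast?_take_succ hx] at h1
    rw [List.head?_drop, hy] at h2
    exact ⟨(Option.some_injective _ h1).symm, (Option.some_injective _ h2).symm⟩

/-! ### The rotation closure -/

inductive Reach (G : SimpleGraph V) (l0 : List V) : List V → Prop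
  | base : Reach G l0 l0
  | rotate {l : List V} {i : ℕ} {z x y : V} (hl : Reach G l0 l)
      (hz : l.getLast? = some z) (hx : l[i]? = some x) (hy : l[i+1]? = some y)
      (hadj : G.Adj z x) : Reach G l0 (rot l i)

/-- The set of endpoints reachable by rotations. -/
def EndSet (G : SimpleGraph V) (l0 : List V) : Set V :=
  {w | ∃ l, Reach G l0 l ∧ l.getLast? = some w}

lemma reach_perm {G : SimpleGraph V} {l0 l : List V} (h : Reach G l0 l) : l ~ l0 := by
  induction h with
  | base => exact List.Perm.refl _
  | rotate hl hz hx hy hadj ih => exact (rot_perm _ _).trans ih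

lemma reach_ne_nil {G : SimpleGraph V} {l0 l : List V} (h : Reach G l0 l) (h0 : l0 ≠ []) :
    l ≠ [] := by
  intro hl
  exact h0 (List.Perm.eq_nil ((reach_perm h).symm.trans (hl ▸ List.Perm.refl [])))

lemma reach_head? {G : SimpleGraph V} {l0 l : List V} (h0 : l0 ≠ []) (h : Reach G l0 l) :
    l.head? = l0.head? := by
  induction h with
  | base => rfl
  | @rotate l i z x y hl hz hx hy hadj ih =>
    rw [head?_rot (reach_ne_nil hl h0), ih]

lemma reach_chain' {G : SimpleGraph V} {l0 l : List V} (hch : l0.Chain' G.Adj)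
    (h : Reach G l0 l) : l.Chain' G.Adj := by
  induction h with
  | base => exact hch
  | @rotate l i z x y hl hz hx hy hadj ih => exact chain'_rot ih hz hx hy hadj

lemma reach_persist {G : SimpleGraph V} {l0 m : List V} (h : Reach G l0 m)
    {a b : V} (hc : Consec l0 a b) (ha : a ∉ EndSet G l0) (hb : b ∉ EndSet G l0) :
    Consec m a b ∨ Consec m b a := by
  induction h with
  | base => exact Or.inl hc
  | @rotate l i z x y hl hz hx hy hadj ih =>
    have hyU : y ∈ EndSet G l0 :=
      ⟨rot l i, Reach.rotate hl hz hx hy hadj, getLast?_rot hy⟩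
    rcases ih with h' | h'
    · exact consec_rot hx hy h' (fun ⟨e1, e2⟩ => hb (e2 ▸ hyU))
    · exact (consec_rot hx hy h' (fun ⟨e1, e2⟩ => ha (e2 ▸ hyU))).symm

end PosaAux
namespace PosaAux

open List

variable {V : Type*}

/-- Key lemma: every external neighbour of the rotation-endpoint set is an `l0`-neighbour
of some endpoint. -/
lemma nbr_mem_of_mem_nbrSet {G : SimpleGraph V} {l0 : List V}
    (hch : l0.Chain' G.Adj) (hnd : l0.Nodup) (hall : ∀ x : V, x ∈ l0)
    {v : V} (hv : v ∈ nbrSet G (EndSet G l0)) :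
    ∃ w ∈ EndSet G l0, Consec l0 v w ∨ Consec l0 w v := by
  obtain ⟨hvU, z, hzU, hadj⟩ := hv
  by_contra hno
  push_neg at hno
  -- the original last vertex
  have h0ne : l0 ≠ [] := by
    intro h; rw [h] at hall; simpa using hall v
  obtain ⟨w0, hw0⟩ : ∃ w0, l0.getLast? = some w0 := by
    cases hl : l0.getLast? with
    | none => exact absurd (List.getLast?_eq_none_iff.mp hl) h0ne
    | some w => exact ⟨w, rfl⟩
  have hw0U : w0 ∈ EndSet G l0 := ⟨l0, Reach.base, hw0⟩
  -- get data about z's path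
  have hvz : v ≠ z := fun h => hvU (h ▸ hzU)
  obtain ⟨l, hreach, hzl⟩ := hzU
  have hperm : l ~ l0 := reach_perm hreach
  have hndl : l.Nodup := hperm.nodup_iff.mpr hnd
  have hvl : v ∈ l := hperm.mem_iff.mpr (hall v)
  -- v's index in l, and its successor s (which lies in EndSet by rotation)
  obtain ⟨i, hvi, hi1⟩ := exists_index_of_ne_last hvl hzl hvz
  obtain ⟨s, hs⟩ : ∃ s, l[i+1]? = some s := by
    cases hl' : l[i+1]? with
    | none => rw [List.getElem?_eq_none_iff] at hl'; omega
    | some s => exact ⟨s, rfl⟩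
  have hsU : s ∈ EndSet G l0 :=
    ⟨rot l i, Reach.rotate hreach hzl hvi hs hadj, getLast?_rot hs⟩
  have hconsec_vs : Consec l v s := consec_iff.mpr ⟨i, hvi, hs⟩
  -- v's index in l0
  have hvw0 : v ≠ w0 := fun h => hvU (h ▸ hw0U)
  obtain ⟨j, hvj, hj1⟩ := exists_index_of_ne_last (hall v) hw0 hvw0
  obtain ⟨t, ht⟩ : ∃ t, l0[j+1]? = some t := by
    cases hl' : l0[j+1]? with
    | none => rw [List.getElem?_eq_none_iff] at hl'; omega
    | some t => exact ⟨t, rfl⟩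
  have hc_vt : Consec l0 v t := consec_iff.mpr ⟨j, hvj, ht⟩
  have htU : t ∉ EndSet G l0 := fun h => (hno t h).1 hc_vt
  have hper_vt := reach_persist hreach hc_vt hvU htU
  rcases Nat.eq_zero_or_pos j with hj0 | hjpos
  · -- v is the head of l0
    subst hj0
    have hheadl0 : l0.head? = some v := by
      cases l0 with
      | nil => simp at hvj
      | cons a b => simpa using hvj
    have hheadl : l.head? = some v := (reach_head? h0ne hreach).trans hheadl0
    rcases hper_vt with h' | h'
    · exact htU ((consec_next_unique hndl h' hconsec_vs) ▸ hsU)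
    · exact consec_not_head hndl hheadl h'
  · -- v has a predecessor r in l0
    obtain ⟨r, hr⟩ : ∃ r, l0[j-1]? = some r := by
      cases hl' : l0[j-1]? with
      | none => rw [List.getElem?_eq_none_iff] at hl'; omega
      | some r => exact ⟨r, rfl⟩
    have hc_rv : Consec l0 r v := by
      refine consec_iff.mpr ⟨j-1, hr, ?_⟩
      have : j - 1 + 1 = j := by omega
      rw [this]; exact hvj
    have hrU : r ∉ EndSet G l0 := fun h => (hno r h).2 hc_rv
    have hrt : r ≠ t := by
      intro h
      have := (List.getElem?_inj (i := j-1) (j := j+1) (by omega) hnd).mp (by rw [hr, h, ht])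
      omega
    have hper_rv := reach_persist hreach hc_rv hrU hvU
    rcases hper_vt with h1 | h1
    · exact htU ((consec_next_unique hndl h1 hconsec_vs) ▸ hsU)
    · rcases hper_rv with h2 | h2
      · exact hrt (consec_prev_unique hndl h2 h1)
      · exact hrU ((consec_next_unique hndl h2 hconsec_vs) ▸ hsU)

/-- From a chain list one can build a walk with that support. -/
lemma exists_walk_of_chain' {G : SimpleGraph V} :
    ∀ (l : List V) {a b : V}, l.Chain' G.Adj → l.head? = some a → l.getLast? = some b →
      ∃ w : G.Walk a b, w.support = l := by
  intro l
  induction l with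
  | nil => intro a b _ h _; simp at h
  | cons x t ih =>
    intro a b hch hh hl
    have hax : x = a := by simpa using hh
    subst hax
    cases t with
    | nil =>
      have : x = b := by simpa using hl
      subst this
      exact ⟨SimpleGraph.Walk.nil, rfl⟩
    | cons y t' =>
      rw [List.Chain', List.isChain_cons_cons] at hch
      rw [List.getLast?_cons_cons] at hl
      obtain ⟨w', hw'⟩ := ih hch.2 rfl hl
      exact ⟨SimpleGraph.Walk.cons hch.1 w', by simp [hw']⟩

end PosaAux
namespace PosaAux

open List

variable {V : Type*}

lemma ncard_prevSet_le {l0 : List V} (hnd : l0.Nodup) (U : Set V) (hU : U.Finite) :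
    {a | ∃ w ∈ U, Consec l0 a w}.ncard ≤ U.ncard := by
  classical
  refine Set.ncard_le_ncard_of_injOn
    (fun a => if h : ∃ b, Consec l0 a b then h.choose else a) ?_ ?_ hU
  · rintro a ⟨w, hwU, hc⟩
    have hex : ∃ b, Consec l0 a b := ⟨w, hc⟩
    simp only [dif_pos hex]
    have : hex.choose = w := consec_next_unique hnd hex.choose_spec hc
    rwa [this]
  · rintro a1 ⟨w1, hw1, hc1⟩ a2 ⟨w2, hw2, hc2⟩ heq
    have hex1 : ∃ b, Consec l0 a1 b := ⟨w1, hc1⟩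
    have hex2 : ∃ b, Consec l0 a2 b := ⟨w2, hc2⟩
    simp only [dif_pos hex1, dif_pos hex2] at heq
    have h1 : Consec l0 a1 hex2.choose := heq ▸ hex1.choose_spec
    exact consec_prev_unique hnd h1 hex2.choose_spec

lemma ncard_nextSet_le {l0 : List V} (hnd : l0.Nodup) {w0 : V}
    (hw0 : l0.getLast? = some w0) (U : Set V) (hU : U.Finite) :
    {a | ∃ w ∈ U, Consec l0 w a}.ncard ≤ (U \ {w0}).ncard := by
  classical
  refine Set.ncard_le_ncard_of_injOn
    (fun a => if h : ∃ b, Consec l0 b a then h.choose else a) ?_ ?_ hU.diff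
  · rintro a ⟨w, hwU, hc⟩
    have hex : ∃ b, Consec l0 b a := ⟨w, hc⟩
    simp only [dif_pos hex]
    have hcw : hex.choose = w := consec_prev_unique hnd hex.choose_spec hc
    rw [hcw]
    refine ⟨hwU, ?_⟩
    simp only [Set.mem_singleton_iff]
    intro h
    exact consec_not_last hnd hw0 (h ▸ hc)
  · rintro a1 ⟨w1, hw1, hc1⟩ a2 ⟨w2, hw2, hc2⟩ heq
    have hex1 : ∃ b, Consec l0 b a1 := ⟨w1, hc1⟩
    have hex2 : ∃ b, Consec l0 b a2 := ⟨w2, hc2⟩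
    simp only [dif_pos hex1, dif_pos hex2] at heq
    have h1 : Consec l0 hex2.choose a1 := heq ▸ hex1.choose_spec
    exact consec_next_unique hnd h1 hex2.choose_spec

end PosaAux

/-- Pósa. Let `0 < α < 1` and let `G` be a `(2, α)`-expander on `n`
vertices containing a Hamilton path starting at `u`.  Then the set of vertices `z` such that
`G` has a Hamilton path between `u` and `z` has size at least `α n`. -/
theorem statement13 {V : Type*} [Fintype V] [DecidableEq V] (G : SimpleGraph V)
    (n : ℕ) (hn : Fintype.card V = n) (α : ℝ) (hα0 : 0 < α) (hα1 : α < 1)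
    (hexp : IsExpander G 2 α)
    (u v : V) (p : G.Walk u v) (hp : p.IsHamiltonian) :
    α * n ≤ (({z : V | ∃ w : G.Walk u z, w.IsHamiltonian}.ncard : ℝ)) := by
  classical
  open PosaAux in
  set l0 : List V := p.support with hl0def
  have hch : l0.Chain' G.Adj := p.isChain_adj_support
  have hnd : l0.Nodup := hp.isPath.support_nodup
  have hall : ∀ x : V, x ∈ l0 := fun x => hp.mem_support x
  have hh0 : l0.head? = some u := by
    rw [hl0def, p.support_eq_cons]; rfl
  have h0ne : l0 ≠ [] := p.support_ne_nil
  have hl0v : l0.getLast? = some v := by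
    rw [hl0def, List.getLast?_eq_getLast p.support_ne_nil, p.getLast_support]
  set U : Set V := EndSet G l0 with hUdef
  set Uthm : Set V := {z : V | ∃ w : G.Walk u z, w.IsHamiltonian} with hUthmdef
  -- U ⊆ Uthm
  have hUsub : U ⊆ Uthm := by
    rintro w ⟨l, hreach, hlast⟩
    have hperm := reach_perm hreach
    have hchl : l.Chain' G.Adj := reach_chain' hch hreach
    have hheadl : l.head? = some u := (reach_head? h0ne hreach).trans hh0
    obtain ⟨wk, hwk⟩ := exists_walk_of_chain' l hchl hheadl hlast
    refine ⟨wk, fun x => ?_⟩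
    rw [hwk]
    exact List.count_eq_one_of_mem (hperm.nodup_iff.mpr hnd) (hperm.mem_iff.mpr (hall x))
  have hw0U : v ∈ U := ⟨l0, Reach.base, hl0v⟩
  by_contra hcon
  push_neg at hcon
  -- cardinalities
  have hUle : (U.ncard : ℝ) ≤ (Uthm.ncard : ℝ) :=
    Nat.cast_le.mpr (Set.ncard_le_ncard hUsub (Set.toFinite _))
  have hsmall : (U.ncard : ℝ) ≤ α * Fintype.card V := by
    rw [hn]; linarith
  have hexp2 : 2 * (U.ncard : ℝ) ≤ ((nbrSet G U).ncard : ℝ) := hexp U hsmall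
  -- upper bound on the neighbourhood
  have hsub2 : nbrSet G U ⊆ {a | ∃ w ∈ U, Consec l0 a w} ∪ {a | ∃ w ∈ U, Consec l0 w a} := by
    intro a ha
    obtain ⟨w, hw, h | h⟩ := nbr_mem_of_mem_nbrSet hch hnd hall ha
    · exact Or.inl ⟨w, hw, h⟩
    · exact Or.inr ⟨w, hw, h⟩
  have hpos : 0 < U.ncard := (Set.ncard_pos (Set.toFinite _)).mpr ⟨v, hw0U⟩
  have hcount : (nbrSet G U).ncard ≤ U.ncard + (U.ncard - 1) := by
    calc (nbrSet G U).ncard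
        ≤ ({a | ∃ w ∈ U, Consec l0 a w} ∪ {a | ∃ w ∈ U, Consec l0 w a}).ncard :=
          Set.ncard_le_ncard hsub2 ((Set.toFinite _).union (Set.toFinite _))
      _ ≤ ({a | ∃ w ∈ U, Consec l0 a w}).ncard + ({a | ∃ w ∈ U, Consec l0 w a}).ncard :=
          Set.ncard_union_le _ _
      _ ≤ U.ncard + (U \ {v}).ncard :=
          Nat.add_le_add (ncard_prevSet_le hnd U (Set.toFinite _))
            (ncard_nextSet_le hnd hl0v U (Set.toFinite _))
      _ = U.ncard + (U.ncard - 1) := by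
          rw [Set.ncard_diff_singleton_of_mem hw0U]
  have : (nbrSet G U).ncard + 1 ≤ 2 * U.ncard := by omega
  have hR : ((nbrSet G U).ncard : ℝ) + 1 ≤ 2 * (U.ncard : ℝ) := by exact_mod_cast this
  linarith
end
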